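/- arXiv:2511.06034 — 5 statements merged into one kernel-verified Lean document; each statement's English description precedes it below -/
import Mathlib

section
/- Let t and n be integers with t ≥ 1 and n ≥ 2t + 4. Then AR(n, P₄ ∪ tP₂) = AR(n, (t + 2)P₂). -/
/-- The disjoint union of `k` copies of a graph `G`, on vertex set `Fin k × V`. -/
def SimpleGraph.multiCopy (k : ℕ) {V : Type*} (G : SimpleGraph V) :
    SimpleGraph (Fin k × V) where
  Adj a b := a.1 = b.1 ∧ G.Adj a.2 b.2
  symm := by
    constructor
    intro a b h
    exact ⟨h.1.symm, h.2.symm⟩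
  loopless := by
    constructor
    intro a h
    exact G.irrefl h.2

/-- The disjoint union of two graphs `G` and `H`, on vertex set `V ⊕ W`. -/
def SimpleGraph.disjUnion {V W : Type*} (G : SimpleGraph V) (H : SimpleGraph W) :
    SimpleGraph (V ⊕ W) where
  Adj a b :=
    match a, b with
    | Sum.inl a, Sum.inl b => G.Adj a b
    | Sum.inr a, Sum.inr b => H.Adj a b
    | _, _ => False
  symm := by
    constructor
    rintro (a | a) (b | b) h <;> simp only at h ⊢
    · exact h.symm
    · exact h.symm
  loopless := by
    constructor
    rintro (a | a) h <;> simp only at h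
    · exact G.irrefl h
    · exact H.irrefl h

/-- The linear forest `k P₄ ∪ t P₂`. -/
def kP4tP2 (k t : ℕ) : SimpleGraph ((Fin k × Fin 4) ⊕ (Fin t × Fin 2)) :=
  (SimpleGraph.multiCopy k (SimpleGraph.pathGraph 4)).disjUnion
    (SimpleGraph.multiCopy t (SimpleGraph.pathGraph 2))

/-- The edge-coloring `c` of `K_n` admits a rainbow copy of `H`: there is an injection
of the vertices of `H` into `Fin n` such that distinct edges of `H` get distinct colors. -/
def HasRainbowCopy {V : Type*} (n : ℕ) (c : Sym2 (Fin n) → ℕ) (H : SimpleGraph V) : Prop :=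
  ∃ f : V ↪ Fin n, Set.InjOn (fun e => c (Sym2.map (⇑f) e)) H.edgeSet

/-- The number of colors used by an edge-coloring `c` on the edges of `K_n`. -/
noncomputable def colorCount (n : ℕ) (c : Sym2 (Fin n) → ℕ) : ℕ :=
  (c '' (⊤ : SimpleGraph (Fin n)).edgeSet).ncard

/-- The anti-Ramsey number `AR(n, H)`: the maximum number of colors in an edge-coloring
of `K_n` containing no rainbow copy of `H`. -/
noncomputable def AR {V : Type*} (n : ℕ) (H : SimpleGraph V) : ℕ :=
  sSup {m : ℕ | ∃ c : Sym2 (Fin n) → ℕ, colorCount n c = m ∧ ¬ HasRainbowCopy n c H}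

/-- The set of edges of `G` with both endpoints in `A` (the edges of `G[A]`). -/
def edgesInside {α : Type*} (G : SimpleGraph α) (A : Set α) : Set (Sym2 α) :=
  {e ∈ G.edgeSet | ∀ v ∈ e, v ∈ A}

/-- The set of edges of `G` with one endpoint in `A` and the other in `B`,
i.e. `[A, B]_G`. -/
def edgesBetween {α : Type*} (G : SimpleGraph α) (A B : Set α) : Set (Sym2 α) :=
  {e ∈ G.edgeSet | ∃ u v, e = s(u, v) ∧ u ∈ A ∧ v ∈ B}


open SimpleGraph Sum

namespace ARProof

variable {n t m : ℕ}

/-- the matching edge of index `k` in `multiCopy m (pathGraph 2)`. -/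
def pe (m : ℕ) (k : Fin m) : Sym2 (Fin m × Fin 2) := s((k,0),(k,1))

lemma pathGraph2_adj {u v : Fin 2} :
    (pathGraph 2).Adj u v ↔ (u = 0 ∧ v = 1) ∨ (u = 1 ∧ v = 0) := by
  rw [pathGraph_adj]; fin_cases u <;> fin_cases v <;> simp <;> omega

lemma edgeSet_P2s (m : ℕ) :
    (SimpleGraph.multiCopy m (pathGraph 2)).edgeSet = Set.range (pe m) := by
  ext e
  refine e.ind (fun a b => ?_)
  simp only [SimpleGraph.mem_edgeSet, Set.mem_range]
  obtain ⟨a1, a2⟩ := a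
  obtain ⟨b1, b2⟩ := b
  constructor
  · rintro ⟨h1, h2⟩
    rw [pathGraph2_adj] at h2
    simp only at h1
    subst h1
    rcases h2 with ⟨ha, hb⟩ | ⟨ha, hb⟩ <;> subst ha <;> subst hb
    · exact ⟨a1, rfl⟩
    · exact ⟨a1, by rw [pe, Sym2.eq_swap]⟩
  · rintro ⟨k, hk⟩
    rw [pe, Sym2.eq_iff] at hk
    rcases hk with ⟨ha, hb⟩ | ⟨ha, hb⟩ <;> rw [← ha, ← hb] <;>
      exact ⟨rfl, by rw [pathGraph2_adj]; simp⟩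


/-- vertex type of `P₄ ∪ t·P₂`. -/
abbrev V1 (t : ℕ) := (Fin 1 × Fin 4) ⊕ (Fin t × Fin 2)

def eA0 (t : ℕ) : Sym2 (V1 t) := s(inl (0,0), inl (0,1))
def eA1 (t : ℕ) : Sym2 (V1 t) := s(inl (0,1), inl (0,2))
def eA2 (t : ℕ) : Sym2 (V1 t) := s(inl (0,2), inl (0,3))
def eB (t : ℕ) (k : Fin t) : Sym2 (V1 t) := s(inr (k,0), inr (k,1))

lemma disjUnion_adj_inl_inl {V W : Type*} {G : SimpleGraph V} {H : SimpleGraph W}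
    {a b : V} : (G.disjUnion H).Adj (inl a) (inl b) ↔ G.Adj a b := Iff.rfl
lemma disjUnion_adj_inr_inr {V W : Type*} {G : SimpleGraph V} {H : SimpleGraph W}
    {a b : W} : (G.disjUnion H).Adj (inr a) (inr b) ↔ H.Adj a b := Iff.rfl
lemma disjUnion_adj_inl_inr {V W : Type*} {G : SimpleGraph V} {H : SimpleGraph W}
    {a : V} {b : W} : ¬ (G.disjUnion H).Adj (inl a) (inr b) := fun h => h
lemma disjUnion_adj_inr_inl {V W : Type*} {G : SimpleGraph V} {H : SimpleGraph W}
    {a : W} {b : V} : ¬ (G.disjUnion H).Adj (inr a) (inl b) := fun h => h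

lemma edgeSet_H1 (t : ℕ) :
    (kP4tP2 1 t).edgeSet = {eA0 t, eA1 t, eA2 t} ∪ Set.range (eB t) := by
  ext e
  refine e.ind fun a b => ?_
  simp only [SimpleGraph.mem_edgeSet, Set.mem_union, Set.mem_insert_iff,
    Set.mem_singleton_iff, Set.mem_range]
  cases a with
  | inl p =>
    cases b with
    | inl q =>
      obtain ⟨p1, p2⟩ := p
      obtain ⟨q1, q2⟩ := q
      have hp1 : p1 = 0 := Subsingleton.elim _ _
      have hq1 : q1 = 0 := Subsingleton.elim _ _
      subst hp1; subst hq1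
      rw [kP4tP2, disjUnion_adj_inl_inl]
      constructor
      · rintro ⟨-, hadj⟩
        rw [pathGraph_adj] at hadj
        refine Or.inl ?_
        fin_cases p2 <;> fin_cases q2 <;>
          simp_all [eA0, eA1, eA2, Sym2.eq_iff, Prod.ext_iff] <;> omega
      · intro h
        have hd : (p2 = 0 ∧ q2 = 1 ∨ p2 = 1 ∧ q2 = 0) ∨ (p2 = 1 ∧ q2 = 2 ∨ p2 = 2 ∧ q2 = 1) ∨
            (p2 = 2 ∧ q2 = 3 ∨ p2 = 3 ∧ q2 = 2) := by
          rcases h with (h | h | h) | ⟨k, h⟩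
          · exact Or.inl (by
              rw [eA0, Sym2.eq_iff] at h
              simpa [Prod.ext_iff] using h)
          · exact Or.inr (Or.inl (by
              rw [eA1, Sym2.eq_iff] at h
              simpa [Prod.ext_iff] using h))
          · exact Or.inr (Or.inr (by
              rw [eA2, Sym2.eq_iff] at h
              simpa [Prod.ext_iff] using h))
          · exfalso; rw [eB, Sym2.eq_iff] at h
            rcases h with ⟨h1, h2⟩ | ⟨h1, h2⟩ <;> simp at h1
        refine ⟨rfl, ?_⟩
        rw [pathGraph_adj]
        rcases hd with (⟨h1, h2⟩ | ⟨h1, h2⟩) | (⟨h1, h2⟩ | ⟨h1, h2⟩) | (⟨h1, h2⟩ | ⟨h1, h2⟩) <;>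
          subst h1 <;> subst h2 <;> decide
    | inr q =>
      constructor
      · intro h; exact absurd h disjUnion_adj_inl_inr
      · intro h
        exfalso
        rcases h with (h | h | h) | ⟨k, h⟩ <;>
          simp [eA0, eA1, eA2, eB, Sym2.eq_iff] at h
  | inr p =>
    cases b with
    | inl q =>
      constructor
      · intro h; exact absurd h disjUnion_adj_inr_inl
      · intro h
        exfalso
        rcases h with (h | h | h) | ⟨k, h⟩ <;>
          simp [eA0, eA1, eA2, eB, Sym2.eq_iff] at h
    | inr q =>
      rw [kP4tP2, disjUnion_adj_inr_inr]
      have hmem : (SimpleGraph.multiCopy t (pathGraph 2)).Adj p q ↔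
          s(p, q) ∈ (SimpleGraph.multiCopy t (pathGraph 2)).edgeSet := Iff.rfl
      rw [hmem, edgeSet_P2s]
      simp only [Set.mem_range]
      constructor
      · rintro ⟨k, hk⟩
        refine Or.inr ⟨k, ?_⟩
        rw [eB]; rw [pe] at hk
        rcases Sym2.eq_iff.mp hk.symm with ⟨h1, h2⟩ | ⟨h1, h2⟩ <;> rw [h1, h2]
        exact Sym2.eq_swap
      · intro h
        rcases h with (h | h | h) | ⟨k, h⟩
        · exfalso; rw [eA0, Sym2.eq_iff] at h
          rcases h with ⟨h1, h2⟩ | ⟨h1, h2⟩ <;> simp at h1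
        · exfalso; rw [eA1, Sym2.eq_iff] at h
          rcases h with ⟨h1, h2⟩ | ⟨h1, h2⟩ <;> simp at h1
        · exfalso; rw [eA2, Sym2.eq_iff] at h
          rcases h with ⟨h1, h2⟩ | ⟨h1, h2⟩ <;> simp at h1
        · refine ⟨k, ?_⟩
          rw [eB, Sym2.eq_iff] at h; rw [pe]
          rcases h with ⟨h1, h2⟩ | ⟨h1, h2⟩ <;>
            simp only [inr.injEq] at h1 h2 <;> rw [Sym2.eq_iff] <;>
            [exact Or.inl ⟨h1, h2⟩; exact Or.inr ⟨h1, h2⟩]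

lemma exists_avoid {t : ℕ} (i j : Fin (t+2)) (hij : i ≠ j) :
    ∃ g : Fin t → Fin (t+2), Function.Injective g ∧ ∀ q, g q ≠ i ∧ g q ≠ j := by
  obtain ⟨j', hj'⟩ := Fin.exists_succAbove_eq (Ne.symm hij)
  refine ⟨fun q => i.succAbove (j'.succAbove q),
    Fin.succAbove_right_injective.comp Fin.succAbove_right_injective, fun q => ⟨?_, ?_⟩⟩
  · exact Fin.succAbove_ne i _
  · intro h
    rw [← hj'] at h
    exact Fin.succAbove_ne j' q (Fin.succAbove_right_injective h)

section Core

variable {n t : ℕ} {c : Sym2 (Fin n) → ℕ} {vx : Fin (t+2) → Fin 2 → Fin n}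

/-- abbreviation for edge colors -/
def cc (c : Sym2 (Fin n) → ℕ) (u v : Fin n) : ℕ := c s(u, v)

/-- the color of the k-th matching edge -/
def sc (c : Sym2 (Fin n) → ℕ) (vx : Fin (t+2) → Fin 2 → Fin n) (k : Fin (t+2)) : ℕ :=
  c s(vx k 0, vx k 1)

lemma cc_comm (c : Sym2 (Fin n) → ℕ) (u v : Fin n) : cc c u v = cc c v u := by
  rw [cc, cc, Sym2.eq_swap]

lemma pv4_inj {α} (p0 p1 p2 p3 : α)
    (hp01 : p0 ≠ p1) (hp02 : p0 ≠ p2) (hp03 : p0 ≠ p3)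
    (hp12 : p1 ≠ p2) (hp13 : p1 ≠ p3) (hp23 : p2 ≠ p3) :
    Function.Injective (![p0, p1, p2, p3] : Fin 4 → α) := by
  intro a b h
  fin_cases a <;> fin_cases b <;> simp_all <;>
    first
      | rfl
      | exact absurd h hp01 | exact absurd h hp02 | exact absurd h hp03
      | exact absurd h hp12 | exact absurd h hp13 | exact absurd h hp23
      | exact absurd h.symm hp01 | exact absurd h.symm hp02 | exact absurd h.symm hp03
      | exact absurd h.symm hp12 | exact absurd h.symm hp13 | exact absurd h.symm hp23

lemma core
    (hvx : ∀ k b l b', vx k b = vx l b' → k = l ∧ b = b')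
    (hsc : ∀ k l, sc c vx k = sc c vx l → k = l)
    (p0 p1 p2 p3 : Fin n)
    (hp01 : p0 ≠ p1) (hp02 : p0 ≠ p2) (hp03 : p0 ≠ p3)
    (hp12 : p1 ≠ p2) (hp13 : p1 ≠ p3) (hp23 : p2 ≠ p3)
    (i j : Fin (t+2)) (hij : i ≠ j)
    (hdisj : ∀ k b, k ≠ i → k ≠ j →
      vx k b ≠ p0 ∧ vx k b ≠ p1 ∧ vx k b ≠ p2 ∧ vx k b ≠ p3)
    (d1 : cc c p0 p1 ≠ cc c p1 p2) (d2 : cc c p0 p1 ≠ cc c p2 p3)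
    (d3 : cc c p1 p2 ≠ cc c p2 p3)
    (dS : ∀ k, k ≠ i → k ≠ j →
      sc c vx k ≠ cc c p0 p1 ∧ sc c vx k ≠ cc c p1 p2 ∧ sc c vx k ≠ cc c p2 p3) :
    HasRainbowCopy n c (kP4tP2 1 t) := by
  obtain ⟨g, hg, hgi⟩ := exists_avoid i j hij
  set pv : Fin 4 → Fin n := ![p0, p1, p2, p3] with hpv
  have hpvinj : Function.Injective pv := pv4_inj _ _ _ _ hp01 hp02 hp03 hp12 hp13 hp23
  set F : V1 t → Fin n := Sum.elim (fun q => pv q.2) (fun q => vx (g q.1) q.2) with hF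
  have hpvmem : ∀ l : Fin 4, pv l = p0 ∨ pv l = p1 ∨ pv l = p2 ∨ pv l = p3 := by
    intro l; fin_cases l <;> simp [hpv]
  have hFinj : Function.Injective F := by
    rintro (⟨u1, u2⟩ | ⟨k, b⟩) (⟨v1, v2⟩ | ⟨l, b'⟩) h <;> simp only [hF, Sum.elim_inl, Sum.elim_inr] at h
    · obtain rfl : u2 = v2 := hpvinj h
      have : u1 = v1 := Subsingleton.elim _ _
      rw [this]
    · exfalso
      have hd := hdisj (g l) b' (hgi l).1 (hgi l).2
      rcases hpvmem u2 with hh | hh | hh | hh <;> rw [hh] at h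
      · exact hd.1 h.symm
      · exact hd.2.1 h.symm
      · exact hd.2.2.1 h.symm
      · exact hd.2.2.2 h.symm
    · exfalso
      have hd := hdisj (g k) b (hgi k).1 (hgi k).2
      rcases hpvmem v2 with hh | hh | hh | hh <;> rw [hh] at h
      · exact hd.1 h
      · exact hd.2.1 h
      · exact hd.2.2.1 h
      · exact hd.2.2.2 h
    · obtain ⟨hkl, hbb⟩ := hvx _ _ _ _ h
      rw [hg hkl, hbb]
  refine ⟨⟨F, hFinj⟩, ?_⟩
  have mA0 : Sym2.map F (eA0 t) = s(p0, p1) := rfl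
  have mA1 : Sym2.map F (eA1 t) = s(p1, p2) := rfl
  have mA2 : Sym2.map F (eA2 t) = s(p2, p3) := rfl
  have mB : ∀ k, Sym2.map F (eB t k) = s(vx (g k) 0, vx (g k) 1) := fun k => rfl
  intro e he e' he' hcc'
  rw [edgeSet_H1] at he he'
  simp only [Set.mem_union, Set.mem_insert_iff, Set.mem_singleton_iff, Set.mem_range] at he he'
  simp only [Function.Embedding.coeFn_mk] at hcc'
  rcases he with (rfl | rfl | rfl) | ⟨k, rfl⟩ <;> rcases he' with (rfl | rfl | rfl) | ⟨k', rfl⟩ <;>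
    simp only [mA0, mA1, mA2, mB] at hcc'
  · rfl
  · exact absurd hcc' d1
  · exact absurd hcc' d2
  · exact absurd hcc'.symm (dS (g k') (hgi k').1 (hgi k').2).1
  · exact absurd hcc'.symm d1
  · rfl
  · exact absurd hcc' d3
  · exact absurd hcc'.symm (dS (g k') (hgi k').1 (hgi k').2).2.1
  · exact absurd hcc'.symm d2
  · exact absurd hcc'.symm d3
  · rfl
  · exact absurd hcc'.symm (dS (g k') (hgi k').1 (hgi k').2).2.2
  · exact absurd hcc' (dS (g k) (hgi k).1 (hgi k).2).1
  · exact absurd hcc' (dS (g k) (hgi k).1 (hgi k).2).2.1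
  · exact absurd hcc' (dS (g k) (hgi k).1 (hgi k).2).2.2
  · rw [hg (hsc _ _ hcc')]

end Core

section Struct

variable {n t : ℕ} {c : Sym2 (Fin n) → ℕ} {vx : Fin (t+2) → Fin 2 → Fin n}

/-- vertex set of the rainbow matching -/
def Wv (vx : Fin (t+2) → Fin 2 → Fin n) : Set (Fin n) := {z | ∃ k b, vx k b = z}

/-- the set of colors of the rainbow matching -/
def Sc (c : Sym2 (Fin n) → ℕ) (vx : Fin (t+2) → Fin 2 → Fin n) : Set ℕ :=
  Set.range (sc c vx)

/-- fresh colors at a vertex -/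
def Fv (c : Sym2 (Fin n) → ℕ) (vx : Fin (t+2) → Fin 2 → Fin n) (v : Fin n) : Set ℕ :=
  {y | y ∉ Sc c vx ∧ ∃ w, w ≠ v ∧ cc c v w = y}

lemma notW {v : Fin n} (hv : v ∉ Wv vx) (k : Fin (t+2)) (b : Fin 2) : vx k b ≠ v :=
  fun h => hv ⟨k, b, h⟩

lemma fresh_ne {x : ℕ} (hx : x ∉ Sc c vx) (m : Fin (t+2)) : sc c vx m ≠ x :=
  fun h => hx ⟨m, h⟩

lemma vx_ne_k (hvx : ∀ k b l b', vx k b = vx l b' → k = l ∧ b = b')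
    {k l : Fin (t+2)} (hkl : k ≠ l) (b b' : Fin 2) : vx k b ≠ vx l b' :=
  fun h => hkl (hvx _ _ _ _ h).1

lemma vx_ne_b (hvx : ∀ k b l b', vx k b = vx l b' → k = l ∧ b = b')
    {b b' : Fin 2} (k l : Fin (t+2)) (hbb : b ≠ b') : vx k b ≠ vx l b' :=
  fun h => hbb (hvx _ _ _ _ h).2

lemma bflip (b : Fin 2) : b + 1 ≠ b := by fin_cases b <;> decide

lemma bflip2 (b : Fin 2) : b + 1 + 1 = b := by fin_cases b <;> decide

lemma fin2_eq_or (a b : Fin 2) : b = a ∨ b = a + 1 := by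
  fin_cases a <;> fin_cases b <;> simp

lemma fin2_pigeon {b b' b'' : Fin 2} (h1 : b ≠ b') (h2 : b ≠ b'') (h3 : b' ≠ b'') :
    False := by fin_cases b <;> fin_cases b' <;> fin_cases b'' <;> simp_all

lemma cc_pair (c : Sym2 (Fin n) → ℕ) (vx : Fin (t+2) → Fin 2 → Fin n)
    (k : Fin (t+2)) (b : Fin 2) : cc c (vx k b) (vx k (b+1)) = sc c vx k := by
  fin_cases b
  · rfl
  · rw [cc_comm]; rfl

lemma zero_ne_one_fin : (0 : Fin (t+2)) ≠ 1 := by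
  intro h
  have := congrArg Fin.val h
  simp [Fin.val_one] at this

lemma exists_ne_fin (k : Fin (t+2)) : ∃ j : Fin (t+2), j ≠ k := by
  refine ⟨k + 1, fun h => ?_⟩
  have h1 : k + 1 = k + 0 := by rw [h, add_zero]
  exact zero_ne_one_fin ((add_left_cancel h1).symm)

lemma exists_pair_fin : ∃ k l : Fin (t+2), k ≠ l := ⟨0, 1, zero_ne_one_fin⟩

variable (hvx : ∀ k b l b', vx k b = vx l b' → k = l ∧ b = b')
  (hsc : ∀ k l, sc c vx k = sc c vx l → k = l)
  (hnr : ¬ HasRainbowCopy n c (kP4tP2 1 t))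

include hvx hsc hnr

/-- Fact 1: cross edges of the matching have matching colors. -/
lemma LW {k l : Fin (t+2)} (hkl : k ≠ l) (b b' : Fin 2) :
    cc c (vx k b) (vx l b') ∈ Sc c vx := by
  by_contra hX
  refine hnr (core hvx hsc (vx k (b+1)) (vx k b) (vx l b') (vx l (b'+1))
    ?_ ?_ ?_ ?_ ?_ ?_ k l hkl ?_ ?_ ?_ ?_ ?_)
  · exact vx_ne_b hvx k k (bflip b)
  · exact vx_ne_k hvx hkl _ _
  · exact vx_ne_k hvx hkl _ _
  · exact vx_ne_k hvx hkl _ _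
  · exact vx_ne_k hvx hkl _ _
  · exact vx_ne_b hvx l l (bflip b').symm
  · intro m b'' hm1 hm2
    exact ⟨vx_ne_k hvx hm1 _ _, vx_ne_k hvx hm1 _ _, vx_ne_k hvx hm2 _ _, vx_ne_k hvx hm2 _ _⟩
  · rw [cc_comm, cc_pair]
    exact fun h => hX ⟨k, h⟩
  · rw [cc_comm (c := c) (vx k (b+1)), cc_pair, cc_pair]
    exact fun h => hsc _ _ h ▸ hkl <| rfl
  · rw [cc_pair]
    exact fun h => hX ⟨l, h.symm⟩
  · intro m hm1 hm2
    rw [cc_comm (c := c) (vx k (b+1)), cc_pair, cc_pair]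
    exact ⟨fun h => hm1 (hsc _ _ h), fun h => hX ⟨m, h⟩, fun h => hm2 (hsc _ _ h)⟩

/-- (A): two fresh colors at `v` towards distinct matching edges: impossible. -/
lemma LA {v : Fin n} (hv : v ∉ Wv vx) {k l : Fin (t+2)} {b b' : Fin 2} (hkl : k ≠ l)
    (hx : cc c v (vx k b) ∉ Sc c vx) (hy : cc c v (vx l b') ∉ Sc c vx)
    (hxy : cc c v (vx k b) ≠ cc c v (vx l b')) : False := by
  refine hnr (core hvx hsc (vx k (b+1)) (vx k b) v (vx l b')
    (vx_ne_b hvx k k (bflip b)) (notW hv k (b+1)) (vx_ne_k hvx hkl _ _)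
    (notW hv k b) (vx_ne_k hvx hkl _ _) (fun h => hv ⟨l, b', h.symm⟩)
    k l hkl ?_ ?_ ?_ ?_ ?_)
  · intro m b'' hm1 hm2
    exact ⟨vx_ne_k hvx hm1 _ _, vx_ne_k hvx hm1 _ _, notW hv m b'', vx_ne_k hvx hm2 _ _⟩
  · rw [cc_comm (c := c) (vx k (b+1)), cc_pair, cc_comm (c := c) (vx k b)]
    exact fresh_ne hx k
  · rw [cc_comm (c := c) (vx k (b+1)), cc_pair]
    exact fresh_ne hy k
  · rw [cc_comm (c := c) (vx k b)]
    exact hxy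
  · intro m hm1 hm2
    rw [cc_comm (c := c) (vx k (b+1)), cc_pair, cc_comm (c := c) (vx k b)]
    exact ⟨fun h => hm1 (hsc _ _ h), fresh_ne hx m, fresh_ne hy m⟩

/-- (B): fresh color towards the matching and a different fresh color outside: impossible. -/
lemma LB {v w : Fin n} (hv : v ∉ Wv vx) (hw : w ∉ Wv vx) (hwv : w ≠ v)
    {k : Fin (t+2)} {b : Fin 2}
    (hx : cc c v (vx k b) ∉ Sc c vx) (hy : cc c v w ∉ Sc c vx)
    (hxy : cc c v (vx k b) ≠ cc c v w) : False := by
  obtain ⟨j, hj⟩ := exists_ne_fin k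
  refine hnr (core hvx hsc (vx k (b+1)) (vx k b) v w
    (vx_ne_b hvx k k (bflip b)) (notW hv k (b+1)) (notW hw k (b+1))
    (notW hv k b) (notW hw k b) (Ne.symm hwv)
    k j (Ne.symm hj) ?_ ?_ ?_ ?_ ?_)
  · intro m b'' hm1 _
    exact ⟨vx_ne_k hvx hm1 _ _, vx_ne_k hvx hm1 _ _, notW hv m b'', notW hw m b''⟩
  · rw [cc_comm (c := c) (vx k (b+1)), cc_pair, cc_comm (c := c) (vx k b)]
    exact fresh_ne hx k
  · rw [cc_comm (c := c) (vx k (b+1)), cc_pair]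
    exact fresh_ne hy k
  · rw [cc_comm (c := c) (vx k b)]
    exact hxy
  · intro m hm1 _
    rw [cc_comm (c := c) (vx k (b+1)), cc_pair, cc_comm (c := c) (vx k b)]
    exact ⟨fun h => hm1 (hsc _ _ h), fresh_ne hx m, fresh_ne hy m⟩

/-- (5a): two fresh distinct colors at `v` on outside edges pin the colors of
`w'`'s edges towards the matching. -/
lemma L5a {v w w' : Fin n} (hv : v ∉ Wv vx) (hw : w ∉ Wv vx) (hw' : w' ∉ Wv vx)
    (hwv : w ≠ v) (hw'v : w' ≠ v) (hww' : w ≠ w')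
    (hx : cc c v w ∉ Sc c vx) (hy : cc c v w' ∉ Sc c vx) (hxy : cc c v w ≠ cc c v w')
    (k : Fin (t+2)) (b : Fin 2) :
    cc c w' (vx k b) = cc c v w ∨ cc c w' (vx k b) = cc c v w' := by
  by_contra hcon
  push_neg at hcon
  obtain ⟨hc1, hc2⟩ := hcon
  have docore : ∀ j : Fin (t+2), j ≠ k →
      (∀ m, m ≠ k → m ≠ j → sc c vx m ≠ cc c w' (vx k b)) → False := by
    intro j hj hdS
    refine hnr (core hvx hsc w v w' (vx k b)
      hwv hww' (notW hw k b).symm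
      (Ne.symm hw'v) (notW hv k b).symm (fun h => hw' ⟨k, b, h.symm⟩)
      k j (Ne.symm hj) ?_ ?_ ?_ ?_ ?_)
    · intro m b'' hm1 _
      exact ⟨notW hw m b'', notW hv m b'', notW hw' m b'', vx_ne_k hvx hm1 _ _⟩
    · rw [cc_comm (c := c) w]
      exact hxy
    · rw [cc_comm (c := c) w]
      exact fun h => hc1 h.symm
    · exact fun h => hc2 h.symm
    · intro m hm1 hm2
      rw [cc_comm (c := c) w]
      exact ⟨fresh_ne hx m, fresh_ne hy m, hdS m hm1 hm2⟩
  by_cases hβ : cc c w' (vx k b) ∈ Sc c vx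
  · obtain ⟨r, hr⟩ := hβ
    by_cases hrk : r = k
    · obtain ⟨j, hj⟩ := exists_ne_fin k
      exact docore j hj (fun m hm1 _ h => hm1 (hsc _ _ (h.trans hr.symm) |>.trans hrk))
    · exact docore r hrk (fun m _ hm2 h => hm2 (hsc _ _ (h.trans hr.symm)))
  · obtain ⟨j, hj⟩ := exists_ne_fin k
    exact docore j hj (fun m _ _ => fresh_ne hβ m)

/-- (5b): refinement of 5a: the color is pinned to `w'`'s own color. -/
lemma L5b {v w w' : Fin n} (hv : v ∉ Wv vx) (hw : w ∉ Wv vx) (hw' : w' ∉ Wv vx)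
    (hwv : w ≠ v) (hw'v : w' ≠ v) (hww' : w ≠ w')
    (hx : cc c v w ∉ Sc c vx) (hy : cc c v w' ∉ Sc c vx) (hxy : cc c v w ≠ cc c v w')
    (k : Fin (t+2)) (b : Fin 2) :
    cc c w' (vx k b) = cc c v w' := by
  rcases L5a hvx hsc hnr hv hw hw' hwv hw'v hww' hx hy hxy k b with h | h
  · exfalso
    obtain ⟨j, hj⟩ := exists_ne_fin k
    refine hnr (core hvx hsc (vx k (b+1)) (vx k b) w' v
      (vx_ne_b hvx k k (bflip b)) (notW hw' k (b+1)) (notW hv k (b+1))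
      (notW hw' k b) (notW hv k b) hw'v
      k j (Ne.symm hj) ?_ ?_ ?_ ?_ ?_)
    · intro m b'' hm1 _
      exact ⟨vx_ne_k hvx hm1 _ _, vx_ne_k hvx hm1 _ _, notW hw' m b'', notW hv m b''⟩
    · rw [cc_comm (c := c) (vx k (b+1)), cc_pair, cc_comm (c := c) (vx k b), h]
      exact fresh_ne hx k
    · rw [cc_comm (c := c) (vx k (b+1)), cc_pair, cc_comm (c := c) w']
      exact fresh_ne hy k
    · rw [cc_comm (c := c) (vx k b), h, cc_comm (c := c) w']
      exact hxy
    · intro m hm1 _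
      rw [cc_comm (c := c) (vx k (b+1)), cc_pair, cc_comm (c := c) (vx k b), h,
        cc_comm (c := c) w']
      exact ⟨fun hh => hm1 (hsc _ _ hh), fresh_ne hx m, fresh_ne hy m⟩
  · exact h

/-- helper: path `p0-p1-p2-(vx k b)` with `p0,p1,p2` outside. -/
lemma core_k {p0 p1 p2 : Fin n} (h0 : p0 ∉ Wv vx) (h1 : p1 ∉ Wv vx) (h2 : p2 ∉ Wv vx)
    (h01 : p0 ≠ p1) (h02 : p0 ≠ p2) (h12 : p1 ≠ p2) (k : Fin (t+2)) (b : Fin 2)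
    (d1 : cc c p0 p1 ≠ cc c p1 p2) (d2 : cc c p0 p1 ≠ cc c p2 (vx k b))
    (d3 : cc c p1 p2 ≠ cc c p2 (vx k b))
    (hS : ∀ m m', m ≠ k → m' ≠ k → m ≠ m' →
      (sc c vx m = cc c p0 p1 ∨ sc c vx m = cc c p1 p2 ∨ sc c vx m = cc c p2 (vx k b)) →
      (sc c vx m' = cc c p0 p1 ∨ sc c vx m' = cc c p1 p2 ∨ sc c vx m' = cc c p2 (vx k b)) →
      False) : False := by
  have docore : ∀ j : Fin (t+2), j ≠ k →
      (∀ m, m ≠ k → m ≠ j →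
        sc c vx m ≠ cc c p0 p1 ∧ sc c vx m ≠ cc c p1 p2 ∧ sc c vx m ≠ cc c p2 (vx k b)) →
      False := by
    intro j hj hdS
    refine hnr (core hvx hsc p0 p1 p2 (vx k b)
      h01 h02 (notW h0 k b).symm h12 (notW h1 k b).symm (notW h2 k b).symm
      k j (Ne.symm hj) ?_ d1 d2 d3 ?_)
    · intro m b'' hm1 _
      exact ⟨notW h0 m b'', notW h1 m b'', notW h2 m b'', vx_ne_k hvx hm1 _ _⟩
    · exact hdS
  by_cases hex : ∃ m, m ≠ k ∧ (sc c vx m = cc c p0 p1 ∨ sc c vx m = cc c p1 p2 ∨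
      sc c vx m = cc c p2 (vx k b))
  · obtain ⟨m0, hm0, hmem⟩ := hex
    refine docore m0 hm0 (fun m hm1 hm2 => ?_)
    refine ⟨fun h => hS m m0 hm1 hm0 hm2 (Or.inl h) hmem,
      fun h => hS m m0 hm1 hm0 hm2 (Or.inr (Or.inl h)) hmem,
      fun h => hS m m0 hm1 hm0 hm2 (Or.inr (Or.inr h)) hmem⟩
  · push_neg at hex
    obtain ⟨j, hj⟩ := exists_ne_fin k
    exact docore j hj (fun m hm1 _ => hex m hm1)

/-- helper: path with all four vertices outside and three pairwise distinct fresh colors. -/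
lemma core_O4 {p0 p1 p2 p3 : Fin n} (h0 : p0 ∉ Wv vx) (h1 : p1 ∉ Wv vx)
    (h2 : p2 ∉ Wv vx) (h3 : p3 ∉ Wv vx)
    (h01 : p0 ≠ p1) (h02 : p0 ≠ p2) (h03 : p0 ≠ p3) (h12 : p1 ≠ p2) (h13 : p1 ≠ p3)
    (h23 : p2 ≠ p3)
    (f1 : cc c p0 p1 ∉ Sc c vx) (f2 : cc c p1 p2 ∉ Sc c vx) (f3 : cc c p2 p3 ∉ Sc c vx)
    (d1 : cc c p0 p1 ≠ cc c p1 p2) (d2 : cc c p0 p1 ≠ cc c p2 p3)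
    (d3 : cc c p1 p2 ≠ cc c p2 p3) : False := by
  refine hnr (core hvx hsc p0 p1 p2 p3 h01 h02 h03 h12 h13 h23 0 1 zero_ne_one_fin
    ?_ d1 d2 d3 ?_)
  · intro m b'' _ _
    exact ⟨notW h0 m b'', notW h1 m b'', notW h2 m b'', notW h3 m b''⟩
  · intro m _ _
    exact ⟨fresh_ne f1 m, fresh_ne f2 m, fresh_ne f3 m⟩

/-- helper: pinning colors of `[O, W]` edges that lie in `Sc`. -/
lemma core_pin {q0 q1 : Fin n} (h0 : q0 ∉ Wv vx) (h1 : q1 ∉ Wv vx) (h01 : q0 ≠ q1)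
    (hf : cc c q0 q1 ∉ Sc c vx) (l : Fin (t+2)) (b : Fin 2)
    (hmem : cc c q1 (vx l b) ∈ Sc c vx) : cc c q1 (vx l b) = sc c vx l := by
  obtain ⟨m, hm⟩ := hmem
  by_cases hml : m = l
  · rw [← hm, hml]
  · exfalso
    refine hnr (core hvx hsc q0 q1 (vx l b) (vx l (b+1))
      h01 (notW h0 l b).symm (notW h0 l (b+1)).symm
      (notW h1 l b).symm (notW h1 l (b+1)).symm (vx_ne_b hvx l l (fun h => bflip b h.symm))
      l m (fun h => hml h.symm) ?_ ?_ ?_ ?_ ?_)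
    · intro m' b'' hm'1 _
      exact ⟨notW h0 m' b'', notW h1 m' b'', vx_ne_k hvx hm'1 _ _, vx_ne_k hvx hm'1 _ _⟩
    · exact fun h => hf ⟨m, hm.trans h.symm⟩
    · rw [cc_pair]
      exact fun h => hf ⟨l, h.symm⟩
    · rw [cc_pair]
      exact fun h => hml (hsc m l (hm.trans h))
    · intro m' hm'1 hm'2
      rw [cc_pair]
      exact ⟨fresh_ne hf m', fun h => hm'2 (hsc _ _ (h.trans hm.symm)),
        fun h => hm'1 (hsc _ _ h)⟩

/-- helper: path `(vx k a) - q1 - q2 - (vx l b)` whose end edges have the matching colors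
and fresh middle. -/
lemma core_two_pairs {q1 q2 : Fin n} (h1 : q1 ∉ Wv vx) (h2 : q2 ∉ Wv vx) (h12 : q1 ≠ q2)
    {k l : Fin (t+2)} (hkl : k ≠ l) (a b : Fin 2)
    (e1 : cc c (vx k a) q1 = sc c vx k) (hf : cc c q1 q2 ∉ Sc c vx)
    (e3 : cc c q2 (vx l b) = sc c vx l) : False := by
  refine hnr (core hvx hsc (vx k a) q1 q2 (vx l b)
    (notW h1 k a) (notW h2 k a) (vx_ne_k hvx hkl _ _)
    h12 (notW h1 l b).symm (notW h2 l b).symm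
    k l hkl ?_ ?_ ?_ ?_ ?_)
  · intro m' b'' hm'1 hm'2
    exact ⟨vx_ne_k hvx hm'1 _ _, notW h1 m' b'', notW h2 m' b'', vx_ne_k hvx hm'2 _ _⟩
  · rw [e1]
    exact fresh_ne hf k
  · rw [e1, e3]
    exact fun h => hkl (hsc _ _ h)
  · rw [e3]
    exact fun h => hf ⟨l, h.symm⟩
  · intro m' hm'1 hm'2
    rw [e1, e3]
    exact ⟨fun h => hm'1 (hsc _ _ h), fresh_ne hf m', fun h => hm'2 (hsc _ _ h)⟩

/-- helper: path `(vx k a) - q1 - q2 - (vx l b)` with fresh distinct end colors and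
middle color equal to `sc k` or `sc l`. -/
lemma core_mid {q1 q2 : Fin n} (h1 : q1 ∉ Wv vx) (h2 : q2 ∉ Wv vx) (h12 : q1 ≠ q2)
    {k l : Fin (t+2)} (hkl : k ≠ l) (a b : Fin 2)
    (f1 : cc c (vx k a) q1 ∉ Sc c vx) (f3 : cc c q2 (vx l b) ∉ Sc c vx)
    (d13 : cc c (vx k a) q1 ≠ cc c q2 (vx l b))
    {m : Fin (t+2)} (hδ : cc c q1 q2 = sc c vx m) (hm : m = k ∨ m = l) : False := by
  refine hnr (core hvx hsc (vx k a) q1 q2 (vx l b)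
    (notW h1 k a) (notW h2 k a) (vx_ne_k hvx hkl _ _)
    h12 (notW h1 l b).symm (notW h2 l b).symm
    k l hkl ?_ ?_ ?_ ?_ ?_)
  · intro m' b'' hm'1 hm'2
    exact ⟨vx_ne_k hvx hm'1 _ _, notW h1 m' b'', notW h2 m' b'', vx_ne_k hvx hm'2 _ _⟩
  · rw [hδ]
    exact fun h => f1 ⟨m, h.symm⟩
  · exact d13
  · rw [hδ]
    exact fun h => f3 ⟨m, h⟩
  · intro m' hm'1 hm'2
    rw [hδ]
    refine ⟨fresh_ne f1 m', fun h => ?_, fresh_ne f3 m'⟩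
    have := hsc _ _ h
    rcases hm with rfl | rfl
    · exact hm'1 this
    · exact hm'2 this

/-- helper: path `(vx k (a+1)) - q1 - q2 - (vx k a)` with colors `sc k, sc m, fresh`. -/
lemma core_one_pair {q1 q2 : Fin n} (h1 : q1 ∉ Wv vx) (h2 : q2 ∉ Wv vx) (h12 : q1 ≠ q2)
    {k m : Fin (t+2)} (hmk : m ≠ k) (a : Fin 2)
    (e1 : cc c (vx k (a+1)) q1 = sc c vx k) (e2 : cc c q1 q2 = sc c vx m)
    (f3 : cc c q2 (vx k a) ∉ Sc c vx) : False := by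
  refine hnr (core hvx hsc (vx k (a+1)) q1 q2 (vx k a)
    (notW h1 k (a+1)) (notW h2 k (a+1)) (vx_ne_b hvx k k (bflip a))
    h12 (notW h1 k a).symm (notW h2 k a).symm
    k m (Ne.symm hmk) ?_ ?_ ?_ ?_ ?_)
  · intro m' b'' hm'1 hm'2
    exact ⟨vx_ne_k hvx hm'1 _ _, notW h1 m' b'', notW h2 m' b'', vx_ne_k hvx hm'1 _ _⟩
  · rw [e1, e2]
    exact fun h => hmk (hsc _ _ h).symm
  · rw [e1]
    exact fresh_ne f3 k
  · rw [e2]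
    exact fresh_ne f3 m
  · intro m' hm'1 hm'2
    rw [e1, e2]
    exact ⟨fun h => hm'1 (hsc _ _ h), fun h => hm'2 (hsc _ _ h), fresh_ne f3 m'⟩

/-- helper: path `q0 - (vx k (a+1)) - (vx k a) - q1`, fresh first color; the last color
is the first color or `sc k`. -/
lemma core_hang {q0 q1 : Fin n} (h0 : q0 ∉ Wv vx) (h1 : q1 ∉ Wv vx) (h01 : q0 ≠ q1)
    (k : Fin (t+2)) (a : Fin 2) (hy : cc c q0 (vx k (a+1)) ∉ Sc c vx) :
    cc c (vx k a) q1 = cc c q0 (vx k (a+1)) ∨ cc c (vx k a) q1 = sc c vx k := by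
  by_contra hcon
  push_neg at hcon
  obtain ⟨hc1, hc2⟩ := hcon
  have docore : ∀ j : Fin (t+2), j ≠ k →
      (∀ m, m ≠ k → m ≠ j → sc c vx m ≠ cc c (vx k a) q1) → False := by
    intro j hj hdS
    refine hnr (core hvx hsc q0 (vx k (a+1)) (vx k a) q1
      (notW h0 k (a+1)).symm (notW h0 k a).symm h01
      (vx_ne_b hvx k k (bflip a)) (notW h1 k (a+1)) (notW h1 k a)
      k j (Ne.symm hj) ?_ ?_ ?_ ?_ ?_)
    · intro m b'' hm1 _
      exact ⟨notW h0 m b'', vx_ne_k hvx hm1 _ _, vx_ne_k hvx hm1 _ _, notW h1 m b''⟩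
    · rw [cc_comm (c := c) (vx k (a+1)) (vx k a), cc_pair (c := c) vx k a]
      exact fun h => hy ⟨k, h.symm⟩
    · exact fun h => hc1 h.symm
    · rw [cc_comm (c := c) (vx k (a+1)) (vx k a), cc_pair (c := c) vx k a]
      exact fun h => hc2 h.symm
    · intro m hm1 hm2
      rw [cc_comm (c := c) (vx k (a+1)) (vx k a), cc_pair (c := c) vx k a]
      exact ⟨fresh_ne hy m, fun h => hm1 (hsc _ _ h), hdS m hm1 hm2⟩
  by_cases hβ : cc c (vx k a) q1 ∈ Sc c vx
  · obtain ⟨r, hr⟩ := hβ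
    have hrk : r ≠ k := fun h => hc2 (hr.symm.trans (by rw [h]))
    exact docore r hrk (fun m _ hm2 h => hm2 (hsc _ _ (h.trans hr.symm)))
  · obtain ⟨j, hj⟩ := exists_ne_fin k
    exact docore j hj (fun m _ _ => fresh_ne hβ m)

/-- (6): three distinct fresh colors at `v` on outside edges: impossible. -/
lemma L6 {v w1 w2 w3 : Fin n} (hv : v ∉ Wv vx) (hw1 : w1 ∉ Wv vx) (hw2 : w2 ∉ Wv vx)
    (hw3 : w3 ∉ Wv vx)
    (hw1v : w1 ≠ v) (hw2v : w2 ≠ v) (hw3v : w3 ≠ v)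
    (h12 : w1 ≠ w2) (h13 : w1 ≠ w3) (h23 : w2 ≠ w3)
    (f1 : cc c v w1 ∉ Sc c vx) (f2 : cc c v w2 ∉ Sc c vx) (f3 : cc c v w3 ∉ Sc c vx)
    (d12 : cc c v w1 ≠ cc c v w2) (d13 : cc c v w1 ≠ cc c v w3)
    (d23 : cc c v w2 ≠ cc c v w3) : False := by
  have D13 : ∀ k b, cc c w3 (vx k b) = cc c v w3 :=
    fun k b => L5b hvx hsc hnr hv hw1 hw3 hw1v hw3v h13 f1 f3 d13 k b
  have D12 : ∀ k b, cc c w2 (vx k b) = cc c v w2 :=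
    fun k b => L5b hvx hsc hnr hv hw1 hw2 hw1v hw2v h12 f1 f2 d12 k b
  have hg13 : cc c w1 w3 = cc c v w1 := by
    have hmem : cc c w1 w3 = cc c v w1 ∨ cc c w1 w3 = cc c v w3 := by
      by_contra hcon
      push_neg at hcon
      obtain ⟨hc1, hc2⟩ := hcon
      refine core_k hvx hsc hnr hv hw1 hw3 (Ne.symm hw1v) (Ne.symm hw3v) h13 0 0
        (fun h => hc1 h.symm) (by rw [D13 0 0]; exact d13) (by rw [D13 0 0]; exact hc2) ?_
      intro m m' hm hm' hmm' ha hb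
      have hma : sc c vx m = cc c w1 w3 := by
        rcases ha with h | h | h
        · exact absurd h (fresh_ne f1 m)
        · exact h
        · rw [D13 0 0] at h
          exact absurd h (fresh_ne f3 m)
      have hmb : sc c vx m' = cc c w1 w3 := by
        rcases hb with h | h | h
        · exact absurd h (fresh_ne f1 m')
        · exact h
        · rw [D13 0 0] at h
          exact absurd h (fresh_ne f3 m')
      exact hmm' (hsc _ _ (hma.trans hmb.symm))
    rcases hmem with h | h
    · exact h
    · exfalso
      refine core_O4 hvx hsc hnr hw3 hw1 hv hw2
        (Ne.symm h13) hw3v (fun hh => h23 hh.symm) hw1v h12 (Ne.symm hw2v)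
        ?_ ?_ f2 ?_ ?_ ?_
      · rw [cc_comm (c := c) w3 w1, h]
        exact f3
      · rw [cc_comm (c := c) w1 v]
        exact f1
      · rw [cc_comm (c := c) w3 w1, h, cc_comm (c := c) w1 v]
        exact fun hh => d13 hh.symm
      · rw [cc_comm (c := c) w3 w1, h]
        exact fun hh => d23 hh.symm
      · rw [cc_comm (c := c) w1 v]
        exact d12
  have hg12 : cc c w1 w2 = cc c v w1 := by
    have hmem : cc c w1 w2 = cc c v w1 ∨ cc c w1 w2 = cc c v w2 := by
      by_contra hcon
      push_neg at hcon
      obtain ⟨hc1, hc2⟩ := hcon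
      refine core_k hvx hsc hnr hv hw1 hw2 (Ne.symm hw1v) (Ne.symm hw2v) h12 0 0
        (fun h => hc1 h.symm) (by rw [D12 0 0]; exact d12) (by rw [D12 0 0]; exact hc2) ?_
      intro m m' hm hm' hmm' ha hb
      have hma : sc c vx m = cc c w1 w2 := by
        rcases ha with h | h | h
        · exact absurd h (fresh_ne f1 m)
        · exact h
        · rw [D12 0 0] at h
          exact absurd h (fresh_ne f2 m)
      have hmb : sc c vx m' = cc c w1 w2 := by
        rcases hb with h | h | h
        · exact absurd h (fresh_ne f1 m')
        · exact h
        · rw [D12 0 0] at h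
          exact absurd h (fresh_ne f2 m')
      exact hmm' (hsc _ _ (hma.trans hmb.symm))
    rcases hmem with h | h
    · exact h
    · exfalso
      refine core_O4 hvx hsc hnr hw2 hw1 hv hw3
        (Ne.symm h12) hw2v h23 hw1v h13 (Ne.symm hw3v)
        ?_ ?_ f3 ?_ ?_ ?_
      · rw [cc_comm (c := c) w2 w1, h]
        exact f2
      · rw [cc_comm (c := c) w1 v]
        exact f1
      · rw [cc_comm (c := c) w2 w1, h, cc_comm (c := c) w1 v]
        exact fun hh => d12 hh.symm
      · rw [cc_comm (c := c) w2 w1, h]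
        exact d23
      · rw [cc_comm (c := c) w1 v]
        exact d13
  refine core_O4 hvx hsc hnr hw1 hw2 hv hw3
    h12 hw1v h13 hw2v h23 (Ne.symm hw3v)
    ?_ ?_ f3 ?_ ?_ ?_
  · rw [hg12]
    exact f1
  · rw [cc_comm (c := c) w2 v]
    exact f2
  · rw [hg12, cc_comm (c := c) w2 v]
    exact d12
  · rw [hg12]
    exact d13
  · rw [cc_comm (c := c) w2 v]
    exact d23

/-- P1: a vertex outside the matching carries at most two fresh colors. -/
lemma P1 {v : Fin n} (hv : v ∉ Wv vx) {x y z : ℕ}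
    (hx : x ∈ Fv c vx v) (hy : y ∈ Fv c vx v) (hz : z ∈ Fv c vx v)
    (dxy : x ≠ y) (dxz : x ≠ z) (dyz : y ≠ z) : False := by
  obtain ⟨hxS, wx, hwxv, hwx⟩ := hx
  obtain ⟨hyS, wy, hwyv, hwy⟩ := hy
  obtain ⟨hzS, wz, hwzv, hwz⟩ := hz
  subst hwx; subst hwy; subst hwz
  have hxy : wx ≠ wy := fun h => dxy (by rw [h])
  have hxz : wx ≠ wz := fun h => dxz (by rw [h])
  have hyz : wy ≠ wz := fun h => dyz (by rw [h])
  by_cases hWx : wx ∈ Wv vx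
  · obtain ⟨k, b, rfl⟩ := hWx
    by_cases hWy : wy ∈ Wv vx
    · obtain ⟨l, b', rfl⟩ := hWy
      have hkl : k = l := by
        by_contra hkl
        exact LA hvx hsc hnr hv hkl hxS hyS dxy
      subst hkl
      by_cases hWz : wz ∈ Wv vx
      · obtain ⟨m, b'', rfl⟩ := hWz
        have hkm : k = m := by
          by_contra hkm
          exact LA hvx hsc hnr hv hkm hxS hzS dxz
        subst hkm
        have hb : b ≠ b' := fun h => hxy (by rw [h])
        have hb2 : b ≠ b'' := fun h => hxz (by rw [h])
        have hb3 : b' ≠ b'' := fun h => hyz (by rw [h])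
        exact fin2_pigeon hb hb2 hb3
      · exact LB hvx hsc hnr hv hWz hwzv hxS hzS dxz
    · exact LB hvx hsc hnr hv hWy hwyv hxS hyS dxy
  · by_cases hWy : wy ∈ Wv vx
    · obtain ⟨l, b', rfl⟩ := hWy
      exact LB hvx hsc hnr hv hWx hwxv hyS hxS (Ne.symm dxy)
    · by_cases hWz : wz ∈ Wv vx
      · obtain ⟨m, b'', rfl⟩ := hWz
        exact LB hvx hsc hnr hv hWx hwxv hzS hxS (Ne.symm dxz)
      · exact L6 hvx hsc hnr hv hWx hWy hWz hwxv hwyv hwzv hxy hxz hyz hxS hyS hzS dxy dxz dyz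

/-- with a type-C double at `u` on pair `k`, all outside edges at `u` have matching colors. -/
lemma LOu {u : Fin n} (hu : u ∉ Wv vx) {k : Fin (t+2)} {a : Fin 2}
    (hxS : cc c u (vx k a) ∉ Sc c vx) (hyS : cc c u (vx k (a+1)) ∉ Sc c vx)
    (hxy : cc c u (vx k a) ≠ cc c u (vx k (a+1)))
    {w : Fin n} (hw : w ∉ Wv vx) (hwu : w ≠ u) : cc c u w ∈ Sc c vx := by
  by_contra hfr
  by_cases hfx : cc c u w = cc c u (vx k a)
  · exact LB hvx hsc hnr hu hw hwu hyS hfr (by rw [hfx]; exact Ne.symm hxy)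
  · exact LB hvx hsc hnr hu hw hwu hxS hfr (fun h => hfx h.symm)

/-- type-C master lemma, case of a W-witness on a different pair. -/
lemma LCb {u : Fin n} (hu : u ∉ Wv vx) {k : Fin (t+2)} {a : Fin 2}
    (hxS : cc c u (vx k a) ∉ Sc c vx) (hyS : cc c u (vx k (a+1)) ∉ Sc c vx)
    (hxy : cc c u (vx k a) ≠ cc c u (vx k (a+1)))
    {v : Fin n} (hv : v ∉ Wv vx) (hvu : v ≠ u)
    {l : Fin (t+2)} {b : Fin 2} (hlk : l ≠ k)
    (hx'S : cc c v (vx l b) ∉ Sc c vx)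
    (hx'x : cc c v (vx l b) ≠ cc c u (vx k a))
    (hx'y : cc c v (vx l b) ≠ cc c u (vx k (a+1))) : False := by
  have hva : cc c v (vx k a) = sc c vx k := by
    rcases core_hang hvx hsc hnr hu hv (Ne.symm hvu) k a hyS with h | h <;>
      rw [cc_comm (c := c) (vx k a) v] at h
    · exfalso
      refine LA hvx hsc hnr hv (Ne.symm hlk)
        (show cc c v (vx k a) ∉ Sc c vx by rw [h]; exact hyS) hx'S ?_
      rw [h]
      exact fun hh => hx'y hh.symm
    · exact h
  have hva' : cc c v (vx k (a+1)) = sc c vx k := by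
    have hxS2 : cc c u (vx k (a+1+1)) ∉ Sc c vx := by rw [bflip2]; exact hxS
    rcases core_hang hvx hsc hnr hu hv (Ne.symm hvu) k (a+1) hxS2 with h | h <;>
      rw [cc_comm (c := c) (vx k (a+1)) v] at h
    · exfalso
      rw [bflip2] at h
      refine LA hvx hsc hnr hv (Ne.symm hlk)
        (show cc c v (vx k (a+1)) ∉ Sc c vx by rw [h]; exact hxS) hx'S ?_
      rw [h]
      exact fun hh => hx'x hh.symm
    · exact h
  obtain ⟨m, hm⟩ := LOu hvx hsc hnr hu hxS hyS hxy hv hvu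
  have f1c : cc c (vx k a) u ∉ Sc c vx := by
    rw [cc_comm (c := c) (vx k a) u]; exact hxS
  have d13c : cc c (vx k a) u ≠ cc c v (vx l b) := by
    rw [cc_comm (c := c) (vx k a) u]; exact fun hh => hx'x hh.symm
  have hδc : cc c u v = sc c vx m := hm.symm
  have hmk : m ≠ k := by
    intro hh
    subst hh
    exact core_mid hvx hsc hnr hu hv (Ne.symm hvu) (Ne.symm hlk) a b f1c hx'S d13c hδc
      (Or.inl rfl)
  have hml : m ≠ l := by
    intro hh
    subst hh
    exact core_mid hvx hsc hnr hu hv (Ne.symm hvu) (Ne.symm hlk) a b f1c hx'S d13c hδc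
      (Or.inr rfl)
  refine core_one_pair hvx hsc hnr hv hu hvu hmk a ?_ ?_ hxS
  · rw [cc_comm (c := c) (vx k (a+1)) v]
    exact hva'
  · rw [cc_comm (c := c) v u]
    exact hm.symm

/-- type-C master lemma. -/
lemma LC {u : Fin n} (hu : u ∉ Wv vx) {k : Fin (t+2)} {a : Fin 2}
    (hxS : cc c u (vx k a) ∉ Sc c vx) (hyS : cc c u (vx k (a+1)) ∉ Sc c vx)
    (hxy : cc c u (vx k a) ≠ cc c u (vx k (a+1)))
    {v : Fin n} (hv : v ∉ Wv vx) (hvu : v ≠ u)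
    {x' : ℕ} (hx' : x' ∈ Fv c vx v)
    (hx'x : x' ≠ cc c u (vx k a)) (hx'y : x' ≠ cc c u (vx k (a+1))) : False := by
  obtain ⟨hx'S, w', hw'v, rfl⟩ := hx'
  by_cases hWw' : w' ∈ Wv vx
  · obtain ⟨l, b, rfl⟩ := hWw'
    by_cases hlk : l = k
    · subst hlk
      rcases fin2_eq_or a b with hba | hba <;> rw [hba] at hx'S hx'x hx'y
      · rcases core_hang hvx hsc hnr hu hv (Ne.symm hvu) l a hyS with h | h <;>
          rw [cc_comm (c := c) (vx l a) v] at h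
        · exact hx'y h
        · exact hx'S ⟨l, h.symm⟩
      · have hxS2 : cc c u (vx l (a+1+1)) ∉ Sc c vx := by rw [bflip2]; exact hxS
        rcases core_hang hvx hsc hnr hu hv (Ne.symm hvu) l (a+1) hxS2 with h | h <;>
          rw [cc_comm (c := c) (vx l (a+1)) v] at h
        · rw [bflip2] at h
          exact hx'x h
        · exact hx'S ⟨l, h.symm⟩
    · exact LCb hvx hsc hnr hu hxS hyS hxy hv hvu hlk hx'S hx'x hx'y
  · have hw'u : w' ≠ u := by
      intro h
      subst h
      rw [cc_comm (c := c) v w'] at hx'S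
      exact hx'S (LOu hvx hsc hnr hu hxS hyS hxy hv hvu)
    have hva : cc c v (vx k a) = sc c vx k := by
      rcases core_hang hvx hsc hnr hu hv (Ne.symm hvu) k a hyS with h | h <;>
        rw [cc_comm (c := c) (vx k a) v] at h
      · exfalso
        refine LB hvx hsc hnr hv hWw' hw'v
          (show cc c v (vx k a) ∉ Sc c vx by rw [h]; exact hyS) hx'S ?_
        rw [h]
        exact fun hh => hx'y hh.symm
      · exact h
    have hpin_w : ∀ l b, l ≠ k → cc c w' (vx l b) = sc c vx l := by
      intro l b hlk
      by_cases hβ : cc c w' (vx l b) ∈ Sc c vx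
      · exact core_pin hvx hsc hnr hv hWw' (Ne.symm hw'v) hx'S l b hβ
      · exfalso
        by_cases hβx : cc c w' (vx l b) = cc c v w'
        · exact LCb hvx hsc hnr hu hxS hyS hxy hWw' hw'u hlk hβ
            (by rw [hβx]; exact hx'x) (by rw [hβx]; exact hx'y)
        · refine LB hvx hsc hnr hWw' hv (Ne.symm hw'v) hβ ?_ ?_
          · rw [cc_comm (c := c) w' v]
            exact hx'S
          · rw [cc_comm (c := c) w' v]
            exact hβx
    obtain ⟨l0, hl0⟩ := exists_ne_fin k
    refine core_two_pairs hvx hsc hnr hv hWw' (Ne.symm hw'v) (Ne.symm hl0) a 0 ?_ hx'S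
      (hpin_w l0 0 hl0)
    rw [cc_comm (c := c) (vx k a) v]
    exact hva

/-- type-D master lemma. -/
lemma LD {u p1 p2 : Fin n} (hu : u ∉ Wv vx) (hp1 : p1 ∉ Wv vx) (hp2 : p2 ∉ Wv vx)
    (hp1u : p1 ≠ u) (hp2u : p2 ≠ u) (hp12 : p1 ≠ p2)
    (hxS : cc c u p1 ∉ Sc c vx) (hyS : cc c u p2 ∉ Sc c vx)
    (hxy : cc c u p1 ≠ cc c u p2)
    {v : Fin n} (hv : v ∉ Wv vx) (hvu : v ≠ u)
    {x' : ℕ} (hx' : x' ∈ Fv c vx v)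
    (hx'x : x' ≠ cc c u p1) (hx'y : x' ≠ cc c u p2) : False := by
  have D1 : ∀ k b, cc c p1 (vx k b) = cc c u p1 :=
    fun k b => L5b hvx hsc hnr hu hp2 hp1 hp2u hp1u (Ne.symm hp12) hyS hxS
      (fun h => hxy h.symm) k b
  obtain ⟨hx'S, w', hw'v, rfl⟩ := hx'
  have hvp1 : v ≠ p1 := by
    intro h
    by_cases hWw' : w' ∈ Wv vx
    · obtain ⟨l, b, rfl⟩ := hWw'
      obtain ⟨l', hl'⟩ := exists_ne_fin l
      have hx1 : cc c v (vx l' 0) ∉ Sc c vx := by rw [h, D1 l' 0]; exact hxS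
      have hx2 : cc c v (vx l' 0) ≠ cc c v (vx l b) := by
        rw [show cc c v (vx l' 0) = cc c u p1 from by rw [h, D1 l' 0]]
        exact fun hh => hx'x hh.symm
      exact LA hvx hsc hnr hv hl' hx1 hx'S hx2
    · have hx1 : cc c v (vx (0 : Fin (t+2)) 0) ∉ Sc c vx := by rw [h, D1 0 0]; exact hxS
      have hx2 : cc c v (vx (0 : Fin (t+2)) 0) ≠ cc c v w' := by
        rw [show cc c v (vx (0 : Fin (t+2)) 0) = cc c u p1 from by rw [h, D1 0 0]]
        exact fun hh => hx'x hh.symm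
      exact LB hvx hsc hnr hv hWw' hw'v hx1 hx'S hx2
  have hw'u : w' ≠ u := by
    intro h
    have hz1 : cc c v w' = cc c u v := by rw [h, cc_comm (c := c) v u]
    refine P1 hvx hsc hnr hu ⟨hxS, p1, hp1u, rfl⟩ ⟨hyS, p2, hp2u, rfl⟩
      ⟨hz1 ▸ hx'S, v, hvu, rfl⟩ hxy ?_ ?_
    · exact fun hh => hx'x (by rw [hz1]; exact hh.symm)
    · exact fun hh => hx'y (by rw [hz1]; exact hh.symm)
  by_cases hWw' : w' ∈ Wv vx
  · obtain ⟨l, b, rfl⟩ := hWw'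
    have hXS : cc c p1 (vx l (b+1)) ∉ Sc c vx := by rw [D1]; exact hxS
    rcases core_hang hvx hsc hnr hp1 hv (Ne.symm hvp1) l b hXS with h | h <;>
      rw [cc_comm (c := c) (vx l b) v] at h
    · rw [D1] at h
      exact hx'x h
    · exact hx'S ⟨l, h.symm⟩
  · have hw'p1 : w' ≠ p1 := by
      intro h
      have h1 : cc c p1 (vx (0 : Fin (t+2)) 0) ∉ Sc c vx := by rw [D1]; exact hxS
      have h2 : cc c p1 v ∉ Sc c vx := by
        rw [cc_comm (c := c) p1 v, ← h]
        exact hx'S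
      have h3 : cc c p1 (vx (0 : Fin (t+2)) 0) ≠ cc c p1 v := by
        rw [D1]
        intro hh
        apply hx'x
        rw [show cc c v w' = cc c p1 v from by rw [h, cc_comm (c := c) v p1]]
        exact hh.symm
      exact LB hvx hsc hnr hp1 hv hvp1 h1 h2 h3
    have hpin_v : ∀ l b, cc c v (vx l b) = sc c vx l := by
      intro l b
      by_cases hβ : cc c v (vx l b) ∈ Sc c vx
      · refine core_pin hvx hsc hnr hWw' hv hw'v ?_ l b hβ
        rw [cc_comm (c := c) w' v]
        exact hx'S
      · exfalso
        by_cases hβx : cc c v (vx l b) = cc c v w'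
        · have hXS : cc c p1 (vx l (b+1)) ∉ Sc c vx := by rw [D1]; exact hxS
          rcases core_hang hvx hsc hnr hp1 hv (Ne.symm hvp1) l b hXS with h | h <;>
            rw [cc_comm (c := c) (vx l b) v] at h
          · rw [D1] at h
            exact hx'x (hβx.symm.trans h)
          · exact hβ ⟨l, h.symm⟩
        · exact LB hvx hsc hnr hv hWw' hw'v hβ hx'S hβx
    have hpin_w : ∀ l b, cc c w' (vx l b) = sc c vx l := by
      intro l b
      by_cases hβ : cc c w' (vx l b) ∈ Sc c vx
      · exact core_pin hvx hsc hnr hv hWw' (Ne.symm hw'v) hx'S l b hβ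
      · exfalso
        by_cases hβx : cc c w' (vx l b) = cc c v w'
        · have hXS : cc c p1 (vx l (b+1)) ∉ Sc c vx := by rw [D1]; exact hxS
          rcases core_hang hvx hsc hnr hp1 hWw' (Ne.symm hw'p1) l b hXS with h | h <;>
            rw [cc_comm (c := c) (vx l b) w'] at h
          · rw [D1] at h
            exact hx'x (hβx.symm.trans h)
          · exact hβ ⟨l, h.symm⟩
        · refine LB hvx hsc hnr hWw' hv (Ne.symm hw'v) hβ ?_ ?_
          · rw [cc_comm (c := c) w' v]
            exact hx'S
          · rw [cc_comm (c := c) w' v]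
            exact hβx
    refine core_two_pairs hvx hsc hnr hv hWw' (Ne.symm hw'v) zero_ne_one_fin 0 0 ?_ hx'S
      (hpin_w 1 0)
    rw [cc_comm (c := c) (vx 0 0) v]
    exact hpin_v 0 0

/-- every fresh color lives at some outside vertex. -/
lemma location {φ : ℕ} (hφ : φ ∈ c '' (⊤ : SimpleGraph (Fin n)).edgeSet)
    (hS : φ ∉ Sc c vx) : ∃ v, v ∉ Wv vx ∧ φ ∈ Fv c vx v := by
  obtain ⟨e, he, rfl⟩ := hφ
  revert he hS
  refine e.ind (fun u w => ?_)
  intro he hS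
  have huw : u ≠ w := by
    rw [SimpleGraph.mem_edgeSet, SimpleGraph.top_adj] at he
    exact he
  by_cases hu : u ∈ Wv vx
  · by_cases hw : w ∈ Wv vx
    · exfalso
      obtain ⟨k, b, rfl⟩ := hu
      obtain ⟨l, b', rfl⟩ := hw
      by_cases hkl : k = l
      · subst hkl
        have hbb : b' = b + 1 := by
          rcases fin2_eq_or b b' with h | h
          · exact absurd (h ▸ rfl) huw
          · exact h
        subst hbb
        exact hS ⟨k, (cc_pair c vx k b).symm⟩
      · exact hS (LW hvx hsc hnr hkl b b')
    · exact ⟨w, hw, hS, u, huw, cc_comm c w u⟩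
  · exact ⟨u, hu, hS, w, Ne.symm huw, rfl⟩

/-- Main bound: with a rainbow matching around, at most `n` colors in total. -/
lemma main_bound (hn : 2*t+4 ≤ n) : (c '' (⊤ : SimpleGraph (Fin n)).edgeSet).ncard ≤ n := by
  classical
  set E := (⊤ : SimpleGraph (Fin n)).edgeSet with hE
  set Fresh := (c '' E) \ Sc c vx with hFr
  have hsub : c '' E ⊆ Sc c vx ∪ Fresh := by
    intro φ hφ
    by_cases h : φ ∈ Sc c vx
    · exact Or.inl h
    · exact Or.inr ⟨hφ, h⟩
  have hScard : (Sc c vx).ncard ≤ t + 2 := by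
    have h1 : Sc c vx = sc c vx '' Set.univ := by rw [Set.image_univ]; rfl
    rw [h1, Set.ncard_image_of_injective _ (fun k l h => hsc k l h), Set.ncard_univ,
      Nat.card_eq_fintype_card, Fintype.card_fin]
  have hfin1 : (Sc c vx).Finite := Set.finite_range _
  have hfin2 : Fresh.Finite := ((Set.toFinite E).image c).diff
  have hmain : (c '' E).ncard ≤ (Sc c vx).ncard + Fresh.ncard :=
    le_trans (Set.ncard_le_ncard hsub (hfin1.union hfin2)) (Set.ncard_union_le _ _)
  by_cases hdbl : ∃ u, u ∉ Wv vx ∧ ∃ x y, x ∈ Fv c vx u ∧ y ∈ Fv c vx u ∧ x ≠ y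
  · obtain ⟨u, hu, x, y, hx, hy, hxy⟩ := hdbl
    have hFsub : Fresh ⊆ {x, y} := by
      rintro φ ⟨hφE, hφS⟩
      by_contra hφ
      rw [Set.mem_insert_iff, Set.mem_singleton_iff] at hφ
      push_neg at hφ
      obtain ⟨hφx, hφy⟩ := hφ
      obtain ⟨v, hv, hφv⟩ := location hvx hsc hnr hφE hφS
      by_cases hvu : v = u
      · subst hvu
        exact P1 hvx hsc hnr hv hx hy hφv hxy (fun h => hφx h.symm) (fun h => hφy h.symm)
      · obtain ⟨hxS, wx, hwxv, rfl⟩ := hx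
        obtain ⟨hyS, wy, hwyv, rfl⟩ := hy
        by_cases hWx : wx ∈ Wv vx
        · obtain ⟨k, b, rfl⟩ := hWx
          by_cases hWy : wy ∈ Wv vx
          · obtain ⟨l, b', rfl⟩ := hWy
            have hkl : k = l := by
              by_contra hkl
              exact LA hvx hsc hnr hu hkl hxS hyS hxy
            subst hkl
            have hbb : b' = b + 1 := by
              rcases fin2_eq_or b b' with h | h
              · exact absurd (by rw [h]) hxy
              · exact h
            subst hbb
            exact LC hvx hsc hnr hu hxS hyS hxy hv hvu hφv hφx hφy
          · exact LB hvx hsc hnr hu hWy hwyv hxS hyS hxy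
        · by_cases hWy : wy ∈ Wv vx
          · obtain ⟨l, b', rfl⟩ := hWy
            exact LB hvx hsc hnr hu hWx hwxv hyS hxS (Ne.symm hxy)
          · exact LD hvx hsc hnr hu hWx hWy hwxv hwyv
              (fun h => hxy (by rw [h])) hxS hyS hxy hv hvu hφv hφx hφy
    have hFcard : Fresh.ncard ≤ 2 := by
      refine le_trans (Set.ncard_le_ncard hFsub ((Set.finite_singleton y).insert x)) ?_
      exact le_trans (Set.ncard_insert_le _ _) (by simp)
    omega
  · push_neg at hdbl
    have loc : ∀ φ, φ ∈ Fresh → ∃ v, v ∉ Wv vx ∧ φ ∈ Fv c vx v :=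
      fun φ hφ => location hvx hsc hnr hφ.1 hφ.2
    choose vf h1 h2 using loc
    have hFcard : Fresh.ncard ≤ ((Wv vx)ᶜ : Set (Fin n)).ncard := by
      refine Set.ncard_le_ncard_of_injOn
        (fun φ => if h : φ ∈ Fresh then vf φ h else vx 0 0) ?_ ?_ (Set.toFinite _)
      · intro φ hφ
        simp only [dif_pos hφ]
        exact h1 φ hφ
      · intro φ hφ φ' hφ' hee
        simp only [dif_pos hφ, dif_pos hφ'] at hee
        have e1 := h2 φ hφ
        have e2 := h2 φ' hφ'
        rw [hee] at e1
        exact hdbl (vf φ' hφ') (h1 φ' hφ') φ φ' e1 e2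
    have hW : (Wv vx).ncard = 2*t + 4 := by
      have h1 : Wv vx = (fun q : Fin (t+2) × Fin 2 => vx q.1 q.2) '' Set.univ := by
        ext z
        simp only [Set.image_univ, Set.mem_range, Prod.exists]
        exact ⟨fun ⟨k, b, h⟩ => ⟨k, b, h⟩, fun ⟨k, b, h⟩ => ⟨k, b, h⟩⟩
      rw [h1, Set.ncard_image_of_injective _ ?_, Set.ncard_univ, Nat.card_eq_fintype_card]
      · simp
        ring
      · rintro ⟨k, b⟩ ⟨l, b'⟩ h
        obtain ⟨h1, h2⟩ := hvx _ _ _ _ h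
        rw [Prod.mk.injEq]
        exact ⟨h1, h2⟩
    have hWc : ((Wv vx)ᶜ : Set (Fin n)).ncard = n - (2*t+4) := by
      have := Set.ncard_add_ncard_compl (Wv vx)
      rw [hW, Nat.card_eq_fintype_card, Fintype.card_fin] at this
      omega
    omega

end Struct

lemma pe_inj {m : ℕ} {k k' : Fin m} (h : pe m k = pe m k') : k = k' := by
  rw [pe, pe, Sym2.eq_iff] at h
  rcases h with ⟨h1, _⟩ | ⟨h1, _⟩ <;> simp only [Prod.mk.injEq] at h1
  · exact h1.1
  · exact absurd h1.2 (by decide)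

lemma mem_edgeSet_pe {m : ℕ} (k : Fin m) :
    pe m k ∈ (SimpleGraph.multiCopy m (pathGraph 2)).edgeSet := by
  rw [edgeSet_P2s]
  exact ⟨k, rfl⟩

/-- extraction of rainbow matching data from a rainbow copy of `(t+2)P₂`. -/
lemma extract {n t : ℕ} {c : Sym2 (Fin n) → ℕ}
    (h : HasRainbowCopy n c (SimpleGraph.multiCopy (t+2) (pathGraph 2))) :
    ∃ vx : Fin (t+2) → Fin 2 → Fin n,
      (∀ k b l b', vx k b = vx l b' → k = l ∧ b = b') ∧
      (∀ k l, sc c vx k = sc c vx l → k = l) := by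
  obtain ⟨f, hinj⟩ := h
  refine ⟨fun k b => f (k, b), ?_, ?_⟩
  · intro k b l b' hh
    have := f.injective hh
    rw [Prod.mk.injEq] at this
    exact this
  · intro k l hh
    have hc : (fun e => c (Sym2.map (⇑f) e)) (pe (t+2) k) =
        (fun e => c (Sym2.map (⇑f) e)) (pe (t+2) l) := hh
    exact pe_inj (hinj (mem_edgeSet_pe k) (mem_edgeSet_pe l) hc)

/-- the vertex embedding of `(t+2)P₂` into `P₄ ∪ tP₂`. -/
def psi (t : ℕ) (q : Fin (t+2) × Fin 2) : V1 t :=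
  if h : q.1.val = 0 then inl (0, ⟨q.2.val, by omega⟩)
  else if h2 : q.1.val = 1 then inl (0, ⟨q.2.val + 2, by have := q.2.isLt; omega⟩)
  else inr (⟨q.1.val - 2, by have := q.1.isLt; omega⟩, q.2)

lemma psi_inj (t : ℕ) : Function.Injective (psi t) := by
  intro q q' h
  rw [psi, psi] at h
  split_ifs at h with h1 h2 h3 h4 h5 <;>
    simp only [Sum.inl.injEq, Sum.inr.injEq, Prod.mk.injEq, Fin.mk.injEq, Fin.ext_iff,
      true_and] at h <;>
    rw [Prod.ext_iff, Fin.ext_iff, Fin.ext_iff] <;>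
    omega

/-- Transfer: a rainbow `P₄ ∪ tP₂` contains a rainbow `(t+2)P₂`. -/
lemma transfer {n t : ℕ} {c : Sym2 (Fin n) → ℕ}
    (h : HasRainbowCopy n c (kP4tP2 1 t)) :
    HasRainbowCopy n c (SimpleGraph.multiCopy (t+2) (pathGraph 2)) := by
  obtain ⟨f, hinj⟩ := h
  have hedge : ∀ k : Fin (t+2), s(psi t (k, 0), psi t (k, 1)) ∈ (kP4tP2 1 t).edgeSet := by
    intro k
    rw [SimpleGraph.mem_edgeSet]
    by_cases h1 : k.val = 0
    · rw [psi, psi]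
      simp only [h1, dif_pos]
      rw [kP4tP2]
      refine disjUnion_adj_inl_inl.mpr ⟨rfl, ?_⟩
      rw [pathGraph_adj]
      simp
    · by_cases h2 : k.val = 1
      · rw [psi, psi]
        simp only [h1, h2, dif_neg, dif_pos, if_neg, if_pos]
        rw [kP4tP2]
        refine disjUnion_adj_inl_inl.mpr ⟨rfl, ?_⟩
        rw [pathGraph_adj]
        simp
      · rw [psi, psi]
        simp only [h1, h2, dif_neg]
        rw [kP4tP2]
        refine disjUnion_adj_inr_inr.mpr ⟨rfl, ?_⟩
        rw [pathGraph_adj]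
        simp
  refine ⟨⟨fun q => f (psi t q), fun a b hab => psi_inj t (f.injective hab)⟩, ?_⟩
  intro e he e' he' hcc'
  rw [edgeSet_P2s] at he he'
  obtain ⟨k, rfl⟩ := he
  obtain ⟨k', rfl⟩ := he'
  suffices hkk : k = k' by rw [hkk]
  simp only [Function.Embedding.coeFn_mk, pe] at hcc'
  have hmap : ∀ k : Fin (t+2),
      Sym2.map (fun q => f (psi t q)) s(((k : Fin (t+2)), (0 : Fin 2)), (k, (1 : Fin 2))) =
      Sym2.map (⇑f) s(psi t (k, 0), psi t (k, 1)) := by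
    intro k
    rw [Sym2.map_pair_eq, Sym2.map_pair_eq]
  replace hcc' : c (Sym2.map (fun q => f (psi t q)) s((k, (0 : Fin 2)), (k, (1 : Fin 2)))) =
      c (Sym2.map (fun q => f (psi t q)) s((k', (0 : Fin 2)), (k', (1 : Fin 2)))) := hcc'
  rw [hmap, hmap] at hcc'
  have := hinj (hedge k) (hedge k') hcc'
  rw [Sym2.eq_iff] at this
  rcases this with ⟨ha, _⟩ | ⟨ha, _⟩
  · have := psi_inj t ha
    rw [Prod.mk.injEq] at this
    exact this.1
  · have := psi_inj t ha
    rw [Prod.mk.injEq] at this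
    exact absurd this.2 (by decide)

set_option maxHeartbeats 1000000 in
/-- the star coloring: `n` colors, no rainbow `(t+2)P₂`. -/
lemma star_coloring {n t : ℕ} (ht : 1 ≤ t) (hn : 2*t+4 ≤ n) :
    ∃ cs : Sym2 (Fin n) → ℕ, colorCount n cs = n ∧
      ¬ HasRainbowCopy n cs (SimpleGraph.multiCopy (t+2) (pathGraph 2)) := by
  have hn0 : 0 < n := by omega
  set v0 : Fin n := ⟨0, by omega⟩ with hv0
  set u1 : Fin n := ⟨1, by omega⟩ with hu1
  set u2 : Fin n := ⟨2, by omega⟩ with hu2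
  set cs : Sym2 (Fin n) → ℕ := Sym2.lift ⟨fun a b =>
      if a = v0 then (b : ℕ) else if b = v0 then (a : ℕ) else (v0 : ℕ), by
    intro a b
    dsimp only
    by_cases ha : a = v0 <;> by_cases hb : b = v0 <;> simp [ha, hb]⟩ with hcs
  have hval : ∀ a b : Fin n, cs s(a, b) =
      if a = v0 then (b : ℕ) else if b = v0 then (a : ℕ) else (v0 : ℕ) := by
    intro a b
    rw [hcs, Sym2.lift_mk]
  refine ⟨cs, ?_, ?_⟩
  · have himg : cs '' (⊤ : SimpleGraph (Fin n)).edgeSet = Set.range (Fin.val : Fin n → ℕ) := by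
      ext m
      constructor
      · rintro ⟨e, he, rfl⟩
        revert he
        refine e.ind (fun a b => ?_)
        intro he
        rw [hval]
        split_ifs
        · exact ⟨b, rfl⟩
        · exact ⟨a, rfl⟩
        · exact ⟨v0, rfl⟩
      · rintro ⟨w, rfl⟩
        by_cases hw : w = v0
        · refine ⟨s(u1, u2), ?_, ?_⟩
          · rw [SimpleGraph.mem_edgeSet, SimpleGraph.top_adj]
            intro hh
            rw [hu1, hu2, Fin.mk.injEq] at hh
            omega
          · rw [hval, if_neg, if_neg, hw]
            · intro hh
              rw [hu2, hv0, Fin.mk.injEq] at hh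
              omega
            · intro hh
              rw [hu1, hv0, Fin.mk.injEq] at hh
              omega
        · refine ⟨s(v0, w), ?_, ?_⟩
          · rw [SimpleGraph.mem_edgeSet, SimpleGraph.top_adj]
            exact fun hh => hw hh.symm
          · rw [hval, if_pos rfl]
    rw [colorCount, himg, ← Set.image_univ,
      Set.ncard_image_of_injective _ Fin.val_injective, Set.ncard_univ,
      Nat.card_eq_fintype_card, Fintype.card_fin]
  · rintro ⟨f, hinj⟩
    set bad : Fin (t+2) → Prop := fun k => f (k, 0) = v0 ∨ f (k, 1) = v0 with hbad
    have hbadU : ∀ k k', bad k → bad k' → k = k' := by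
      rintro k k' (h | h) (h' | h') <;>
        · have hf := f.injective (h.trans h'.symm)
          rw [Prod.mk.injEq] at hf
          exact hf.1
    obtain ⟨k1, k2, hk12, hg1, hg2⟩ :
        ∃ k1 k2 : Fin (t+2), k1 ≠ k2 ∧ ¬ bad k1 ∧ ¬ bad k2 := by
      have ht3 : 2 < t + 2 := by omega
      set i0 : Fin (t+2) := ⟨0, by omega⟩
      set i1 : Fin (t+2) := ⟨1, by omega⟩
      set i2 : Fin (t+2) := ⟨2, by omega⟩
      have ne01 : i0 ≠ i1 := by rw [Ne, Fin.mk.injEq]; omega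
      have ne02 : i0 ≠ i2 := by rw [Ne, Fin.mk.injEq]; omega
      have ne12 : i1 ≠ i2 := by rw [Ne, Fin.mk.injEq]; omega
      by_cases b0 : bad i0
      · exact ⟨i1, i2, ne12, fun hb => ne01 (hbadU _ _ b0 hb),
          fun hb => ne02 (hbadU _ _ b0 hb)⟩
      · by_cases b1 : bad i1
        · exact ⟨i0, i2, ne02, b0, fun hb => ne12 (hbadU _ _ b1 hb)⟩
        · exact ⟨i0, i1, ne01, b0, b1⟩
    have hcol : ∀ k, ¬ bad k → cs (Sym2.map (⇑f) (pe (t+2) k)) = (v0 : ℕ) := by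
      intro k hb
      rw [pe, Sym2.map_pair_eq, hval, if_neg (fun h => hb (Or.inl h)),
        if_neg (fun h => hb (Or.inr h))]
    have heq : (fun e => cs (Sym2.map (⇑f) e)) (pe (t+2) k1) =
        (fun e => cs (Sym2.map (⇑f) e)) (pe (t+2) k2) := by
      dsimp only
      rw [hcol k1 hg1, hcol k2 hg2]
    exact hk12 (pe_inj (hinj (mem_edgeSet_pe k1) (mem_edgeSet_pe k2) heq))

lemma const_no_rainbow_H1 {n t : ℕ} : ¬ HasRainbowCopy n (fun _ => 0) (kP4tP2 1 t) := by
  rintro ⟨f, hinj⟩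
  have h0 : eA0 t ∈ (kP4tP2 1 t).edgeSet := by
    rw [edgeSet_H1]
    exact Or.inl (Or.inl rfl)
  have h1 : eA1 t ∈ (kP4tP2 1 t).edgeSet := by
    rw [edgeSet_H1]
    exact Or.inl (Or.inr (Or.inl rfl))
  have hne : eA0 t ≠ eA1 t := by
    intro h
    rw [eA0, eA1, Sym2.eq_iff] at h
    rcases h with ⟨ha, hb⟩ | ⟨ha, hb⟩ <;>
      · rw [Sum.inl.injEq, Prod.mk.injEq] at ha
        exact absurd ha.2 (by decide)
  exact hne (hinj h0 h1 rfl)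

lemma const_no_rainbow_H2 {n t : ℕ} :
    ¬ HasRainbowCopy n (fun _ => 0) (SimpleGraph.multiCopy (t+2) (pathGraph 2)) := by
  rintro ⟨f, hinj⟩
  exact zero_ne_one_fin
    (pe_inj (hinj (mem_edgeSet_pe 0) (mem_edgeSet_pe 1) rfl))

end ARProof

open ARProof in
/-- For integers `t, n` with `t ≥ 1` and `n ≥ 2t + 4`,
`AR(n, P₄ ∪ tP₂) = AR(n, (t + 2)P₂)`. -/
theorem stmt_2 (t n : ℕ) (ht : 1 ≤ t) (hn : 2 * t + 4 ≤ n) :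
    AR n (kP4tP2 1 t) =
      AR n (SimpleGraph.multiCopy (t + 2) (SimpleGraph.pathGraph 2)) := by
  classical
  have bdd1 : BddAbove {m | ∃ c : Sym2 (Fin n) → ℕ, colorCount n c = m ∧
      ¬ HasRainbowCopy n c (kP4tP2 1 t)} := by
    refine ⟨((⊤ : SimpleGraph (Fin n)).edgeSet).ncard, ?_⟩
    rintro m ⟨c, rfl, -⟩
    exact Set.ncard_image_le (Set.toFinite _)
  have bdd2 : BddAbove {m | ∃ c : Sym2 (Fin n) → ℕ, colorCount n c = m ∧
      ¬ HasRainbowCopy n c (SimpleGraph.multiCopy (t+2) (SimpleGraph.pathGraph 2))} := by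
    refine ⟨((⊤ : SimpleGraph (Fin n)).edgeSet).ncard, ?_⟩
    rintro m ⟨c, rfl, -⟩
    exact Set.ncard_image_le (Set.toFinite _)
  have hn' : 2*t+4 ≤ n := hn
  apply le_antisymm
  · rw [AR]
    refine csSup_le ⟨_, (fun _ => 0), rfl, const_no_rainbow_H1⟩ ?_
    rintro m ⟨c, rfl, hnr⟩
    by_cases hR : HasRainbowCopy n c (SimpleGraph.multiCopy (t+2) (SimpleGraph.pathGraph 2))
    · obtain ⟨vx, hvx, hsc⟩ := extract hR
      have hb : colorCount n c ≤ n := main_bound hvx hsc hnr hn'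
      refine le_trans hb ?_
      obtain ⟨cs, hcs1, hcs2⟩ := star_coloring (n := n) (t := t) ht hn'
      rw [AR]
      exact le_csSup bdd2 ⟨cs, hcs1, hcs2⟩
    · rw [AR]
      exact le_csSup bdd2 ⟨c, rfl, hR⟩
  · rw [AR, AR]
    refine csSup_le ⟨_, (fun _ => 0), rfl, const_no_rainbow_H2⟩ ?_
    rintro m ⟨c, rfl, hnr⟩
    exact le_csSup bdd1 ⟨c, rfl, fun h => hnr (transfer h)⟩
end

section
/- For every integer k ≥ 2, there exists an edge-coloring of the complete graph K_{4k} using exactly (2k − 1)(4k − 3) + 1 colors that contains no rainbow copy of kP₄. (Such a coloring is obtained by rainbow-coloring a complete subgraph on 4k − 2 vertices and giving all remaining edges one further color.) -/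
open SimpleGraph


def myColor (k : ℕ) : Sym2 (Fin (4*k)) → ℕ :=
  Sym2.lift ⟨fun a b =>
    if (a:ℕ) < 4*k-2 ∧ (b:ℕ) < 4*k-2 then Nat.pair (min (a:ℕ) (b:ℕ)) (max (a:ℕ) (b:ℕ)) + 1 else 0,
    by intro a b; simp [min_comm, max_comm, and_comm]⟩

@[simp] lemma myColor_mk (k : ℕ) (a b : Fin (4*k)) :
    myColor k s(a,b) =
    if (a:ℕ) < 4*k-2 ∧ (b:ℕ) < 4*k-2 then Nat.pair (min (a:ℕ) (b:ℕ)) (max (a:ℕ) (b:ℕ)) + 1 else 0 := rfl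

lemma path4_nbr : ∀ a : Fin 4, ∃ b, (pathGraph 4).Adj a b := by
  simp only [pathGraph_adj]; decide

lemma path4_two : ∀ a b : Fin 4, a ≠ b → ∃ a' b',
    (pathGraph 4).Adj a a' ∧ (pathGraph 4).Adj b b' ∧ s(a,a') ≠ s(b,b') := by
  simp only [pathGraph_adj, ne_eq, Sym2.eq_iff]; decide

lemma multi_two (k : ℕ) : ∀ u v : Fin k × Fin 4, u ≠ v →
    ∃ u' v', (multiCopy k (pathGraph 4)).Adj u u' ∧ (multiCopy k (pathGraph 4)).Adj v v' ∧
      s(u,u') ≠ s(v,v') := by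
  rintro ⟨i, a⟩ ⟨j, b⟩ huv
  by_cases hij : i = j
  · subst hij
    have hab : a ≠ b := fun h => huv (by rw [h])
    obtain ⟨a', b', ha, hb, hne⟩ := path4_two a b hab
    refine ⟨(i, a'), (i, b'), ⟨rfl, ha⟩, ⟨rfl, hb⟩, ?_⟩
    simp only [ne_eq, Sym2.eq_iff, Prod.mk.injEq] at hne ⊢
    tauto
  · obtain ⟨a', ha⟩ := path4_nbr a
    obtain ⟨b', hb⟩ := path4_nbr b
    refine ⟨(i, a'), (j, b'), ⟨rfl, ha⟩, ⟨rfl, hb⟩, ?_⟩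
    simp only [ne_eq, Sym2.eq_iff, Prod.mk.injEq]
    rintro (⟨⟨h, -⟩, -⟩ | ⟨⟨h, -⟩, -⟩) <;> exact hij h

/-- For every integer `k ≥ 2`, there is an edge-coloring of `K_{4k}` using
exactly `(2k - 1)(4k - 3) + 1` colors with no rainbow copy of `kP₄`. -/
theorem stmt_8 (k : ℕ) (hk : 2 ≤ k) :
    ∃ c : Sym2 (Fin (4 * k)) → ℕ,
      colorCount (4 * k) c = (2 * k - 1) * (4 * k - 3) + 1 ∧
      ¬ HasRainbowCopy (4 * k) c
        (SimpleGraph.multiCopy k (SimpleGraph.pathGraph 4)) := by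
  have hle : 4*k-2 ≤ 4*k := by omega
  refine ⟨myColor k, ?_, ?_⟩
  · -- color count
    have hE : myColor k '' (⊤ : SimpleGraph (Fin (4*k))).edgeSet
        = insert 0 ((fun e => myColor k (Sym2.map (Fin.castLE hle) e)) ''
            (⊤ : SimpleGraph (Fin (4*k-2))).edgeSet) := by
      apply Set.Subset.antisymm
      · rintro x ⟨e, he, rfl⟩
        induction e using Sym2.ind with
        | _ a b =>
          have hab : a ≠ b := by simpa using he
          by_cases h : (a:ℕ) < 4*k-2 ∧ (b:ℕ) < 4*k-2
          · refine Set.mem_insert_iff.2 (Or.inr ⟨s(⟨(a:ℕ), h.1⟩, ⟨(b:ℕ), h.2⟩), ?_, ?_⟩)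
            · simp only [SimpleGraph.mem_edgeSet, SimpleGraph.top_adj, ne_eq]
              exact fun hh => hab (Fin.ext (by simpa using congrArg Fin.val hh))
            · have h1 : Fin.castLE hle ⟨(a:ℕ), h.1⟩ = a := Fin.ext rfl
              have h2 : Fin.castLE hle ⟨(b:ℕ), h.2⟩ = b := Fin.ext rfl
              simp [Sym2.map_pair_eq, h1, h2]
          · exact Set.mem_insert_iff.2 (Or.inl (by simp [h]))
      · rintro x (rfl | ⟨e, he, rfl⟩)
        · refine ⟨s(⟨0, by omega⟩, ⟨4*k-1, by omega⟩), ?_, ?_⟩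
          · simp only [SimpleGraph.mem_edgeSet, SimpleGraph.top_adj, ne_eq, Fin.mk.injEq]
            omega
          · rw [myColor_mk, if_neg]
            simp only [not_and]
            intro _
            simp
            omega
        · induction e using Sym2.ind with
          | _ a b =>
            have hab : a ≠ b := by simpa using he
            refine ⟨Sym2.map (Fin.castLE hle) s(a,b), ?_, rfl⟩
            rw [Sym2.map_pair_eq]
            simp only [SimpleGraph.mem_edgeSet, SimpleGraph.top_adj, ne_eq]
            exact fun hh => hab (Fin.castLE_injective hle hh)
    have h0 : (0:ℕ) ∉ (fun e => myColor k (Sym2.map (Fin.castLE hle) e)) ''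
        (⊤ : SimpleGraph (Fin (4*k-2))).edgeSet := by
      rintro ⟨e, he, hc⟩
      induction e using Sym2.ind with
      | _ a b =>
        simp only [Sym2.map_pair_eq, myColor_mk, Fin.coe_castLE] at hc
        rw [if_pos ⟨a.isLt, b.isLt⟩] at hc
        exact Nat.succ_ne_zero _ hc
    have hinj : Set.InjOn (fun e => myColor k (Sym2.map (Fin.castLE hle) e))
        (⊤ : SimpleGraph (Fin (4*k-2))).edgeSet := by
      rintro e₁ he₁ e₂ he₂ hc
      induction e₁ using Sym2.ind with
      | _ a b =>
        induction e₂ using Sym2.ind with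
        | _ x y =>
          have hab : a ≠ b := by simpa using he₁
          have hxy : x ≠ y := by simpa using he₂
          simp only [Sym2.map_pair_eq, myColor_mk, Fin.coe_castLE] at hc
          rw [if_pos ⟨a.isLt, b.isLt⟩, if_pos ⟨x.isLt, y.isLt⟩] at hc
          obtain ⟨hmin, hmax⟩ := Nat.pair_eq_pair.mp (Nat.succ_injective hc)
          have hab' : (a:ℕ) ≠ (b:ℕ) := fun h => hab (Fin.ext h)
          have hxy' : (x:ℕ) ≠ (y:ℕ) := fun h => hxy (Fin.ext h)
          rw [Sym2.eq_iff]
          have : ((a:ℕ) = x ∧ (b:ℕ) = y) ∨ ((a:ℕ) = y ∧ (b:ℕ) = x) := by omega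
          rcases this with ⟨h1, h2⟩ | ⟨h1, h2⟩
          · exact Or.inl ⟨Fin.ext h1, Fin.ext h2⟩
          · exact Or.inr ⟨Fin.ext h1, Fin.ext h2⟩
    rw [colorCount, hE, Set.ncard_insert_of_notMem h0 (Set.toFinite _),
      Set.ncard_image_of_injOn hinj]
    have hcnt : ((⊤ : SimpleGraph (Fin (4*k-2))).edgeSet).ncard = (4*k-2).choose 2 := by
      rw [← SimpleGraph.coe_edgeFinset, Set.ncard_coe_finset,
        SimpleGraph.card_edgeFinset_top_eq_card_choose_two, Fintype.card_fin]
    rw [hcnt, Nat.choose_two_right]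
    have h2 : (4*k-2) * (4*k-2-1) = 2 * ((2*k-1)*(4*k-3)) := by
      have e1 : 4*k-2 = 2*(2*k-1) := by omega
      have e2 : 2*(2*k-1)-1 = 4*k-3 := by omega
      rw [e1, e2]; ring
    rw [h2, Nat.mul_div_cancel_left _ (by norm_num)]
  · -- no rainbow copy
    rintro ⟨f, hf⟩
    have hcard : Fintype.card (Fin k × Fin 4) = Fintype.card (Fin (4*k)) := by
      simp [mul_comm]
    have hbij : Function.Bijective f :=
      (Fintype.bijective_iff_injective_and_card f).2 ⟨f.injective, hcard⟩
    obtain ⟨u, hu⟩ := hbij.surjective ⟨4*k-2, by omega⟩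
    obtain ⟨v, hv⟩ := hbij.surjective ⟨4*k-1, by omega⟩
    have huv : u ≠ v := by
      rintro rfl
      rw [hu] at hv
      have := congrArg Fin.val hv
      simp only [] at this
      omega
    obtain ⟨u', v', hau, hav, hne⟩ := multi_two k u v huv
    have hmem1 : s(u,u') ∈ (SimpleGraph.multiCopy k (SimpleGraph.pathGraph 4)).edgeSet := hau
    have hmem2 : s(v,v') ∈ (SimpleGraph.multiCopy k (SimpleGraph.pathGraph 4)).edgeSet := hav
    have hc1 : myColor k (Sym2.map f s(u,u')) = 0 := by
      rw [Sym2.map_pair_eq, myColor_mk, if_neg]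
      rw [hu]
      simp
    have hc2 : myColor k (Sym2.map f s(v,v')) = 0 := by
      rw [Sym2.map_pair_eq, myColor_mk, if_neg]
      rw [hv]
      simp
      omega
    exact hne (hf hmem1 hmem2 (hc1.trans hc2.symm))
end

section
/- It holds that AR(4, P₄) = AR(4, 2P₂), and for every integer n ≥ 5, AR(n, P₄) = AR(n, 2P₂) + 1. -/
open SimpleGraph

lemma P4_edgeSet : (pathGraph 4).edgeSet = {s(0,1), s(1,2), s(2,3)} := by
  ext e
  induction e using Sym2.ind with
  | _ a b =>
    simp only [SimpleGraph.mem_edgeSet, pathGraph_adj, Set.mem_insert_iff, Set.mem_singleton_iff,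
      Sym2.eq, Sym2.rel_iff']
    fin_cases a <;> fin_cases b <;> simp [Prod.ext_iff, Fin.ext_iff] <;> decide

lemma twoP2_edgeSet : (SimpleGraph.multiCopy 2 (pathGraph 2)).edgeSet =
    {s(((0:Fin 2),(0:Fin 2)),((0:Fin 2),(1:Fin 2))), s(((1:Fin 2),(0:Fin 2)),((1:Fin 2),(1:Fin 2)))} := by
  ext e
  induction e using Sym2.ind with
  | _ a b =>
    simp only [SimpleGraph.mem_edgeSet, SimpleGraph.multiCopy, pathGraph_adj,
      Set.mem_insert_iff, Set.mem_singleton_iff, Sym2.eq, Sym2.rel_iff']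
    fin_cases a <;> fin_cases b <;> simp [Prod.ext_iff, Fin.ext_iff] <;> decide

lemma rainbowP4_of {n : ℕ} {c : Sym2 (Fin n) → ℕ} {p q r s : Fin n}
    (hpq : p≠q) (hpr : p≠r) (hps : p≠s) (hqr : q≠r) (hqs : q≠s) (hrs : r≠s)
    (h1 : c s(p,q) ≠ c s(q,r)) (h2 : c s(q,r) ≠ c s(r,s)) (h3 : c s(p,q) ≠ c s(r,s)) :
    HasRainbowCopy n c (SimpleGraph.pathGraph 4) := by
  refine ⟨⟨![p,q,r,s], ?_⟩, ?_⟩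
  · intro i j hij
    fin_cases i <;> fin_cases j <;> simp_all
  · intro e he e' he' hcc
    rw [P4_edgeSet] at he he'
    simp only [Set.mem_insert_iff, Set.mem_singleton_iff] at he he'
    rcases he with rfl|rfl|rfl <;> rcases he' with rfl|rfl|rfl <;>
      simp_all [Sym2.map_pair_eq] <;>
      first | exact h1 hcc | exact h1 hcc.symm | exact h2 hcc | exact h2 hcc.symm | exact h3 hcc | exact h3 hcc.symm

lemma rainbow2P2_of {n : ℕ} {c : Sym2 (Fin n) → ℕ} {p q r s : Fin n}
    (hpq : p≠q) (hpr : p≠r) (hps : p≠s) (hqr : q≠r) (hqs : q≠s) (hrs : r≠s)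
    (h1 : c s(p,q) ≠ c s(r,s)) :
    HasRainbowCopy n c (SimpleGraph.multiCopy 2 (SimpleGraph.pathGraph 2)) := by
  refine ⟨⟨fun x => ![![p,q],![r,s]] x.1 x.2, ?_⟩, ?_⟩
  · rintro ⟨i,j⟩ ⟨k,l⟩ h
    fin_cases i <;> fin_cases j <;> fin_cases k <;> fin_cases l <;> simp_all
  · intro e he e' he' hcc
    rw [twoP2_edgeSet] at he he'
    simp only [Set.mem_insert_iff, Set.mem_singleton_iff] at he he'
    rcases he with rfl|rfl <;> rcases he' with rfl|rfl <;>
      simp_all [Sym2.map_pair_eq]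

lemma not_rainbowP4 {n : ℕ} {c : Sym2 (Fin n) → ℕ}
    (h : ∀ f : Fin 4 → Fin n, Function.Injective f →
      c s(f 0, f 1) = c s(f 1, f 2) ∨ c s(f 1, f 2) = c s(f 2, f 3) ∨
        c s(f 0, f 1) = c s(f 2, f 3)) :
    ¬ HasRainbowCopy n c (SimpleGraph.pathGraph 4) := by
  rintro ⟨f, hf⟩
  have h01 : s((0:Fin 4),1) ∈ (pathGraph 4).edgeSet := by rw [P4_edgeSet]; simp
  have h12 : s((1:Fin 4),2) ∈ (pathGraph 4).edgeSet := by rw [P4_edgeSet]; simp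
  have h23 : s((2:Fin 4),3) ∈ (pathGraph 4).edgeSet := by rw [P4_edgeSet]; simp
  rcases h f f.injective with hc|hc|hc
  · have := hf h01 h12 (by simpa [Sym2.map_pair_eq] using hc)
    simp [Sym2.eq, Sym2.rel_iff'] at this
  · have := hf h12 h23 (by simpa [Sym2.map_pair_eq] using hc)
    simp [Sym2.eq, Sym2.rel_iff'] at this
  · have := hf h01 h23 (by simpa [Sym2.map_pair_eq] using hc)
    simp [Sym2.eq, Sym2.rel_iff'] at this

lemma not_rainbow2P2 {n : ℕ} {c : Sym2 (Fin n) → ℕ}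
    (h : ∀ f : Fin 2 × Fin 2 → Fin n, Function.Injective f →
      c s(f (0,0), f (0,1)) = c s(f (1,0), f (1,1))) :
    ¬ HasRainbowCopy n c (SimpleGraph.multiCopy 2 (SimpleGraph.pathGraph 2)) := by
  rintro ⟨f, hf⟩
  have h1 : s(((0:Fin 2),(0:Fin 2)),((0:Fin 2),(1:Fin 2))) ∈
      (SimpleGraph.multiCopy 2 (pathGraph 2)).edgeSet := by rw [twoP2_edgeSet]; simp
  have h2 : s(((1:Fin 2),(0:Fin 2)),((1:Fin 2),(1:Fin 2))) ∈
      (SimpleGraph.multiCopy 2 (pathGraph 2)).edgeSet := by rw [twoP2_edgeSet]; simp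
  have := hf h1 h2 (by simpa [Sym2.map_pair_eq] using h f f.injective)
  simp [Sym2.eq, Sym2.rel_iff', Prod.ext_iff] at this

lemma nrP4 {n : ℕ} {c : Sym2 (Fin n) → ℕ}
    (h : ¬ HasRainbowCopy n c (SimpleGraph.pathGraph 4)) :
    ∀ p q r s : Fin n, p≠q → p≠r → p≠s → q≠r → q≠s → r≠s →
      (c s(p,q) = c s(q,r) ∨ c s(q,r) = c s(r,s) ∨ c s(p,q) = c s(r,s)) := by
  intro p q r s hpq hpr hps hqr hqs hrs
  by_contra hc
  push_neg at hc
  exact h (rainbowP4_of hpq hpr hps hqr hqs hrs hc.1 hc.2.1 hc.2.2)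

lemma nr2P2 {n : ℕ} {c : Sym2 (Fin n) → ℕ}
    (h : ¬ HasRainbowCopy n c (SimpleGraph.multiCopy 2 (SimpleGraph.pathGraph 2))) :
    ∀ p q r s : Fin n, p≠q → p≠r → p≠s → q≠r → q≠s → r≠s →
      c s(p,q) = c s(r,s) := by
  intro p q r s hpq hpr hps hqr hqs hrs
  by_contra hc
  exact h (rainbow2P2_of hpq hpr hps hqr hqs hrs hc)

/-- two fresh vertices avoiding a small finset -/

lemma two_fresh {n : ℕ} (hn : 5 ≤ n) (T : Finset (Fin n)) (hT : T.card ≤ 3) :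
    ∃ x y : Fin n, x ≠ y ∧ x ∉ T ∧ y ∉ T := by
  have hcard : 1 < (Finset.univ \ T).card := by
    rw [Finset.card_sdiff_of_subset (Finset.subset_univ _)]
    simp only [Finset.card_univ, Fintype.card_fin]
    omega
  obtain ⟨x, hx, y, hy, hxy⟩ := Finset.one_lt_card.mp hcard
  rw [Finset.mem_sdiff] at hx hy
  exact ⟨x, y, hxy, hx.2, hy.2⟩

lemma card3 {α : Type*} [DecidableEq α] (a b d : α) : ({a,b,d} : Finset α).card ≤ 3 :=
  le_trans (Finset.card_insert_le _ _)
    (Nat.succ_le_succ (le_trans (Finset.card_insert_le _ _) (by simp)))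

/-- upper bound for 2P2, n ≥ 5: all edges have the same color -/

lemma allEq2P2 {n : ℕ} (hn : 5 ≤ n) {c : Sym2 (Fin n) → ℕ}
    (h : ¬ HasRainbowCopy n c (SimpleGraph.multiCopy 2 (SimpleGraph.pathGraph 2))) :
    ∀ p q x y : Fin n, p ≠ q → x ≠ y → c s(p,q) = c s(x,y) := by
  intro p q x y hpq hxy
  by_cases hall : p ≠ x ∧ p ≠ y ∧ q ≠ x ∧ q ≠ y
  · exact nr2P2 h p q x y hpq hall.1 hall.2.1 hall.2.2.1 hall.2.2.2 hxy
  · have hT : ({p,q,x,y} : Finset (Fin n)).card ≤ 3 := by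
      push_neg at hall
      have hsub : ∃ T : Finset (Fin n), ({p,q,x,y} : Finset (Fin n)) ⊆ T ∧ T.card ≤ 3 := by
        by_cases h1 : p = x
        · exact ⟨{p,q,y}, by intro a; subst h1; simp <;> tauto,
            card3 _ _ _⟩
        · by_cases h2 : p = y
          · exact ⟨{p,q,x}, by intro a; subst h2; simp <;> tauto,
              card3 _ _ _⟩
          · by_cases h3 : q = x
            · exact ⟨{p,q,y}, by intro a; subst h3; simp <;> tauto,
                card3 _ _ _⟩
            · have h4 : q = y := by tauto
              exact ⟨{p,q,x}, by intro a; subst h4; simp <;> tauto,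
                card3 _ _ _⟩
      obtain ⟨T, hsub, hc⟩ := hsub
      exact le_trans (Finset.card_le_card hsub) hc
    obtain ⟨z, w, hzw, hz, hw⟩ := two_fresh hn _ hT
    simp only [Finset.mem_insert, Finset.mem_singleton, not_or] at hz hw
    have e1 : c s(p,q) = c s(z,w) :=
      nr2P2 h p q z w hpq (Ne.symm hz.1) (Ne.symm hw.1) (Ne.symm hz.2.1) (Ne.symm hw.2.1) hzw
    have e2 : c s(x,y) = c s(z,w) :=
      nr2P2 h x y z w hxy (Ne.symm hz.2.2.1) (Ne.symm hw.2.2.1) (Ne.symm hz.2.2.2)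
        (Ne.symm hw.2.2.2) hzw
    rw [e1, e2]

lemma twoColorsP4 {n : ℕ} (hn : 5 ≤ n) {c : Sym2 (Fin n) → ℕ}
    (h : ¬ HasRainbowCopy n c (SimpleGraph.pathGraph 4))
    {u v w : Fin n} (huv : u ≠ v) (hvw : v ≠ w) (huw : u ≠ w)
    (hAB : c s(u,v) ≠ c s(v,w)) :
    ∀ p q : Fin n, p ≠ q → c s(p,q) = c s(u,v) ∨ c s(p,q) = c s(v,w) := by
  have NR := nrP4 h
  have swap : ∀ a b : Fin n, s(a,b) = s(b,a) := fun a b => Sym2.eq_swap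
  have F1 : ∀ x : Fin n, x ≠ u → x ≠ v → x ≠ w →
      c s(w,x) = c s(u,v) ∨ c s(w,x) = c s(v,w) := by
    intro x hxu hxv hxw
    rcases NR u v w x huv huw (Ne.symm hxu) hvw (Ne.symm hxv) (Ne.symm hxw) with h'|h'|h'
    · exact absurd h' hAB
    · exact Or.inr h'.symm
    · exact Or.inl h'.symm
  have F2 : ∀ x : Fin n, x ≠ u → x ≠ v → x ≠ w →
      c s(u,x) = c s(u,v) ∨ c s(u,x) = c s(v,w) := by
    intro x hxu hxv hxw
    rcases NR w v u x (Ne.symm hvw) (Ne.symm huw) (Ne.symm hxw) (Ne.symm huv) (Ne.symm hxv)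
        (Ne.symm hxu) with h'|h'|h'
    · rw [swap w v, swap v u] at h'; exact absurd h'.symm hAB
    · rw [swap v u] at h'; exact Or.inl h'.symm
    · rw [swap w v] at h'; exact Or.inr h'.symm
  by_cases hD : c s(u,w) = c s(u,v) ∨ c s(u,w) = c s(v,w)
  · -- main case
    have F6 : ∀ x : Fin n, x ≠ u → x ≠ v → x ≠ w →
        c s(v,x) = c s(u,v) ∨ c s(v,x) = c s(v,w) := by
      intro x hxu hxv hxw
      rcases hD with hD'|hD'
      · rcases NR x v w u hxv hxw hxu hvw (Ne.symm huv) (Ne.symm huw) with h'|h'|h'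
        · rw [swap x v] at h'; exact Or.inr h'
        · rw [swap w u, hD'] at h'; exact absurd h'.symm hAB
        · rw [swap x v, swap w u, hD'] at h'; exact Or.inl h'
      · rcases NR x v u w hxv hxu hxw (Ne.symm huv) hvw huw with h'|h'|h'
        · rw [swap x v, swap v u] at h'; exact Or.inl h'
        · rw [swap v u, hD'] at h'; exact absurd h' hAB
        · rw [swap x v, hD'] at h'; exact Or.inr h'
    have F7 : ∀ x y : Fin n, x ≠ u → x ≠ v → x ≠ w → y ≠ u → y ≠ v → y ≠ w → x ≠ y →
        c s(x,y) = c s(u,v) ∨ c s(x,y) = c s(v,w) := by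
      intro x y hxu hxv hxw hyu hyv hyw hxy
      rcases F2 x hxu hxv hxw with hux|hux
      · rcases F1 x hxu hxv hxw with hwx|hwx
        · rcases NR v w x y hvw (Ne.symm hxv) (Ne.symm hyv) (Ne.symm hxw) (Ne.symm hyw) hxy
              with h'|h'|h'
          · rw [hwx] at h'; exact absurd h'.symm hAB
          · rw [hwx] at h'; exact Or.inl h'.symm
          · exact Or.inr h'.symm
        · rcases hD with hD'|hD'
          · rcases NR y x w u (Ne.symm hxy) hyw hyu hxw hxu (Ne.symm huw) with h'|h'|h'
            · rw [swap y x, swap x w, hwx] at h'; exact Or.inr h'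
            · rw [swap x w, hwx, swap w u, hD'] at h'; exact absurd h'.symm hAB
            · rw [swap y x, swap w u, hD'] at h'; exact Or.inl h'
          · rcases NR y x u w (Ne.symm hxy) hyu hyw hxu hxw huw with h'|h'|h'
            · rw [swap y x, swap x u, hux] at h'; exact Or.inl h'
            · rw [swap x u, hux, hD'] at h'; exact absurd h' hAB
            · rw [swap y x, hD'] at h'; exact Or.inr h'
      · rcases NR v u x y (Ne.symm huv) (Ne.symm hxv) (Ne.symm hyv) (Ne.symm hxu) (Ne.symm hyu)
            hxy with h'|h'|h'
        · rw [swap v u, hux] at h'; exact absurd h' hAB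
        · rw [hux] at h'; exact Or.inr h'.symm
        · rw [swap v u] at h'; exact Or.inl h'.symm
    intro p q hpq
    have classify : ∀ z : Fin n, z = u ∨ z = v ∨ z = w ∨ (z ≠ u ∧ z ≠ v ∧ z ≠ w) := by
      intro z
      by_cases h1 : z = u; · tauto
      by_cases h2 : z = v; · tauto
      by_cases h3 : z = w; · tauto
      tauto
    rcases classify p with hp|hp|hp|⟨hpu, hpv, hpw⟩ <;>
      rcases classify q with hq|hq|hq|⟨hqu, hqv, hqw⟩
    · exact absurd (hp.trans hq.symm) hpq
    · rw [hp, hq]; exact Or.inl rfl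
    · rw [hp, hq]; exact hD
    · rw [hp]; exact F2 q hqu hqv hqw
    · rw [hp, hq, swap v u]; exact Or.inl rfl
    · exact absurd (hp.trans hq.symm) hpq
    · rw [hp, hq]; exact Or.inr rfl
    · rw [hp]; exact F6 q hqu hqv hqw
    · rw [hp, hq, swap w u]; exact hD
    · rw [hp, hq, swap w v]; exact Or.inr rfl
    · exact absurd (hp.trans hq.symm) hpq
    · rw [hp]; exact F1 q hqu hqv hqw
    · rw [hq, swap p u]; exact F2 p hpu hpv hpw
    · rw [hq, swap p v]; exact F6 p hpu hpv hpw
    · rw [hq, swap p w]; exact F1 p hpu hpv hpw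
    · exact F7 p q hpu hpv hpw hqu hqv hqw hpq
  · -- impossible case
    exfalso
    push_neg at hD
    obtain ⟨hDA, hDB⟩ := hD
    obtain ⟨x, y, hxy, hx, hy⟩ := two_fresh hn {u,v,w} (card3 u v w)
    simp only [Finset.mem_insert, Finset.mem_singleton, not_or] at hx hy
    obtain ⟨hxu, hxv, hxw⟩ := hx
    obtain ⟨hyu, hyv, hyw⟩ := hy
    replace hxu : x ≠ u := hxu
    replace hxv : x ≠ v := hxv
    replace hxw : x ≠ w := hxw
    replace hyu : y ≠ u := hyu
    replace hyv : y ≠ v := hyv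
    replace hyw : y ≠ w := hyw
    have F3 : ∀ z : Fin n, z ≠ u → z ≠ v → z ≠ w → c s(w,z) = c s(u,v) := by
      intro z hzu hzv hzw
      rcases F1 z hzu hzv hzw with h'|h'
      · exact h'
      exfalso
      rcases NR v u w z (Ne.symm huv) hvw (Ne.symm hzv) huw (Ne.symm hzu) (Ne.symm hzw)
          with h''|h''|h''
      · rw [swap v u] at h''; exact hDA h''.symm
      · exact hDB (h''.trans h')
      · rw [swap v u] at h''; exact hAB (h''.trans h')
    have F4 : ∀ z : Fin n, z ≠ u → z ≠ v → z ≠ w → c s(u,z) = c s(v,w) := by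
      intro z hzu hzv hzw
      rcases F2 z hzu hzv hzw with h'|h'
      swap
      · exact h'
      exfalso
      rcases NR v w u z hvw (Ne.symm huv) (Ne.symm hzv) (Ne.symm huw) (Ne.symm hzw)
          (Ne.symm hzu) with h''|h''|h''
      · rw [swap w u] at h''; exact hDB h''.symm
      · rw [swap w u] at h''; exact hDA (h''.trans h')
      · exact hAB (h''.trans h').symm
    have F5 : ∀ z : Fin n, z ≠ u → z ≠ v → z ≠ w → c s(v,z) = c s(u,w) := by
      intro z hzu hzv hzw
      have n1 := NR z v u w hzv hzu hzw (Ne.symm huv) hvw huw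
      have n2 := NR z v w u hzv hzw hzu hvw (Ne.symm huv) (Ne.symm huw)
      rw [swap z v, swap v u] at n1
      rw [swap z v, swap w u] at n2
      rcases n1 with h1|h1|h1
      · rcases n2 with h2|h2|h2
        · exact absurd (h1.symm.trans h2) hAB
        · exact absurd h2.symm hDB
        · exact h2
      · exact absurd h1.symm hDA
      · exact h1
    have hvx := F5 x hxu hxv hxw
    have hux := F4 x hxu hxv hxw
    have huy := F4 y hyu hyv hyw
    have hwy := F3 y hyu hyv hyw
    have n1 := NR v x y u (Ne.symm hxv) (Ne.symm hyv) (Ne.symm huv) hxy hxu hyu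
    rw [swap y u, hvx, huy] at n1
    have n2 := NR v x y w (Ne.symm hxv) (Ne.symm hyv) hvw hxy hxw hyw
    rw [swap y w, hvx, hwy] at n2
    rcases n1 with m1|m1|m1
    · have n3 := NR u x y w (Ne.symm hxu) (Ne.symm hyu) huw hxy hxw hyw
      rw [swap y w, hux, hwy, ← m1] at n3
      rcases n3 with m3|m3|m3
      · exact hDB m3.symm
      · exact hDA m3
      · exact hAB m3.symm
    · rcases n2 with m2|m2|m2
      · exact hDB (m2.trans m1)
      · exact hAB (m2.symm.trans m1)
      · exact hDA m2
    · exact hDB m1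

lemma edge_rep {n : ℕ} : ∀ e : Sym2 (Fin n), e ∈ (⊤ : SimpleGraph (Fin n)).edgeSet →
    ∃ p q : Fin n, p ≠ q ∧ e = s(p,q) := fun e =>
  Sym2.ind (fun p q he => ⟨p, q, by simpa using he, rfl⟩) e

lemma ub2P2 {n : ℕ} (hn : 5 ≤ n) {c : Sym2 (Fin n) → ℕ}
    (h : ¬ HasRainbowCopy n c (SimpleGraph.multiCopy 2 (SimpleGraph.pathGraph 2))) :
    colorCount n c ≤ 1 := by
  have h01 : (⟨0, by omega⟩ : Fin n) ≠ ⟨1, by omega⟩ := by simp [Fin.ext_iff]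
  have hsub : c '' (⊤ : SimpleGraph (Fin n)).edgeSet ⊆ {c s(⟨0, by omega⟩, ⟨1, by omega⟩)} := by
    rintro _ ⟨e, he, rfl⟩
    obtain ⟨p, q, hpq, rfl⟩ := edge_rep e he
    exact allEq2P2 hn h p q _ _ hpq h01
  calc colorCount n c ≤ ({c s(⟨0, by omega⟩, ⟨1, by omega⟩)} : Set ℕ).ncard :=
        Set.ncard_le_ncard hsub (Set.finite_singleton _)
    _ = 1 := Set.ncard_singleton _

lemma ubP4 {n : ℕ} (hn : 5 ≤ n) {c : Sym2 (Fin n) → ℕ}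
    (h : ¬ HasRainbowCopy n c (SimpleGraph.pathGraph 4)) :
    colorCount n c ≤ 2 := by
  have swap : ∀ a b : Fin n, s(a,b) = s(b,a) := fun a b => Sym2.eq_swap
  by_cases hmono : ∀ e ∈ (⊤ : SimpleGraph (Fin n)).edgeSet,
      ∀ e' ∈ (⊤ : SimpleGraph (Fin n)).edgeSet, c e = c e'
  · have h01 : (⟨0, by omega⟩ : Fin n) ≠ ⟨1, by omega⟩ := by simp [Fin.ext_iff]
    have he0 : s((⟨0, by omega⟩ : Fin n), (⟨1, by omega⟩ : Fin n)) ∈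
        (⊤ : SimpleGraph (Fin n)).edgeSet := by simpa using h01
    have hsub : c '' (⊤ : SimpleGraph (Fin n)).edgeSet ⊆
        {c s(⟨0, by omega⟩, ⟨1, by omega⟩)} := by
      rintro _ ⟨e, he, rfl⟩
      exact hmono e he _ he0
    calc colorCount n c ≤ ({c s((⟨0, by omega⟩ : Fin n), ⟨1, by omega⟩)} : Set ℕ).ncard :=
          Set.ncard_le_ncard hsub (Set.finite_singleton _)
      _ ≤ 2 := by rw [Set.ncard_singleton]; omega
  · push_neg at hmono
    obtain ⟨e, he, e', he', hne⟩ := hmono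
    obtain ⟨p, q, hpq, rfl⟩ := edge_rep e he
    obtain ⟨x, y, hxy, rfl⟩ := edge_rep e' he'
    -- find an adjacent bichromatic pair
    have key : ∃ a b d : Fin n, a ≠ b ∧ b ≠ d ∧ a ≠ d ∧ c s(a,b) ≠ c s(b,d) := by
      by_cases h1 : p = x
      · subst h1
        have hqy : q ≠ y := by rintro rfl; exact hne rfl
        exact ⟨q, p, y, hpq.symm, hxy, hqy, by rwa [swap q p]⟩
      · by_cases h2 : p = y
        · subst h2
          have hqx : q ≠ x := by rintro rfl; exact hne (swap _ _ ▸ rfl)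
          exact ⟨q, p, x, hpq.symm, h1, hqx, by
            rw [swap q p, swap p x]; exact hne⟩
        · by_cases h3 : q = x
          · subst h3
            have hpy : p ≠ y := h2
            exact ⟨p, q, y, hpq, hxy, hpy, hne⟩
          · by_cases h4 : q = y
            · subst h4
              exact ⟨p, q, x, hpq, h3, h1, by rw [swap q x]; exact hne⟩
            · by_cases hmid : c s(q,x) = c s(p,q)
              · exact ⟨q, x, y, h3, hxy, h4, by rw [hmid]; exact hne⟩
              · exact ⟨p, q, x, hpq, h3, h1, fun hh => hmid hh.symm⟩
    obtain ⟨a, b, d, hab, hbd, had, hcc⟩ := key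
    have main := twoColorsP4 hn h hab hbd had hcc
    have hsub : c '' (⊤ : SimpleGraph (Fin n)).edgeSet ⊆ {c s(a,b), c s(b,d)} := by
      rintro _ ⟨e, he, rfl⟩
      obtain ⟨p', q', hpq', rfl⟩ := edge_rep e he
      exact main p' q' hpq'
    calc colorCount n c ≤ ({c s(a,b), c s(b,d)} : Set ℕ).ncard :=
          Set.ncard_le_ncard hsub (Set.toFinite _)
      _ ≤ 2 := by
          refine le_trans (Set.ncard_insert_le _ _) ?_
          rw [Set.ncard_singleton]

lemma mem2P2 {n : ℕ} (hn : 5 ≤ n) :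
    ∃ c : Sym2 (Fin n) → ℕ, colorCount n c = 1 ∧
      ¬ HasRainbowCopy n c (SimpleGraph.multiCopy 2 (SimpleGraph.pathGraph 2)) := by
  refine ⟨fun _ => 0, ?_, not_rainbow2P2 (fun f hf => rfl)⟩
  have h01 : (⟨0, by omega⟩ : Fin n) ≠ ⟨1, by omega⟩ := by simp [Fin.ext_iff]
  have : (fun _ => 0 : Sym2 (Fin n) → ℕ) '' (⊤ : SimpleGraph (Fin n)).edgeSet = {0} := by
    apply Set.eq_singleton_iff_unique_mem.mpr
    constructor
    · exact ⟨s(⟨0, by omega⟩, ⟨1, by omega⟩), by simpa using h01, rfl⟩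
    · rintro x ⟨e, he, rfl⟩; rfl
  rw [colorCount, this, Set.ncard_singleton]

lemma memP4 {n : ℕ} (hn : 5 ≤ n) :
    ∃ c : Sym2 (Fin n) → ℕ, colorCount n c = 2 ∧
      ¬ HasRainbowCopy n c (SimpleGraph.pathGraph 4) := by
  set sp : Sym2 (Fin n) := s(⟨0, by omega⟩, ⟨1, by omega⟩) with hsp
  refine ⟨fun e => if e = sp then 1 else 0, ?_, ?_⟩
  · have h01 : (⟨0, by omega⟩ : Fin n) ≠ ⟨1, by omega⟩ := by simp [Fin.ext_iff]
    have h23 : (⟨2, by omega⟩ : Fin n) ≠ ⟨3, by omega⟩ := by simp [Fin.ext_iff]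
    have hne : s((⟨2, by omega⟩ : Fin n), (⟨3, by omega⟩ : Fin n)) ≠ sp := by
      rw [hsp]
      simp [Sym2.eq_iff, Fin.ext_iff]
    have : (fun e => if e = sp then 1 else 0) '' (⊤ : SimpleGraph (Fin n)).edgeSet
        = {0, 1} := by
      apply Set.Subset.antisymm
      · rintro x ⟨e, he, rfl⟩
        by_cases h : e = sp <;> simp [h]
      · rintro x hx
        rcases hx with rfl|rfl
        · exact ⟨s(⟨2, by omega⟩, ⟨3, by omega⟩), by simpa using h23, if_neg hne⟩
        · exact ⟨sp, by rw [hsp]; simpa using h01, if_pos rfl⟩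
    rw [colorCount, this, Set.ncard_pair (by norm_num : (0:ℕ) ≠ 1)]
  · apply not_rainbowP4
    intro f hf
    have d01 : s(f 0, f 1) ≠ s(f 1, f 2) := by
      rw [ne_eq, Sym2.eq_iff]
      push_neg
      constructor
      · intro h; exact absurd (hf h) (by decide)
      · intro h _; exact absurd (hf h) (by decide)
    have d12 : s(f 1, f 2) ≠ s(f 2, f 3) := by
      rw [ne_eq, Sym2.eq_iff]
      push_neg
      constructor
      · intro h; exact absurd (hf h) (by decide)
      · intro h _; exact absurd (hf h) (by decide)
    have d02 : s(f 0, f 1) ≠ s(f 2, f 3) := by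
      rw [ne_eq, Sym2.eq_iff]
      push_neg
      constructor
      · intro h; exact absurd (hf h) (by decide)
      · intro h _; exact absurd (hf h) (by decide)
    by_cases hE2 : s(f 1, f 2) = sp
    · have hE1 : s(f 0, f 1) ≠ sp := fun hh => d01 (hh.trans hE2.symm)
      have hE3 : s(f 2, f 3) ≠ sp := fun hh => d12 (hE2.trans hh.symm)
      exact Or.inr (Or.inr (by rw [if_neg hE1, if_neg hE3]))
    · by_cases hE1 : s(f 0, f 1) = sp
      · have hE3 : s(f 2, f 3) ≠ sp := fun hh => d02 (hE1.trans hh.symm)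
        exact Or.inr (Or.inl (by rw [if_neg hE2, if_neg hE3]))
      · exact Or.inl (by rw [if_neg hE1, if_neg hE2])

set_option maxRecDepth 4000 in
noncomputable def cx : Sym2 (Fin 4) → ℕ :=
  Sym2.lift ⟨fun a b => a.val ^^^ b.val, fun a b => Nat.xor_comm _ _⟩

lemma cx_eval (a b : Fin 4) : cx s(a,b) = a.val ^^^ b.val := rfl

lemma cx_count : colorCount 4 cx = 3 := by
  have himg : cx '' (⊤ : SimpleGraph (Fin 4)).edgeSet = {1, 2, 3} := by
    apply Set.Subset.antisymm
    · rintro x ⟨e, he, rfl⟩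
      obtain ⟨p, q, hpq, rfl⟩ := edge_rep e he
      rw [cx_eval]
      have : ∀ a b : Fin 4, a ≠ b → (a.val ^^^ b.val = 1 ∨ a.val ^^^ b.val = 2 ∨
          a.val ^^^ b.val = 3) := by decide
      rcases this p q hpq with h|h|h <;> simp [h]
    · rintro x hx
      rcases hx with rfl|rfl|rfl
      · exact ⟨s(0,1), by simp, rfl⟩
      · exact ⟨s(0,2), by simp, rfl⟩
      · exact ⟨s(0,3), by simp, rfl⟩
  rw [colorCount, himg]
  rw [Set.ncard_eq_three]
  exact ⟨1, 2, 3, by norm_num, by norm_num, by norm_num, rfl⟩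

set_option maxRecDepth 4000 in
lemma cx_noP4 : ¬ HasRainbowCopy 4 cx (SimpleGraph.pathGraph 4) := by
  apply not_rainbowP4
  intro f hf
  refine Or.inr (Or.inr ?_)
  rw [cx_eval, cx_eval]
  revert hf
  revert f
  decide

set_option maxRecDepth 4000 in
lemma cx_no2P2 : ¬ HasRainbowCopy 4 cx (SimpleGraph.multiCopy 2 (SimpleGraph.pathGraph 2)) := by
  apply not_rainbow2P2
  intro f hf
  rw [cx_eval, cx_eval]
  revert hf
  revert f
  decide

lemma K4cover {c : Sym2 (Fin 4) → ℕ} {S : Set ℕ}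
    (h01 : c s(0,1) ∈ S) (h02 : c s(0,2) ∈ S) (h03 : c s(0,3) ∈ S)
    (h12 : c s(1,2) ∈ S) (h13 : c s(1,3) ∈ S) (h23 : c s(2,3) ∈ S) :
    c '' (⊤ : SimpleGraph (Fin 4)).edgeSet ⊆ S := by
  rintro x ⟨e, he, rfl⟩
  obtain ⟨p, q, hpq, rfl⟩ := edge_rep e he
  fin_cases p <;> fin_cases q <;>
    first
      | exact absurd rfl hpq
      | assumption
      | (rw [Sym2.eq_swap]; assumption)

lemma ncard3_le {x y z : ℕ} : ({x, y, z} : Set ℕ).ncard ≤ 3 := by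
  refine le_trans (Set.ncard_insert_le _ _) ?_
  have : ({y, z} : Set ℕ).ncard ≤ 2 := by
    refine le_trans (Set.ncard_insert_le _ _) ?_
    rw [Set.ncard_singleton]
  omega

lemma ncard2_le {x y : ℕ} : ({x, y} : Set ℕ).ncard ≤ 2 := by
  refine le_trans (Set.ncard_insert_le _ _) ?_
  rw [Set.ncard_singleton]

lemma ub2P2_4 {c : Sym2 (Fin 4) → ℕ}
    (h : ¬ HasRainbowCopy 4 c (SimpleGraph.multiCopy 2 (SimpleGraph.pathGraph 2))) :
    colorCount 4 c ≤ 3 := by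
  have e23 : c s(2,3) = c s(0,1) :=
    nr2P2 h 2 3 0 1 (by decide) (by decide) (by decide) (by decide) (by decide) (by decide)
  have e13 : c s(1,3) = c s(0,2) :=
    nr2P2 h 1 3 0 2 (by decide) (by decide) (by decide) (by decide) (by decide) (by decide)
  have e12 : c s(1,2) = c s(0,3) :=
    nr2P2 h 1 2 0 3 (by decide) (by decide) (by decide) (by decide) (by decide) (by decide)
  have hsub := K4cover (S := {c s(0,1), c s(0,2), c s(0,3)})
    (by left; rfl) (by right; left; rfl) (by right; right; rfl)
    (by rw [e12]; right; right; rfl) (by rw [e13]; right; left; rfl)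
    (by rw [e23]; left; rfl)
  exact le_trans (Set.ncard_le_ncard hsub (Set.toFinite _)) ncard3_le

lemma cross {n : ℕ} {c : Sym2 (Fin n) → ℕ}
    (h : ¬ HasRainbowCopy n c (SimpleGraph.pathGraph 4)) {p q r t : Fin n}
    (hpq : p≠q) (hpr : p≠r) (hpt : p≠t) (hqr : q≠r) (hqt : q≠t) (hrt : r≠t)
    (hAB : c s(p,q) ≠ c s(r,t)) :
    (c s(q,r) = c s(p,q) ∨ c s(q,r) = c s(r,t)) ∧
    (c s(q,t) = c s(p,q) ∨ c s(q,t) = c s(r,t)) ∧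
    (c s(p,r) = c s(p,q) ∨ c s(p,r) = c s(r,t)) ∧
    (c s(p,t) = c s(p,q) ∨ c s(p,t) = c s(r,t)) := by
  have swap : ∀ a b : Fin n, s(a,b) = s(b,a) := fun a b => Sym2.eq_swap
  have NR := nrP4 h
  refine ⟨?_, ?_, ?_, ?_⟩
  · rcases NR p q r t hpq hpr hpt hqr hqt hrt with h'|h'|h'
    · exact Or.inl h'.symm
    · exact Or.inr h'
    · exact absurd h' hAB
  · rcases NR p q t r hpq hpt hpr hqt hqr (Ne.symm hrt) with h'|h'|h'
    · exact Or.inl h'.symm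
    · rw [swap t r] at h'; exact Or.inr h'
    · rw [swap t r] at h'; exact absurd h' hAB
  · rcases NR q p r t (Ne.symm hpq) hqr hqt hpr hpt hrt with h'|h'|h'
    · rw [swap q p] at h'; exact Or.inl h'.symm
    · exact Or.inr h'
    · rw [swap q p] at h'; exact absurd h' hAB
  · rcases NR q p t r (Ne.symm hpq) hqt hqr hpt hpr (Ne.symm hrt) with h'|h'|h'
    · rw [swap q p] at h'; exact Or.inl h'.symm
    · rw [swap t r] at h'; exact Or.inr h'
    · rw [swap q p, swap t r] at h'; exact absurd h' hAB

lemma ubP4_4 {c : Sym2 (Fin 4) → ℕ}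
    (h : ¬ HasRainbowCopy 4 c (SimpleGraph.pathGraph 4)) :
    colorCount 4 c ≤ 3 := by
  by_cases h1 : c s(0,1) = c s(2,3)
  · by_cases h2 : c s(0,2) = c s(1,3)
    · by_cases h3 : c s(0,3) = c s(1,2)
      · have hsub := K4cover (c := c) (S := {c s(0,1), c s(0,2), c s(0,3)})
          (by left; rfl) (by right; left; rfl) (by right; right; rfl)
          (by rw [← h3]; right; right; rfl) (by rw [← h2]; right; left; rfl)
          (by rw [← h1]; left; rfl)
        exact le_trans (Set.ncard_le_ncard hsub (Set.toFinite _)) ncard3_le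
      · obtain ⟨c31, c32, c01, c02⟩ := cross h (p := 0) (q := 3) (r := 1) (t := 2)
          (by decide) (by decide) (by decide) (by decide) (by decide) (by decide) h3
        have hsub := K4cover (c := c) (S := {c s(0,3), c s(1,2)})
          (by simpa using c01)
          (by simpa using c02)
          (by left; rfl) (by right; rfl)
          (by rw [show s((1:Fin 4),3) = s(3,1) from Sym2.eq_swap]; simpa using c31)
          (by rw [show s((2:Fin 4),3) = s(3,2) from Sym2.eq_swap]; simpa using c32)
        refine le_trans (Set.ncard_le_ncard hsub (Set.toFinite _)) (le_trans ncard2_le ?_)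
        omega
    · obtain ⟨c21, c23, c01, c03⟩ := cross h (p := 0) (q := 2) (r := 1) (t := 3)
        (by decide) (by decide) (by decide) (by decide) (by decide) (by decide) h2
      have hsub := K4cover (c := c) (S := {c s(0,2), c s(1,3)})
        (by simpa using c01)
        (by left; rfl)
        (by simpa using c03)
        (by rw [show s((1:Fin 4),2) = s(2,1) from Sym2.eq_swap]; simpa using c21)
        (by right; rfl)
        (by simpa using c23)
      refine le_trans (Set.ncard_le_ncard hsub (Set.toFinite _)) (le_trans ncard2_le ?_)
      omega
  · obtain ⟨c12, c13, c02, c03⟩ := cross h (p := 0) (q := 1) (r := 2) (t := 3)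
      (by decide) (by decide) (by decide) (by decide) (by decide) (by decide) h1
    have hsub := K4cover (c := c) (S := {c s(0,1), c s(2,3)})
      (by left; rfl)
      (by simpa using c02)
      (by simpa using c03)
      (by simpa using c12)
      (by simpa using c13)
      (by right; rfl)
    refine le_trans (Set.ncard_le_ncard hsub (Set.toFinite _)) (le_trans ncard2_le ?_)
    omega

lemma AR_P4_5 {n : ℕ} (hn : 5 ≤ n) : AR n (SimpleGraph.pathGraph 4) = 2 := by
  apply IsGreatest.csSup_eq
  constructor
  · exact memP4 hn
  · rintro m ⟨c, rfl, hc⟩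
    exact ubP4 hn hc

lemma AR_2P2_5 {n : ℕ} (hn : 5 ≤ n) :
    AR n (SimpleGraph.multiCopy 2 (SimpleGraph.pathGraph 2)) = 1 := by
  apply IsGreatest.csSup_eq
  constructor
  · exact mem2P2 hn
  · rintro m ⟨c, rfl, hc⟩
    exact ub2P2 hn hc

lemma AR_P4_4 : AR 4 (SimpleGraph.pathGraph 4) = 3 := by
  apply IsGreatest.csSup_eq
  constructor
  · exact ⟨cx, cx_count, cx_noP4⟩
  · rintro m ⟨c, rfl, hc⟩
    exact ubP4_4 hc

lemma AR_2P2_4 : AR 4 (SimpleGraph.multiCopy 2 (SimpleGraph.pathGraph 2)) = 3 := by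
  apply IsGreatest.csSup_eq
  constructor
  · exact ⟨cx, cx_count, cx_no2P2⟩
  · rintro m ⟨c, rfl, hc⟩
    exact ub2P2_4 hc

/-- `AR(4, P₄) = AR(4, 2P₂)`, and for every `n ≥ 5`,
`AR(n, P₄) = AR(n, 2P₂) + 1`. -/
theorem stmt_11 :
    AR 4 (SimpleGraph.pathGraph 4) =
      AR 4 (SimpleGraph.multiCopy 2 (SimpleGraph.pathGraph 2)) ∧
    ∀ n : ℕ, 5 ≤ n →
      AR n (SimpleGraph.pathGraph 4) =
        AR n (SimpleGraph.multiCopy 2 (SimpleGraph.pathGraph 2)) + 1 := by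
  constructor
  · rw [AR_P4_4, AR_2P2_4]
  · intro n hn
    rw [AR_P4_5 hn, AR_2P2_5 hn]
end

section
/- Let t ≥ 2 and n ≥ 2t + 4 be integers, let c be an edge-coloring of K_n that contains no rainbow copy of P₄ ∪ tP₂, let H be a rainbow subgraph of K_n isomorphic to (t + 2)P₂, let G be a rainbow spanning subgraph of K_n whose edge set contains E(H), and set V' = V(K_n) ∖ V(H). Then the number of edges of G having at least one endpoint in V' is at most 2|V'| = 2n − 4t − 8; that is, |E(G[V'])| + |[V(H), V']_G| ≤ 2n − 4t − 8. -/
open SimpleGraph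

lemma mc2_edge {k : ℕ} (e : Sym2 (Fin k × Fin 2))
    (he : e ∈ (SimpleGraph.multiCopy k (SimpleGraph.pathGraph 2)).edgeSet) :
    ∃ i : Fin k, e = s((i, 0), (i, 1)) := by
  induction e with
  | _ a b =>
    rw [SimpleGraph.mem_edgeSet] at he
    obtain ⟨h1, h2⟩ := he
    rw [SimpleGraph.pathGraph_adj] at h2
    obtain ⟨i, j⟩ := a
    obtain ⟨i', j'⟩ := b
    simp only at h1 h2
    subst h1
    refine ⟨i, ?_⟩
    have hj := j.isLt; have hj' := j'.isLt
    rcases h2 with h | h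
    · have : j = 0 ∧ j' = 1 := by constructor <;> (apply Fin.ext; omega)
      rw [this.1, this.2]
    · have : j = 1 ∧ j' = 0 := by constructor <;> (apply Fin.ext; omega)
      rw [this.1, this.2, Sym2.eq_swap]

lemma mc2_mem {k : ℕ} (i : Fin k) :
    s((i, (0:Fin 2)), (i, (1:Fin 2))) ∈ (SimpleGraph.multiCopy k (SimpleGraph.pathGraph 2)).edgeSet := by
  rw [SimpleGraph.mem_edgeSet]
  exact ⟨rfl, by rw [SimpleGraph.pathGraph_adj]; left; rfl⟩

lemma kp_edge {t : ℕ} (e : Sym2 ((Fin 1 × Fin 4) ⊕ (Fin t × Fin 2)))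
    (he : e ∈ (kP4tP2 1 t).edgeSet) :
    e = s(Sum.inl (0, 0), Sum.inl (0, 1)) ∨ e = s(Sum.inl (0, 1), Sum.inl (0, 2)) ∨
      e = s(Sum.inl (0, 2), Sum.inl (0, 3)) ∨
      ∃ i : Fin t, e = s(Sum.inr (i, 0), Sum.inr (i, 1)) := by
  induction e with
  | _ a b =>
    rw [SimpleGraph.mem_edgeSet] at he
    rcases a with a | a <;> rcases b with b | b
    · obtain ⟨h1, h2⟩ := he
      rw [SimpleGraph.pathGraph_adj] at h2
      obtain ⟨i, j⟩ := a; obtain ⟨i', j'⟩ := b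
      simp only at h1 h2
      subst h1
      have : i = 0 := Subsingleton.elim _ _
      subst this
      have hj := j.isLt; have hj' := j'.isLt
      rcases h2 with h | h
      · have h0 : j.val = 0 ∧ j'.val = 1 ∨ j.val = 1 ∧ j'.val = 2 ∨ j.val = 2 ∧ j'.val = 3 := by omega
        rcases h0 with ⟨e1, e2⟩ | ⟨e1, e2⟩ | ⟨e1, e2⟩
        · left; have : j = 0 := Fin.ext e1; have h2' : j' = 1 := Fin.ext e2; rw [this, h2']
        · right; left; have : j = 1 := Fin.ext e1; have h2' : j' = 2 := Fin.ext e2; rw [this, h2']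
        · right; right; left; have : j = 2 := Fin.ext e1; have h2' : j' = 3 := Fin.ext e2; rw [this, h2']
      · have h0 : j'.val = 0 ∧ j.val = 1 ∨ j'.val = 1 ∧ j.val = 2 ∨ j'.val = 2 ∧ j.val = 3 := by omega
        rcases h0 with ⟨e1, e2⟩ | ⟨e1, e2⟩ | ⟨e1, e2⟩
        · left; have : j' = 0 := Fin.ext e1; have h2' : j = 1 := Fin.ext e2; rw [this, h2', Sym2.eq_swap]
        · right; left; have : j' = 1 := Fin.ext e1; have h2' : j = 2 := Fin.ext e2; rw [this, h2', Sym2.eq_swap]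
        · right; right; left; have : j' = 2 := Fin.ext e1; have h2' : j = 3 := Fin.ext e2; rw [this, h2', Sym2.eq_swap]
    · exact absurd he id
    · exact absurd he id
    · right; right; right
      obtain ⟨i, hi⟩ := mc2_edge s(a, b) he
      obtain ⟨i1, hi1⟩ : ∃ x, a = x := ⟨a, rfl⟩
      rw [Sym2.eq_iff] at hi
      rcases hi with ⟨h1, h2⟩ | ⟨h1, h2⟩
      · exact ⟨i, by rw [h1, h2]⟩
      · exact ⟨i, by rw [h1, h2, Sym2.eq_swap]⟩
lemma exists_embedding_avoid (t : ℕ) (B : Finset (Fin (t+2))) (hB : B.card ≤ 2) :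
    ∃ g : Fin t ↪ Fin (t+2), ∀ i, g i ∉ B := by
  classical
  have hc : t ≤ Bᶜ.card := by
    have h1 := Finset.card_compl B
    have h2 : Fintype.card (Fin (t+2)) = t+2 := Fintype.card_fin _
    omega
  obtain ⟨s, hsub, hcard⟩ := Finset.exists_subset_card_eq hc
  let e2 : Fin t ≃ s := (s.equivFinOfCardEq hcard).symm
  refine ⟨⟨fun i => (e2 i : Fin (t+2)), ?_⟩, ?_⟩
  · intro i j h
    exact e2.injective (Subtype.ext h)
  · intro i
    have : (e2 i : Fin (t+2)) ∈ Bᶜ := hsub (e2 i).2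
    show (e2 i : Fin (t+2)) ∉ B
    simpa using this

lemma tool {t n : ℕ} (c : Sym2 (Fin n) → ℕ)
    (hno : ¬ HasRainbowCopy n c (kP4tP2 1 t))
    (f : (Fin (t + 2) × Fin 2) ↪ Fin n)
    (hH : Set.InjOn (fun e => c (Sym2.map (⇑f) e))
      (SimpleGraph.multiCopy (t + 2) (SimpleGraph.pathGraph 2)).edgeSet)
    (a b d e : Fin n)
    (hab : a ≠ b) (had : a ≠ d) (hae : a ≠ e) (hbd : b ≠ d) (hbe : b ≠ e) (hde : d ≠ e)
    (c1 : c s(a,b) ≠ c s(b,d)) (c2 : c s(a,b) ≠ c s(d,e)) (c3 : c s(b,d) ≠ c s(d,e))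
    (B : Finset (Fin (t+2))) (hB : B.card ≤ 2)
    (hgood : ∀ i ∉ B, (∀ j, f (i, j) ≠ a ∧ f (i,j) ≠ b ∧ f (i,j) ≠ d ∧ f (i,j) ≠ e) ∧
      c s(f (i,0), f (i,1)) ≠ c s(a,b) ∧ c s(f (i,0), f (i,1)) ≠ c s(b,d) ∧
      c s(f (i,0), f (i,1)) ≠ c s(d,e)) : False := by
  classical
  obtain ⟨g, hg⟩ := exists_embedding_avoid t B hB
  apply hno
  let vec : Fin 4 → Fin n := ![a, b, d, e]
  have hvecinj : Function.Injective vec := by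
    intro k k' h
    fin_cases k <;> fin_cases k' <;> simp_all [vec] <;> rfl
  let F : (Fin 1 × Fin 4) ⊕ (Fin t × Fin 2) → Fin n :=
    fun x => match x with
    | Sum.inl (_, k) => vec k
    | Sum.inr (i, j) => f (g i, j)
  have havoid : ∀ (i : Fin t) (j : Fin 2) (k : Fin 4), f (g i, j) ≠ vec k := by
    intro i j k
    have h := (hgood (g i) (hg i)).1 j
    fin_cases k <;> simp [vec] <;> tauto
  have hFinj : Function.Injective F := by
    rintro (⟨u, k⟩ | ⟨i, j⟩) (⟨u', k'⟩ | ⟨i', j'⟩) h <;> simp only [F] at h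
    · obtain rfl : k = k' := hvecinj h
      obtain rfl : u = u' := Subsingleton.elim _ _
      rfl
    · exact absurd h.symm (havoid i' j' k)
    · exact absurd h (havoid i j k')
    · obtain ⟨h1, h2⟩ := Prod.mk.injEq .. ▸ (f.injective h)
      obtain rfl : i = i' := g.injective h1
      rw [h2]
  -- colors of the pairs
  have hPne : ∀ i i' : Fin t, c s(f (g i, 0), f (g i, 1)) = c s(f (g i', 0), f (g i', 1)) → i = i' := by
    intro i i' h
    have := hH (mc2_mem (g i)) (mc2_mem (g i')) (by simpa [Sym2.map_pair_eq] using h)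
    rw [Sym2.eq_iff] at this
    rcases this with ⟨h1, -⟩ | ⟨h1, -⟩
    · exact g.injective (congrArg Prod.fst h1)
    · exact absurd (congrArg Prod.snd h1) (by simp)
  refine ⟨⟨F, hFinj⟩, ?_⟩
  intro e1 he1 e2 he2 hc
  simp only [Function.Embedding.coeFn_mk] at hc
  have hPcol : ∀ i : Fin t, c (Sym2.map F s(Sum.inr (i,0), Sum.inr (i,1)))
      = c s(f (g i, 0), f (g i, 1)) := by
    intro i; simp [Sym2.map_pair_eq, F]
  have hcol1 : c (Sym2.map F s(Sum.inl ((0 : Fin 1), (0 : Fin 4)), Sum.inl (0, 1))) = c s(a, b) := by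
    simp [Sym2.map_pair_eq, F, vec]
  have hcol2 : c (Sym2.map F s(Sum.inl ((0 : Fin 1), (1 : Fin 4)), Sum.inl (0, 2))) = c s(b, d) := by
    simp [Sym2.map_pair_eq, F, vec]
  have hcol3 : c (Sym2.map F s(Sum.inl ((0 : Fin 1), (2 : Fin 4)), Sum.inl (0, 3))) = c s(d, e) := by
    simp [Sym2.map_pair_eq, F, vec]
  rcases kp_edge e1 he1 with h | h | h | ⟨i, h⟩ <;>
    rcases kp_edge e2 he2 with h' | h' | h' | ⟨i', h'⟩ <;>
    subst h <;> subst h'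
  · rfl
  · rw [hcol1, hcol2] at hc; exact absurd hc c1
  · rw [hcol1, hcol3] at hc; exact absurd hc c2
  · rw [hcol1, hPcol] at hc; exact absurd hc.symm (hgood (g i') (hg i')).2.1
  · rw [hcol1, hcol2] at hc; exact absurd hc.symm c1
  · rfl
  · rw [hcol2, hcol3] at hc; exact absurd hc c3
  · rw [hcol2, hPcol] at hc; exact absurd hc.symm (hgood (g i') (hg i')).2.2.1
  · rw [hcol1, hcol3] at hc; exact absurd hc.symm c2
  · rw [hcol2, hcol3] at hc; exact absurd hc.symm c3
  · rfl
  · rw [hcol3, hPcol] at hc; exact absurd hc.symm (hgood (g i') (hg i')).2.2.2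
  · rw [hcol1, hPcol] at hc; exact absurd hc (hgood (g i) (hg i)).2.1
  · rw [hcol2, hPcol] at hc; exact absurd hc (hgood (g i) (hg i)).2.2.1
  · rw [hcol3, hPcol] at hc; exact absurd hc (hgood (g i) (hg i)).2.2.2
  · rw [hPcol, hPcol] at hc
    obtain rfl := hPne i i' hc
    rfl
set_option maxHeartbeats 2000000 in
lemma no_three {t n : ℕ} (c : Sym2 (Fin n) → ℕ)
    (hno : ¬ HasRainbowCopy n c (kP4tP2 1 t))
    (f : (Fin (t + 2) × Fin 2) ↪ Fin n)
    (hH : Set.InjOn (fun e => c (Sym2.map (⇑f) e))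
      (SimpleGraph.multiCopy (t + 2) (SimpleGraph.pathGraph 2)).edgeSet)
    (G : SimpleGraph (Fin n))
    (hG : Set.InjOn c G.edgeSet)
    (hHG : ∀ e ∈ (SimpleGraph.multiCopy (t + 2) (SimpleGraph.pathGraph 2)).edgeSet,
      Sym2.map (⇑f) e ∈ G.edgeSet)
    (v x y z : Fin n) (hv : v ∉ Set.range ⇑f)
    (hvx : G.Adj v x) (hvy : G.Adj v y) (hvz : G.Adj v z)
    (hxy : x ≠ y) (hxz : x ≠ z) (hyz : y ≠ z) : False := by
  classical
  have hGc : ∀ {e1 e2 : Sym2 (Fin n)}, e1 ∈ G.edgeSet → e2 ∈ G.edgeSet → e1 ≠ e2 →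
      c e1 ≠ c e2 := fun h1 h2 hne hc => hne (hG h1 h2 hc)
  have hPG : ∀ i : Fin (t+2), s(f (i,0), f (i,1)) ∈ G.edgeSet := by
    intro i
    have := hHG _ (mc2_mem i)
    simpa [Sym2.map_pair_eq] using this
  have hPP : ∀ i i' : Fin (t+2), i ≠ i' → c s(f (i,0), f (i,1)) ≠ c s(f (i',0), f (i',1)) := by
    intro i i' hne hc
    apply hne
    have := hH (mc2_mem i) (mc2_mem i') (by simpa [Sym2.map_pair_eq] using hc)
    rw [Sym2.eq_iff] at this
    rcases this with ⟨h1, -⟩ | ⟨h1, -⟩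
    · exact congrArg Prod.fst h1
    · exact absurd (congrArg Prod.snd h1) (by simp)
  have hfr : ∀ (p : Fin (t+2) × Fin 2), f p ∈ Set.range ⇑f := fun p => ⟨p, rfl⟩
  have hPneE : ∀ (i : Fin (t+2)) (u1 u2 : Fin n), u1 ∉ Set.range ⇑f →
      s(f (i,0), f (i,1)) ≠ s(u1, u2) := by
    intro i u1 u2 h heq
    rw [Sym2.eq_iff] at heq
    rcases heq with ⟨h1, -⟩ | ⟨-, h2⟩
    · exact h ⟨_, h1⟩
    · exact h ⟨_, h2⟩
  have hPneE2 : ∀ (i : Fin (t+2)) (u1 u2 : Fin n), u2 ∉ Set.range ⇑f →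
      s(f (i,0), f (i,1)) ≠ s(u1, u2) := by
    intro i u1 u2 h heq
    rw [Sym2.eq_iff] at heq
    rcases heq with ⟨-, h2⟩ | ⟨h1, -⟩
    · exact h ⟨_, h2⟩
    · exact h ⟨_, h1⟩
  have hfilter_card : ∀ m : ℕ,
      (Finset.univ.filter (fun i : Fin (t+2) => c s(f (i,0), f (i,1)) = m)).card ≤ 1 := by
    intro m
    refine Finset.card_le_one.2 ?_
    intro a ha b hb
    rw [Finset.mem_filter] at ha hb
    by_contra hne
    exact hPP a b hne (ha.2.trans hb.2.symm)
  -- CASE 1 : some neighbor of v lies in the range of f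
  have case1 : ∀ (x' y' : Fin n) (p1 : Fin (t + 2)) (p2 : Fin 2), G.Adj v x' → G.Adj v y' →
      x' = f (p1, p2) → y' ≠ x' → y' ≠ f (p1, p2 + 1) → False := by
    intro x' y' p1 p2 hvx' hvy' hxp hyx hyw
    set w := f (p1, p2 + 1) with hwdef
    have hwx : s(w, x') = s(f (p1, 0), f (p1, 1)) := by
      rw [hwdef, hxp]
      fin_cases p2
      · exact Sym2.eq_swap
      · rfl
    have hwmem : s(w, x') ∈ G.edgeSet := by rw [hwx]; exact hPG p1
    have hwne : w ≠ x' := by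
      rw [hwdef, hxp]
      intro h
      have h2 := congrArg Prod.snd (f.injective h)
      simp only at h2
      have : ∀ j : Fin 2, j + 1 ≠ j := by decide
      exact this p2 h2
    have hwv : w ≠ v := fun h => hv (h ▸ hfr _)
    have hxv : x' ≠ v := hvx'.ne'
    have hx'mem : s(x', v) ∈ G.edgeSet := G.mem_edgeSet.2 hvx'.symm
    have hvy'mem : s(v, y') ∈ G.edgeSet := G.mem_edgeSet.2 hvy'
    have hwy : w ≠ y' := hyw.symm
    have hx'y : x' ≠ y' := hyx.symm
    have hvy'' : v ≠ y' := hvy'.ne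
    have c1 : c s(w, x') ≠ c s(x', v) := hGc hwmem hx'mem (by rw [Ne, Sym2.eq_iff]; tauto)
    have c2 : c s(w, x') ≠ c s(v, y') := hGc hwmem hvy'mem (by rw [Ne, Sym2.eq_iff]; tauto)
    have c3 : c s(x', v) ≠ c s(v, y') := hGc hx'mem hvy'mem (by rw [Ne, Sym2.eq_iff]; tauto)
    by_cases hyr : y' ∈ Set.range ⇑f
    · obtain ⟨q, hq⟩ := hyr
      refine tool c hno f hH w x' v y' hwne hwv hwy hxv hx'y hvy'' c1 c2 c3
        {p1, q.1} ((Finset.card_insert_le _ _).trans (by simp)) ?_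
      intro i hi
      simp only [Finset.mem_insert, Finset.mem_singleton] at hi
      push_neg at hi
      obtain ⟨hi1, hi2⟩ := hi
      refine ⟨fun j => ⟨?_, ?_, ?_, ?_⟩, ?_, ?_, ?_⟩
      · intro h; rw [hwdef] at h; exact hi1 (congrArg Prod.fst (f.injective h))
      · intro h; rw [hxp] at h; exact hi1 (congrArg Prod.fst (f.injective h))
      · intro h; exact hv (h ▸ hfr _)
      · intro h; exact hi2 (congrArg Prod.fst (f.injective (h.trans hq.symm)))
      · rw [hwx]; exact hPP i p1 hi1
      · exact hGc (hPG i) hx'mem (hPneE2 i x' v hv)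
      · exact hGc (hPG i) hvy'mem (hPneE i v y' hv)
    · refine tool c hno f hH w x' v y' hwne hwv hwy hxv hx'y hvy'' c1 c2 c3
        {p1} (by simp) ?_
      intro i hi
      simp only [Finset.mem_singleton] at hi
      refine ⟨fun j => ⟨?_, ?_, ?_, ?_⟩, ?_, ?_, ?_⟩
      · intro h; rw [hwdef] at h; exact hi (congrArg Prod.fst (f.injective h))
      · intro h; rw [hxp] at h; exact hi (congrArg Prod.fst (f.injective h))
      · intro h; exact hv (h ▸ hfr _)
      · intro h; exact hyr (h ▸ hfr _)
      · rw [hwx]; exact hPP i p1 hi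
      · exact hGc (hPG i) hx'mem (hPneE2 i x' v hv)
      · exact hGc (hPG i) hvy'mem (hPneE i v y' hv)
  have hx2 : ∀ x' y' z' : Fin n, G.Adj v x' → G.Adj v y' → G.Adj v z' → x' ≠ y' → x' ≠ z' →
      y' ≠ z' → x' ∈ Set.range ⇑f → False := by
    rintro x' y' z' hvx' hvy' hvz' hxy' hxz' hyz' ⟨⟨p1, p2⟩, hp⟩
    by_cases h : y' = f (p1, p2 + 1)
    · exact case1 x' z' p1 p2 hvx' hvz' hp.symm hxz'.symm (fun hh => hyz' (h.trans hh.symm))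
    · exact case1 x' y' p1 p2 hvx' hvy' hp.symm hxy'.symm h
  by_cases hxr : x ∈ Set.range ⇑f
  · exact hx2 x y z hvx hvy hvz hxy hxz hyz hxr
  by_cases hyr : y ∈ Set.range ⇑f
  · exact hx2 y x z hvy hvx hvz hxy.symm hyz hxz hyr
  by_cases hzr : z ∈ Set.range ⇑f
  · exact hx2 z x y hvz hvx hvy hxz.symm hyz.symm hxy hzr
  -- CASE 2 : all three neighbors avoid the range of f
  have lemA' : ∀ p q r : Fin n, p ∉ Set.range ⇑f → q ∉ Set.range ⇑f → r ∉ Set.range ⇑f →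
      G.Adj v p → G.Adj v q → G.Adj v r → p ≠ q → p ≠ r → q ≠ r →
      c s(p, q) = c s(r, v) ∨ c s(p, q) = c s(v, p) := by
    intro p q r hp hq hr hvp hvq hvr hpq hpr hqr
    by_contra hcon
    push_neg at hcon
    obtain ⟨h1, h2⟩ := hcon
    have hrv : s(r, v) ∈ G.edgeSet := G.mem_edgeSet.2 hvr.symm
    have hvp' : s(v, p) ∈ G.edgeSet := G.mem_edgeSet.2 hvp
    have hrv' : r ≠ v := hvr.ne'
    have hvp'' : v ≠ p := hvp.ne
    have hvq'' : v ≠ q := hvq.ne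
    refine tool c hno f hH r v p q hrv' hpr.symm hqr.symm hvp'' hvq'' hpq
      (hGc hrv hvp' (by rw [Ne, Sym2.eq_iff]; tauto))
      (fun hcc => h1 hcc.symm) (fun hcc => h2 hcc.symm)
      (Finset.univ.filter (fun i => c s(f (i,0), f (i,1)) = c s(p, q)))
      ((hfilter_card _).trans one_le_two) ?_
    intro i hi
    simp only [Finset.mem_filter, Finset.mem_univ, true_and] at hi
    refine ⟨fun j => ⟨fun h => hr (h ▸ hfr _), fun h => hv (h ▸ hfr _),
      fun h => hp (h ▸ hfr _), fun h => hq (h ▸ hfr _)⟩, ?_, ?_, hi⟩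
    · exact hGc (hPG i) hrv (hPneE i r v hr)
    · exact hGc (hPG i) hvp' (hPneE i v p hv)
  have lemA : ∀ p q r : Fin n, p ∉ Set.range ⇑f → q ∉ Set.range ⇑f → r ∉ Set.range ⇑f →
      G.Adj v p → G.Adj v q → G.Adj v r → p ≠ q → p ≠ r → q ≠ r →
      c s(p, q) = c s(r, v) := by
    intro p q r hp hq hr hvp hvq hvr hpq hpr hqr
    rcases lemA' p q r hp hq hr hvp hvq hvr hpq hpr hqr with h | h
    · exact h
    rcases lemA' q p r hq hp hr hvq hvp hvr hpq.symm hqr hpr with h' | h'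
    · rw [Sym2.eq_swap] at h'; exact h'
    · exfalso
      rw [Sym2.eq_swap] at h'
      have hne : c s(v, p) ≠ c s(v, q) :=
        hGc (G.mem_edgeSet.2 hvp) (G.mem_edgeSet.2 hvq)
          (by have := hvq.ne; rw [Ne, Sym2.eq_iff]; tauto)
      exact hne (h.symm.trans h')
  -- the distinguished pair of H
  have hww' : f ((0 : Fin (t+2)), (0 : Fin 2)) ≠ f (0, 1) := by
    intro h
    have h2 := f.injective h
    rw [Prod.mk.injEq] at h2
    exact absurd h2.2 (by decide)
  have hP0 : s(f ((0 : Fin (t+2)), (0 : Fin 2)), f (0, 1)) ∈ G.edgeSet := hPG 0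
  have lemB' : ∀ (u e1 e2 : Fin n), u ∉ Set.range ⇑f → x ≠ u →
      G.Adj e1 e2 → e1 ∉ Set.range ⇑f →
      c s(x, u) = c s(e1, e2) →
      c s(f ((0 : Fin (t+2)), (0 : Fin 2)), x) = c s(f ((0 : Fin (t+2)), (0 : Fin 2)), f (0, 1)) ∨
      c s(f ((0 : Fin (t+2)), (0 : Fin 2)), x) = c s(x, u) := by
    intro u e1 e2 hu hxu hadj he1 hcu
    by_contra hcon
    push_neg at hcon
    obtain ⟨h1, h2⟩ := hcon
    have he12 : s(e1, e2) ∈ G.edgeSet := G.mem_edgeSet.2 hadj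
    have hswap : s(f ((0 : Fin (t+2)), (0 : Fin 2)), f (0, 1)) =
        s(f ((0 : Fin (t+2)), (1 : Fin 2)), f (0, 0)) := Sym2.eq_swap.symm
    refine tool c hno f hH (f (0,1)) (f (0,0)) x u (fun h => hww' h.symm)
      (fun h => hxr ⟨_, h⟩) (fun h => hu ⟨_, h⟩)
      (fun h => hxr ⟨_, h⟩) (fun h => hu ⟨_, h⟩) hxu
      ?_ ?_ h2
      (insert 0 (Finset.univ.filter
        (fun i => c s(f (i,0), f (i,1)) = c s(f ((0 : Fin (t+2)), (0 : Fin 2)), x))))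
      ((Finset.card_insert_le _ _).trans (by
        have := hfilter_card (c s(f ((0 : Fin (t+2)), (0 : Fin 2)), x)); omega)) ?_
    · -- c s(f(0,1), f(0,0)) ≠ c s(f(0,0), x)
      intro hcc
      rw [← hswap] at hcc
      exact h1 hcc.symm
    · -- c s(f(0,1), f(0,0)) ≠ c s(x, u)
      rw [← hswap, hcu]
      exact hGc hP0 he12 (hPneE 0 e1 e2 he1)
    · intro i hi
      simp only [Finset.mem_insert, Finset.mem_filter, Finset.mem_univ, true_and] at hi
      push_neg at hi
      obtain ⟨hi0, hic⟩ := hi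
      refine ⟨fun j => ⟨fun h => hi0 (congrArg Prod.fst (f.injective h)),
        fun h => hi0 (congrArg Prod.fst (f.injective h)),
        fun h => hxr (h ▸ hfr _), fun h => hu (h ▸ hfr _)⟩, ?_, hic, ?_⟩
      · rw [← hswap]
        exact hPP i 0 hi0
      · rw [hcu]
        exact hGc (hPG i) he12 (hPneE i e1 e2 he1)
  have hcxy : c s(x, y) = c s(z, v) := lemA x y z hxr hyr hzr hvx hvy hvz hxy hxz hyz
  have hcxz : c s(x, z) = c s(y, v) := lemA x z y hxr hzr hyr hvx hvz hvy hxz hxy hyz.symm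
  have hb1 := lemB' v x v hv hvx.ne' hvx.symm hxr rfl
  have hb2 := lemB' y z v hyr hxy hvz.symm hzr hcxy
  have hb3 := lemB' z y v hzr hxz hvy.symm hyr hcxz
  have hB : c s(f ((0 : Fin (t+2)), (0 : Fin 2)), x) = c s(f ((0 : Fin (t+2)), (0 : Fin 2)), f (0, 1)) := by
    rcases hb1 with h | h
    · exact h
    rcases hb2 with h' | h'
    · exact h'
    · exfalso
      have : c s(x, v) = c s(x, y) := h.symm.trans h'
      rw [hcxy] at this
      refine hGc (G.mem_edgeSet.2 hvx.symm) (G.mem_edgeSet.2 hvz.symm) ?_ this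
      have hxv : x ≠ v := hvx.ne'
      have hzv : z ≠ v := hvz.ne'
      rw [Ne, Sym2.eq_iff]; tauto
  -- final contradiction: rainbow path y - v - x - f(0,0)
  refine tool c hno f hH y v x (f (0,0)) hvy.ne' hxy.symm (fun h => hyr (h ▸ hfr _))
    hvx.ne (fun h => hv (h ▸ hfr _)) (fun h => hxr (h ▸ hfr _))
    ?_ ?_ ?_ {0} (by simp) ?_
  · exact hGc (G.mem_edgeSet.2 hvy.symm) (G.mem_edgeSet.2 hvx)
      (by have h1 := hvy.ne'; have h2 := hvx.ne; have h3 := hxy.symm; rw [Ne, Sym2.eq_iff]; tauto)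
  · -- c s(y, v) ≠ c s(x, f(0,0))
    intro hcc
    have hx0 : c s(x, f ((0 : Fin (t+2)), (0 : Fin 2))) = c s(f ((0 : Fin (t+2)), (0 : Fin 2)), f (0, 1)) := by
      rw [Sym2.eq_swap]; exact hB
    rw [hx0] at hcc
    exact hGc hP0 (G.mem_edgeSet.2 hvy.symm) (hPneE 0 y v hyr) hcc.symm
  · intro hcc
    have hx0 : c s(x, f ((0 : Fin (t+2)), (0 : Fin 2))) = c s(f ((0 : Fin (t+2)), (0 : Fin 2)), f (0, 1)) := by
      rw [Sym2.eq_swap]; exact hB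
    rw [hx0] at hcc
    exact hGc hP0 (G.mem_edgeSet.2 hvx) (hPneE2 0 v x hxr) hcc.symm
  · intro i hi
    simp only [Finset.mem_singleton] at hi
    refine ⟨fun j => ⟨fun h => hyr (h ▸ hfr _), fun h => hv (h ▸ hfr _),
      fun h => hxr (h ▸ hfr _), fun h => hi (congrArg Prod.fst (f.injective h))⟩, ?_, ?_, ?_⟩
    · exact hGc (hPG i) (G.mem_edgeSet.2 hvy.symm) (hPneE2 i y v hv)
    · exact hGc (hPG i) (G.mem_edgeSet.2 hvx) (hPneE i v x hv)
    · intro hcc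
      have hx0 : c s(x, f ((0 : Fin (t+2)), (0 : Fin 2))) = c s(f ((0 : Fin (t+2)), (0 : Fin 2)), f (0, 1)) := by
        rw [Sym2.eq_swap]; exact hB
      rw [hx0] at hcc
      exact hPP i 0 hi hcc
/-- Let `t ≥ 2`, `n ≥ 2t + 4`, let `c` be an edge-coloring of `K_n` with
no rainbow copy of `P₄ ∪ tP₂`, let `f` be a rainbow copy of `(t + 2)P₂` in `K_n`, let
`G` be a rainbow spanning subgraph of `K_n` containing the edges of that copy, and let
`V'` be the complement of the vertex set of the copy. Then
`|E(G[V'])| + |[V(H), V']_G| ≤ 2n - 4t - 8`. -/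
theorem stmt_13 (t n : ℕ) (ht : 2 ≤ t) (hn : 2 * t + 4 ≤ n)
    (c : Sym2 (Fin n) → ℕ)
    (hno : ¬ HasRainbowCopy n c (kP4tP2 1 t))
    (f : (Fin (t + 2) × Fin 2) ↪ Fin n)
    (hH : Set.InjOn (fun e => c (Sym2.map (⇑f) e))
      (SimpleGraph.multiCopy (t + 2) (SimpleGraph.pathGraph 2)).edgeSet)
    (G : SimpleGraph (Fin n))
    (hG : Set.InjOn c G.edgeSet)
    (hHG : ∀ e ∈ (SimpleGraph.multiCopy (t + 2) (SimpleGraph.pathGraph 2)).edgeSet,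
      Sym2.map (⇑f) e ∈ G.edgeSet) :
    (edgesInside G (Set.range ⇑f)ᶜ).ncard +
      (edgesBetween G (Set.range ⇑f) (Set.range ⇑f)ᶜ).ncard ≤ 2 * n - 4 * t - 8 := by
  classical
  -- degree bound for vertices outside the range of f
  have hdeg : ∀ v : Fin n, v ∉ Set.range ⇑f → (G.neighborFinset v).card ≤ 2 := by
    intro v hv
    by_contra h
    push_neg at h
    rw [Finset.two_lt_card] at h
    obtain ⟨a, ha, b, hb, c', hc', hab, hac, hbc⟩ := h
    rw [SimpleGraph.mem_neighborFinset] at ha hb hc'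
    exact no_three c hno f hH G hG hHG v a b c' hv ha hb hc' hab hac hbc
  set A : Set (Fin n) := Set.range ⇑f with hA
  set S : Finset (Fin n) := Finset.univ.filter (fun v => v ∉ A) with hS
  have hScard : S.card = n - (2 * t + 4) := by
    have h1 : (Finset.univ.filter (fun v => v ∈ A)).card = 2 * t + 4 := by
      have he : Finset.univ.filter (fun v => v ∈ A) = Finset.univ.image ⇑f := by
        ext u
        simp [hA, Set.mem_range, eq_comm]
      rw [he, Finset.card_image_of_injective _ f.injective, Finset.card_univ,
        Fintype.card_prod, Fintype.card_fin, Fintype.card_fin]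
      ring
    have h3 : (Finset.univ : Finset (Fin n)).card = n := by simp
    have h4 : S = Finset.univ \ (Finset.univ.filter (fun v => v ∈ A)) := by
      rw [hS, Finset.filter_not]
    rw [h4, Finset.card_sdiff_of_subset (Finset.filter_subset _ _), h3, h1]
  have hinc : ∀ v : Fin n, v ∉ A → (G.incidenceSet v).toFinset.card ≤ 2 := by
    intro v hv
    rw [Set.toFinset_card]
    have h1 : Fintype.card (G.incidenceSet v) = Fintype.card (G.neighborSet v) :=
      Fintype.card_congr (G.incidenceSetEquivNeighborSet v)
    rw [h1]
    have h2 : Fintype.card (G.neighborSet v) = (G.neighborFinset v).card :=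
      (Set.toFinset_card _).symm
    rw [h2]
    exact hdeg v hv
  set F1 : Finset (Sym2 (Fin n)) := (edgesInside G Aᶜ).toFinset with hF1
  set F2 : Finset (Sym2 (Fin n)) := (edgesBetween G A Aᶜ).toFinset with hF2
  set T : Finset (Sym2 (Fin n)) := S.biUnion (fun v => (G.incidenceSet v).toFinset) with hT
  have hdisj : Disjoint F1 F2 := by
    rw [Finset.disjoint_left]
    intro e he1 he2
    rw [hF1, Set.mem_toFinset] at he1
    rw [hF2, Set.mem_toFinset] at he2
    obtain ⟨-, hall⟩ := he1
    obtain ⟨-, u, w, rfl, huA, -⟩ := he2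
    exact hall u (Sym2.mem_mk_left u w) huA
  have hsub : F1 ∪ F2 ⊆ T := by
    intro e he
    rw [Finset.mem_union] at he
    have : ∃ v, v ∉ A ∧ v ∈ e ∧ e ∈ G.edgeSet := by
      rcases he with he | he
      · rw [hF1, Set.mem_toFinset] at he
        obtain ⟨heG, hall⟩ := he
        induction e with
        | _ u w => exact ⟨u, hall u (Sym2.mem_mk_left u w), Sym2.mem_mk_left u w, heG⟩
      · rw [hF2, Set.mem_toFinset] at he
        obtain ⟨heG, u, w, rfl, huA, hwA⟩ := he
        exact ⟨w, hwA, Sym2.mem_mk_right u w, heG⟩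
    obtain ⟨v, hvA, hve, heG⟩ := this
    rw [hT, Finset.mem_biUnion]
    refine ⟨v, by simp [hS, hvA], ?_⟩
    rw [Set.mem_toFinset]
    exact ⟨heG, hve⟩
  have hTcard : T.card ≤ 2 * S.card := by
    calc T.card ≤ ∑ v ∈ S, (G.incidenceSet v).toFinset.card := Finset.card_biUnion_le
    _ ≤ ∑ _v ∈ S, 2 := by
        refine Finset.sum_le_sum ?_
        intro v hv
        rw [hS, Finset.mem_filter] at hv
        exact hinc v hv.2
    _ = 2 * S.card := by rw [Finset.sum_const, smul_eq_mul, mul_comm]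
  have hcard : F1.card + F2.card ≤ 2 * S.card := by
    rw [← Finset.card_union_of_disjoint hdisj]
    exact (Finset.card_le_card hsub).trans hTcard
  have hn1 : (edgesInside G Aᶜ).ncard = F1.card := Set.ncard_eq_toFinset_card' _
  have hn2 : (edgesBetween G A Aᶜ).ncard = F2.card := Set.ncard_eq_toFinset_card' _
  rw [hA] at hn1 hn2
  rw [hn1, hn2]
  calc F1.card + F2.card ≤ 2 * S.card := hcard
    _ = 2 * (n - (2 * t + 4)) := by rw [hScard]
    _ = 2 * n - 4 * t - 8 := by omega
end

section
/- Let t ≥ 2 and n ≥ 2t + 4 be integers. If an edge-coloring c of K_n contains a rainbow copy of (t + 2)P₂ but contains no rainbow copy of P₄ ∪ tP₂, then the total number of colors used satisfies |c(K_n)| ≤ 2n − 3t − 6. -/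
open Set

lemma p4free_bound {n : ℕ} (hn0 : 0 < n) (A : Set (Sym2 (Fin n)))
    (hA : ∀ e ∈ A, ¬ e.IsDiag)
    (hP4 : ∀ w x y z : Fin n, w ≠ y → w ≠ z → x ≠ z →
      s(w, x) ∈ A → s(x, y) ∈ A → s(y, z) ∈ A → False) :
    A.ncard ≤ {v : Fin n | ∃ w, s(v, w) ∈ A}.ncard := by
  classical
  haveI : Nonempty (Fin n) := ⟨⟨0, hn0⟩⟩
  set nb : Fin n → Set (Fin n) := fun v => {w | s(v, w) ∈ A} with hnb
  have hswap : ∀ {x y : Fin n}, s(x, y) ∈ A → s(y, x) ∈ A := by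
    intro x y h; rwa [Sym2.eq_swap] at h
  have hsymm : ∀ {v w}, w ∈ nb v → v ∈ nb w := by
    intro v w h
    exact hswap h
  have hnotself : ∀ v, v ∉ nb v := by
    intro v h
    exact hA _ h (by simp)
  have hnever : ∀ {v w}, w ∈ nb v → w ≠ v := by
    intro v w h heq; exact hnotself v (heq ▸ h)
  have hdegpos : ∀ {v w}, w ∈ nb v → 1 ≤ (nb w).ncard := by
    intro v w h
    have h2 : (nb w).Nonempty := ⟨v, hsymm h⟩
    have := (Set.ncard_pos (Set.toFinite _)).2 h2
    omega
  -- L1 : a neighbor of a vertex of degree ≥ 3 has degree 1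
  have L1 : ∀ {u v}, 3 ≤ (nb u).ncard → v ∈ nb u → (nb v).ncard = 1 := by
    intro u v h3 hv
    have h1 : 1 ≤ (nb v).ncard := hdegpos hv
    by_contra hnedeg
    have h2 : 2 ≤ (nb v).ncard := by omega
    have hyex : (nb v \ {u}).Nonempty := by
      by_contra hcon
      rw [Set.not_nonempty_iff_eq_empty, Set.diff_eq_empty] at hcon
      have := Set.ncard_le_ncard hcon (Set.toFinite _)
      simp only [Set.ncard_singleton] at this
      omega
    obtain ⟨y, hy, hyu⟩ := hyex
    rw [Set.mem_singleton_iff] at hyu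
    have hwex : (nb u \ {v, y}).Nonempty := by
      by_contra hcon
      rw [Set.not_nonempty_iff_eq_empty, Set.diff_eq_empty] at hcon
      have hle := Set.ncard_le_ncard hcon (Set.toFinite _)
      have h2' := Set.ncard_insert_le v ({y} : Set (Fin n))
      simp only [Set.ncard_singleton] at h2'
      omega
    obtain ⟨w, hw, hwvy⟩ := hwex
    simp only [Set.mem_insert_iff, Set.mem_singleton_iff, not_or] at hwvy
    exact hP4 y v u w hyu (fun h => hwvy.2 h.symm) (fun h => hwvy.1 h.symm)
      (hswap hy) (hswap hv) hw
  -- L2 : an edge with both endpoints of degree 2 lies in a triangle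
  have L2 : ∀ {u v}, (nb u).ncard = 2 → (nb v).ncard = 2 → v ∈ nb u →
      ∃ w, w ≠ u ∧ w ≠ v ∧ nb u = {v, w} ∧ nb w = {u, v} := by
    intro u v hu hv huv
    obtain ⟨x, y, hxy, hset⟩ := Set.ncard_eq_two.1 hu
    have hvmem : v = x ∨ v = y := by
      have := huv
      rw [hset] at this
      simpa using this
    obtain ⟨w, hwv, hnbu⟩ : ∃ w, w ≠ v ∧ nb u = {v, w} := by
      rcases hvmem with rfl | rfl
      · exact ⟨y, hxy.symm, hset⟩
      · exact ⟨x, hxy, by rw [hset, Set.pair_comm]⟩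
    have hwu : w ∈ nb u := by rw [hnbu]; simp
    obtain ⟨x', y', hxy', hset'⟩ := Set.ncard_eq_two.1 hv
    have humem : u = x' ∨ u = y' := by
      have := hsymm huv
      rw [hset'] at this
      simpa using this
    obtain ⟨w', hwu', hnbv⟩ : ∃ w', w' ≠ u ∧ nb v = {u, w'} := by
      rcases humem with rfl | rfl
      · exact ⟨y', hxy'.symm, hset'⟩
      · exact ⟨x', hxy', by rw [hset', Set.pair_comm]⟩
    have hw'v : w' ∈ nb v := by rw [hnbv]; simp
    have hww' : w' = w := by
      by_contra hne
      exact hP4 w' v u w hwu' hne hwv.symm (hswap hw'v) (hswap huv) hwu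
    rw [hww'] at hw'v
    refine ⟨w, hnever hwu, hwv, hnbu, ?_⟩
    have hsub : {u, v} ⊆ nb w := by
      intro z hz
      rcases hz with rfl | hz
      · exact hsymm hwu
      · rw [Set.mem_singleton_iff] at hz; subst hz; exact hsymm hw'v
    have hle : (nb w).ncard ≤ 2 := by
      by_contra hcon
      have : (nb u).ncard = 1 := L1 (by omega) (hsymm hwu)
      omega
    have hcard2 : ({u, v} : Set (Fin n)).ncard = 2 :=
      Set.ncard_pair (hnever huv).symm
    exact (Set.eq_of_subset_of_ncard_le hsub (by omega) (Set.toFinite _)).symm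
  have hmemnb : ∀ {u v : Fin n}, s(u, v) ∈ A → v ∈ nb u := by
    intro u v h; rw [hnb]; exact h
  have hnbmem : ∀ {u v : Fin n}, v ∈ nb u → s(u, v) ∈ A := by
    intro u v h; rw [hnb] at h; exact h
  have hdes : ∀ e ∈ A, ∃ u v : Fin n, u ≠ v ∧ e = s(u, v) := by
    intro e
    induction e using Sym2.ind with
    | _ u v =>
      intro he
      exact ⟨u, v, fun h => hA _ he (by rw [h]; simp), rfl⟩
  have hdich : ∀ e ∈ A, (∃ x ∈ e, (nb x).ncard = 1) ∨ (∀ x ∈ e, (nb x).ncard = 2) := by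
    intro e he
    obtain ⟨u, v, hne, rfl⟩ := hdes e he
    have hvnb : v ∈ nb u := hmemnb he
    have hu1 : 1 ≤ (nb u).ncard := hdegpos (hsymm hvnb)
    have hv1 : 1 ≤ (nb v).ncard := hdegpos hvnb
    by_cases hu : (nb u).ncard = 1
    · exact Or.inl ⟨u, by simp, hu⟩
    by_cases hv : (nb v).ncard = 1
    · exact Or.inl ⟨v, by simp, hv⟩
    have hu3 : ¬ 3 ≤ (nb u).ncard := fun h3 => hv (L1 h3 hvnb)
    have hv3 : ¬ 3 ≤ (nb v).ncard := fun h3 => hu (L1 h3 (hsymm hvnb))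
    refine Or.inr fun x hx => ?_
    rcases Sym2.mem_iff.1 hx with rfl | rfl <;> omega
  set F : Sym2 (Fin n) → Fin n := fun e =>
    if h : ∃ v, v ∈ e ∧ (nb v).ncard = 1 then h.choose
    else Classical.epsilon (fun w => (∀ v ∈ e, w ∈ nb v) ∧ w ∉ e) with hF
  have hF1 : ∀ e, (∃ x ∈ e, (nb x).ncard = 1) → F e ∈ e ∧ (nb (F e)).ncard = 1 := by
    intro e hx
    have h : ∃ v, v ∈ e ∧ (nb v).ncard = 1 := by
      obtain ⟨x, hx1, hx2⟩ := hx; exact ⟨x, hx1, hx2⟩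
    rw [hF]
    simp only [dif_pos h]
    exact ⟨h.choose_spec.1, h.choose_spec.2⟩
  have hF2 : ∀ e ∈ A, (∀ x ∈ e, (nb x).ncard = 2) → (∀ v ∈ e, F e ∈ nb v) ∧ F e ∉ e := by
    intro e he hall
    have hno : ¬ ∃ v, v ∈ e ∧ (nb v).ncard = 1 := by
      rintro ⟨v, hv, h1⟩; have := hall v hv; omega
    have hex : ∃ w, (∀ v ∈ e, w ∈ nb v) ∧ w ∉ e := by
      obtain ⟨u, v, hne, rfl⟩ := hdes e he
      obtain ⟨w, hwu, hwv, hnbu, hnbw⟩ :=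
        L2 (hall u (by simp)) (hall v (by simp)) (hmemnb he)
      refine ⟨w, ?_, ?_⟩
      · intro x hx
        rcases Sym2.mem_iff.1 hx with rfl | rfl
        · rw [hnbu]; simp
        · exact hsymm (by rw [hnbw]; simp)
      · rw [Sym2.mem_iff]; push_neg; exact ⟨hwu, hwv⟩
    rw [hF]
    simp only [dif_neg hno]
    exact Classical.epsilon_spec hex
  have himg : ∀ e ∈ A, F e ∈ {v : Fin n | ∃ w, s(v, w) ∈ A} := by
    intro e he
    rcases hdich e he with hc | hc
    · obtain ⟨hmem, _⟩ := hF1 e hc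
      obtain ⟨y, hy⟩ := Sym2.mem_iff_exists.1 hmem
      exact ⟨y, by rw [← hy]; exact he⟩
    · obtain ⟨u, v, hne, rfl⟩ := hdes e he
      have := (hF2 _ he hc).1 u (by simp)
      exact ⟨u, hnbmem (hsymm this)⟩
  -- key: in case 2, nb (F e) = {u, v}
  have hkey2 : ∀ e ∈ A, ∀ (hc : ∀ x ∈ e, (nb x).ncard = 2),
      ∀ u v : Fin n, u ≠ v → e = s(u, v) → nb (F e) = {u, v} := by
    intro e he hc u v hne hee
    have h1 := (hF2 _ he hc).1
    have hsub : {u, v} ⊆ nb (F e) := by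
      intro z hz
      rcases hz with rfl | hz
      · exact hsymm (h1 z (by rw [hee]; simp))
      · rw [Set.mem_singleton_iff] at hz; subst hz
        exact hsymm (h1 z (by rw [hee]; simp))
    have hle : (nb (F e)).ncard ≤ 2 := by
      by_contra hcon
      have h3 : (nb u).ncard = 1 := L1 (by omega) (hsub (by simp))
      have := hc u (by rw [hee]; simp)
      omega
    exact (Set.eq_of_subset_of_ncard_le hsub
      (by rw [Set.ncard_pair hne]; omega) (Set.toFinite _)).symm
  have hinj : Set.InjOn F A := by
    intro e1 h1 e2 h2 heq
    rcases hdich e1 h1 with hc1 | hc1 <;> rcases hdich e2 h2 with hc2 | hc2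
    · obtain ⟨hm1, hd1⟩ := hF1 e1 hc1
      obtain ⟨hm2, hd2⟩ := hF1 e2 hc2
      obtain ⟨y0, hy0⟩ := Set.ncard_eq_one.1 hd1
      obtain ⟨y1, hy1e⟩ := Sym2.mem_iff_exists.1 hm1
      obtain ⟨y2, hy2e⟩ := Sym2.mem_iff_exists.1 hm2
      have hy1 : y1 ∈ nb (F e1) := hmemnb (hy1e ▸ h1)
      have hy2 : y2 ∈ nb (F e1) := heq ▸ hmemnb (hy2e ▸ h2)
      rw [hy0] at hy1 hy2
      rw [Set.mem_singleton_iff] at hy1 hy2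
      rw [hy1e, hy2e, heq, hy1, hy2]
    · exfalso
      obtain ⟨_, hd1⟩ := hF1 e1 hc1
      obtain ⟨u, v, hne, rfl⟩ := hdes e2 h2
      have := hkey2 _ h2 hc2 u v hne rfl
      rw [← heq] at this
      have : (nb (F e1)).ncard = 2 := by rw [this, Set.ncard_pair hne]
      omega
    · exfalso
      obtain ⟨_, hd2⟩ := hF1 e2 hc2
      obtain ⟨u, v, hne, rfl⟩ := hdes e1 h1
      have := hkey2 _ h1 hc1 u v hne rfl
      rw [heq] at this
      have : (nb (F e2)).ncard = 2 := by rw [this, Set.ncard_pair hne]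
      omega
    · obtain ⟨u1, v1, hne1, he1⟩ := hdes e1 h1
      obtain ⟨u2, v2, hne2, he2⟩ := hdes e2 h2
      have k1 := hkey2 _ h1 hc1 u1 v1 hne1 he1
      have k2 := hkey2 _ h2 hc2 u2 v2 hne2 he2
      rw [heq] at k1
      rw [k2] at k1
      -- {u2, v2} = {u1, v1}
      have hu2 : u2 = u1 ∨ u2 = v1 := by
        have : u2 ∈ ({u1, v1} : Set (Fin n)) := k1 ▸ (by simp)
        simpa using this
      have hv2 : v2 = u1 ∨ v2 = v1 := by
        have : v2 ∈ ({u1, v1} : Set (Fin n)) := k1 ▸ (by simp)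
        simpa using this
      rw [he1, he2]
      rcases hu2 with h2u | h2u <;> rcases hv2 with h2v | h2v
      · exact absurd (h2u.trans h2v.symm) hne2
      · rw [h2u, h2v]
      · rw [h2u, h2v, Sym2.eq_swap]
      · exact absurd (h2u.trans h2v.symm) hne2
  calc A.ncard = (F '' A).ncard := (Set.ncard_image_of_injOn hinj).symm
    _ ≤ _ := Set.ncard_le_ncard (by rintro _ ⟨e, he, rfl⟩; exact himg e he) (Set.toFinite _)

/-- Let `t ≥ 2` and `n ≥ 2t + 4`. If an edge-coloring `c` of `K_n`
contains a rainbow copy of `(t + 2)P₂` but no rainbow copy of `P₄ ∪ tP₂`, then the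
number of colors used satisfies `|c(K_n)| ≤ 2n - 3t - 6`. -/
theorem stmt_16 (t n : ℕ) (ht : 2 ≤ t) (hn : 2 * t + 4 ≤ n)
    (c : Sym2 (Fin n) → ℕ)
    (h1 : HasRainbowCopy n c
      (SimpleGraph.multiCopy (t + 2) (SimpleGraph.pathGraph 2)))
    (h2 : ¬ HasRainbowCopy n c (kP4tP2 1 t)) :
    colorCount n c ≤ 2 * n - 3 * t - 6 := by
  classical
  haveI : Nonempty (Fin n) := ⟨⟨0, by omega⟩⟩
  obtain ⟨f, hf⟩ := h1
  set a : Fin (t+2) → Fin n := fun i => f (i, 0) with ha_def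
  set b : Fin (t+2) → Fin n := fun i => f (i, 1) with hb_def
  set M : Fin (t+2) → Sym2 (Fin n) := fun i => s(a i, b i) with hM_def
  have hab : ∀ i j, a i ≠ b j := by
    intro i j h
    have := f.injective h
    simp [Prod.ext_iff] at this
  have hainj : Function.Injective a := by
    intro i j h
    have := f.injective h
    simpa [Prod.ext_iff] using this
  have hbinj : Function.Injective b := by
    intro i j h
    have := f.injective h
    simpa [Prod.ext_iff] using this
  have habne : ∀ i, a i ≠ b i := fun i => hab i i
  have hMT : ∀ i, M i ∈ (⊤ : SimpleGraph (Fin n)).edgeSet := by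
    intro i
    rw [hM_def, SimpleGraph.mem_edgeSet, SimpleGraph.top_adj]
    exact habne i
  have hMinj : Function.Injective M := by
    intro i j h
    rw [hM_def] at h
    simp only [Sym2.eq_iff] at h
    rcases h with ⟨h1, _⟩ | ⟨h1, _⟩
    · exact hainj h1
    · exact absurd h1 (hab i j)
  have hMedge : ∀ i : Fin (t+2), s(((i, 0) : Fin (t+2) × Fin 2), (i, 1)) ∈
      (SimpleGraph.multiCopy (t + 2) (SimpleGraph.pathGraph 2)).edgeSet := by
    intro i
    rw [SimpleGraph.mem_edgeSet]
    refine ⟨rfl, ?_⟩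
    rw [SimpleGraph.pathGraph_adj]
    simp
  have hmapM : ∀ i : Fin (t+2),
      Sym2.map (⇑f) s(((i, 0) : Fin (t+2) × Fin 2), (i, 1)) = M i := by
    intro i
    rw [Sym2.map_pair_eq, hM_def]
  have hMcol : ∀ i j, c (M i) = c (M j) → i = j := by
    intro i j h
    have := hf (hMedge i) (hMedge j) (by simp only [hmapM]; exact h)
    simp only [Sym2.eq_iff, Prod.ext_iff] at this
    tauto
  -- representative edges
  set T : Set (Sym2 (Fin n)) := (⊤ : SimpleGraph (Fin n)).edgeSet with hT_def
  set CC : Set ℕ := c '' T with hCC_def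
  set rep : ℕ → Sym2 (Fin n) := fun k =>
    if h : ∃ i, c (M i) = k then M h.choose
    else if h' : ∃ e, e ∈ T ∧ c e = k then h'.choose else M 0 with hrep_def
  have hrepT : ∀ k, rep k ∈ T := by
    intro k
    simp only [hrep_def]
    split
    · exact hMT _
    · split
      · next h' => exact h'.choose_spec.1
      · exact hMT 0
  have hrepc : ∀ k ∈ CC, c (rep k) = k := by
    intro k hk
    simp only [hrep_def]
    split
    · next h => exact h.choose_spec
    · split
      · next h' => exact h'.choose_spec.2
      · next h1 h2 =>
        exfalso
        obtain ⟨e, he, hce⟩ := hk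
        exact h2 ⟨e, he, hce⟩
  have hrepM : ∀ i, rep (c (M i)) = M i := by
    intro i
    simp only [hrep_def]
    split
    · next h => exact congrArg M (hMcol _ _ h.choose_spec)
    · next h => exact absurd ⟨i, rfl⟩ h
  set E : Set (Sym2 (Fin n)) := rep '' CC with hE_def
  have hET : E ⊆ T := by rintro _ ⟨k, _, rfl⟩; exact hrepT k
  have hcinj : Set.InjOn c E := by
    rintro _ ⟨k1, hk1, rfl⟩ _ ⟨k2, hk2, rfl⟩ h
    rw [hrepc _ hk1, hrepc _ hk2] at h
    rw [h]
  have hME : ∀ i, M i ∈ E := by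
    intro i
    exact ⟨c (M i), ⟨M i, hMT i, rfl⟩, hrepM i⟩
  have hEcard : E.ncard = CC.ncard := by
    rw [hE_def]
    apply Set.ncard_image_of_injOn
    intro k1 hk1 k2 hk2 h
    rw [← hrepc _ hk1, ← hrepc _ hk2, h]
  have hswapE : ∀ u v : Fin n, s(u, v) ∈ E → s(v, u) ∈ E := by
    intro u v h; rwa [Sym2.eq_swap] at h
  have master : ∀ v0 v1 v2 v3 : Fin n, ∀ i₁ i₂ : Fin (t+2), i₁ ≠ i₂ →
      v0 ≠ v1 → v0 ≠ v2 → v0 ≠ v3 → v1 ≠ v2 → v1 ≠ v3 → v2 ≠ v3 →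
      s(v0, v1) ∈ E → s(v1, v2) ∈ E → s(v2, v3) ∈ E →
      (∀ i, i ≠ i₁ → i ≠ i₂ → (a i ≠ v0 ∧ a i ≠ v1 ∧ a i ≠ v2 ∧ a i ≠ v3 ∧
          b i ≠ v0 ∧ b i ≠ v1 ∧ b i ≠ v2 ∧ b i ≠ v3)) → False := by
    intro v0 v1 v2 v3 i₁ i₂ hi12 h01 h02 h03 h12 h13 h23 he01 he12 he23 hdisj
    apply h2
    have hmem2 : i₂ ∈ Finset.univ.erase i₁ :=
      Finset.mem_erase.2 ⟨hi12.symm, Finset.mem_univ _⟩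
    have hucard : ((Finset.univ.erase i₁).erase i₂).card = t := by
      rw [Finset.card_erase_of_mem hmem2, Finset.card_erase_of_mem (Finset.mem_univ _),
        Finset.card_univ, Fintype.card_fin]
      omega
    set j : Fin t → Fin (t+2) :=
      fun k => ((Finset.equivFinOfCardEq hucard).symm k).1 with hj_def
    have hjmem : ∀ k, j k ∈ (Finset.univ.erase i₁).erase i₂ :=
      fun k => ((Finset.equivFinOfCardEq hucard).symm k).2
    have hjne : ∀ k, j k ≠ i₁ ∧ j k ≠ i₂ := by
      intro k
      have h := hjmem k
      rw [Finset.mem_erase, Finset.mem_erase] at h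
      exact ⟨h.2.1, h.1⟩
    have hjinj : Function.Injective j := by
      intro k l h
      have := congrArg (Finset.equivFinOfCardEq hucard) (Subtype.ext h :
        (Finset.equivFinOfCardEq hucard).symm k = (Finset.equivFinOfCardEq hucard).symm l)
      simpa using this
    set p : Fin 4 → Fin n := ![v0, v1, v2, v3] with hp_def
    have hp0 : p 0 = v0 := rfl
    have hp1 : p 1 = v1 := rfl
    have hp2 : p 2 = v2 := rfl
    have hp3 : p 3 = v3 := rfl
    have hpinj : Function.Injective p := by
      intro k l h
      fin_cases k <;> fin_cases l <;>
        first
          | rfl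
          | exact absurd h h01 | exact absurd h h02 | exact absurd h h03
          | exact absurd h h12 | exact absurd h h13 | exact absurd h h23
          | exact absurd h h01.symm | exact absurd h h02.symm
          | exact absurd h h03.symm | exact absurd h h12.symm
          | exact absurd h h13.symm | exact absurd h h23.symm
    set g : ((Fin 1 × Fin 4) ⊕ (Fin t × Fin 2)) → Fin n :=
      Sum.elim (fun x => p x.2) (fun y => if y.2 = 0 then a (j y.1) else b (j y.1))
      with hg_def
    have hdisj' : ∀ (k : Fin t) (l : Fin 4), a (j k) ≠ p l ∧ b (j k) ≠ p l := by
      intro k l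
      obtain ⟨q0, q1, q2, q3, q4, q5, q6, q7⟩ := hdisj (j k) (hjne k).1 (hjne k).2
      fin_cases l
      · exact ⟨q0, q4⟩
      · exact ⟨q1, q5⟩
      · exact ⟨q2, q6⟩
      · exact ⟨q3, q7⟩
    have hginj : Function.Injective g := by
      rintro (⟨z, x⟩ | ⟨k, x⟩) (⟨z', x'⟩ | ⟨k', x'⟩) h
      · simp only [hg_def, Sum.elim_inl] at h
        have hx := hpinj h
        rw [show z = z' from Subsingleton.elim z z', hx]
      · exfalso
        simp only [hg_def, Sum.elim_inl, Sum.elim_inr] at h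
        by_cases hx0 : x' = 0
        · rw [if_pos hx0] at h
          exact (hdisj' k' x).1 h.symm
        · rw [if_neg hx0] at h
          exact (hdisj' k' x).2 h.symm
      · exfalso
        simp only [hg_def, Sum.elim_inl, Sum.elim_inr] at h
        by_cases hx0 : x = 0
        · rw [if_pos hx0] at h
          exact (hdisj' k x').1 h
        · rw [if_neg hx0] at h
          exact (hdisj' k x').2 h
      · simp only [hg_def, Sum.elim_inr] at h
        by_cases hx0 : x = 0 <;> by_cases hx'0 : x' = 0
        · rw [if_pos hx0, if_pos hx'0] at h
          rw [hx0, hx'0, hjinj (hainj h)]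
        · exfalso
          rw [if_pos hx0, if_neg hx'0] at h
          exact hab _ _ h
        · exfalso
          rw [if_neg hx0, if_pos hx'0] at h
          exact hab _ _ h.symm
        · rw [if_neg hx0, if_neg hx'0] at h
          have hx1 : x = 1 := Fin.eq_one_of_ne_zero x hx0
          have hx'1 : x' = 1 := Fin.eq_one_of_ne_zero x' hx'0
          rw [hx1, hx'1, hjinj (hbinj h)]
    refine ⟨⟨g, hginj⟩, ?_⟩
    have himgE : ∀ e ∈ (kP4tP2 1 t).edgeSet, Sym2.map g e ∈ E := by
      intro e
      induction e using Sym2.ind with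
      | _ x y =>
        intro he
        rw [SimpleGraph.mem_edgeSet] at he
        rcases x with ⟨z, i⟩ | ⟨k, i⟩ <;> rcases y with ⟨z', i'⟩ | ⟨k', i'⟩
        · have hadj : (SimpleGraph.multiCopy 1 (SimpleGraph.pathGraph 4)).Adj
              (z, i) (z', i') := he
          obtain ⟨hz, hp4⟩ := hadj
          rw [SimpleGraph.pathGraph_adj] at hp4
          have hmap : Sym2.map g s(Sum.inl (z, i), Sum.inl (z', i'))
              = s(p i, p i') := by
            rw [Sym2.map_pair_eq]
            rfl
          rw [hmap]
          dsimp only at hp4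
          have hi4 := i.2
          have hi'4 := i'.2
          rcases hp4 with hcase | hcase
          · have hv : (i.val = 0 ∧ i'.val = 1) ∨ (i.val = 1 ∧ i'.val = 2) ∨
                (i.val = 2 ∧ i'.val = 3) := by omega
            rcases hv with ⟨ha1, ha2⟩ | ⟨ha1, ha2⟩ | ⟨ha1, ha2⟩
            · rw [show i = (⟨0, by omega⟩ : Fin 4) from Fin.ext (by rw [ha1]),
                show i' = (⟨1, by omega⟩ : Fin 4) from Fin.ext (by rw [ha2])]
              exact he01
            · rw [show i = (⟨1, by omega⟩ : Fin 4) from Fin.ext (by rw [ha1]),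
                show i' = (⟨2, by omega⟩ : Fin 4) from Fin.ext (by rw [ha2])]
              exact he12
            · rw [show i = (⟨2, by omega⟩ : Fin 4) from Fin.ext (by rw [ha1]),
                show i' = (⟨3, by omega⟩ : Fin 4) from Fin.ext (by rw [ha2])]
              exact he23
          · have hv : (i'.val = 0 ∧ i.val = 1) ∨ (i'.val = 1 ∧ i.val = 2) ∨
                (i'.val = 2 ∧ i.val = 3) := by omega
            rcases hv with ⟨ha1, ha2⟩ | ⟨ha1, ha2⟩ | ⟨ha1, ha2⟩
            · rw [show i = (⟨1, by omega⟩ : Fin 4) from Fin.ext (by rw [ha2]),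
                show i' = (⟨0, by omega⟩ : Fin 4) from Fin.ext (by rw [ha1])]
              exact hswapE _ _ he01
            · rw [show i = (⟨2, by omega⟩ : Fin 4) from Fin.ext (by rw [ha2]),
                show i' = (⟨1, by omega⟩ : Fin 4) from Fin.ext (by rw [ha1])]
              exact hswapE _ _ he12
            · rw [show i = (⟨3, by omega⟩ : Fin 4) from Fin.ext (by rw [ha2]),
                show i' = (⟨2, by omega⟩ : Fin 4) from Fin.ext (by rw [ha1])]
              exact hswapE _ _ he23
        · cases he
        · cases he
        · have hadj : (SimpleGraph.multiCopy t (SimpleGraph.pathGraph 2)).Adj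
              (k, i) (k', i') := he
          obtain ⟨hk, hp2'⟩ := hadj
          rw [SimpleGraph.pathGraph_adj] at hp2'
          cases hk
          have hmap : Sym2.map g s(Sum.inr (k, i), Sum.inr (k, i'))
              = s(if i = 0 then a (j k) else b (j k),
                  if i' = 0 then a (j k) else b (j k)) := by
            rw [Sym2.map_pair_eq]
            rfl
          rw [hmap]
          dsimp only at hp2'
          have hi2 := i.2
          have hi'2 := i'.2
          rcases hp2' with hcase | hcase
          · have h0 : i = 0 := by
              rw [Fin.ext_iff, Fin.val_zero]
              omega
            have h1 : ¬ (i' = 0) := by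
              rw [Fin.ext_iff, Fin.val_zero]
              omega
            rw [if_pos h0, if_neg h1]
            exact hME (j k)
          · have h0 : i' = 0 := by
              rw [Fin.ext_iff, Fin.val_zero]
              omega
            have h1 : ¬ (i = 0) := by
              rw [Fin.ext_iff, Fin.val_zero]
              omega
            rw [if_neg h1, if_pos h0]
            exact hswapE _ _ (hME (j k))
    intro e1 h1e e2 h2e hceq
    have m1 := himgE e1 h1e
    have m2 := himgE e2 h2e
    have heq2 : Sym2.map g e1 = Sym2.map g e2 := hcinj m1 m2 hceq
    exact Sym2.map.injective hginj heq2
  -- R and S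
  set R : Set (Fin n) := Set.range a ∪ Set.range b with hR_def
  set S : Set (Fin n) := Rᶜ with hS_def
  have haR : ∀ i, a i ∈ R := fun i => Or.inl ⟨i, rfl⟩
  have hbR : ∀ i, b i ∈ R := fun i => Or.inr ⟨i, rfl⟩
  have hRmem : ∀ x ∈ R, ∃ i, x = a i ∨ x = b i := by
    rintro x (⟨i, rfl⟩ | ⟨i, rfl⟩)
    · exact ⟨i, Or.inl rfl⟩
    · exact ⟨i, Or.inr rfl⟩
  have hSR : ∀ {x y : Fin n}, x ∈ R → y ∈ S → x ≠ y := by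
    intro x y hx hy h
    rw [hS_def] at hy
    exact hy (h ▸ hx)
  have hne_ba : ∀ i j, b i ≠ a j := fun i j h => hab j i h.symm
  have hne_aa : ∀ {i j}, i ≠ j → a i ≠ a j := fun h hh => h (hainj hh)
  have hne_bb : ∀ {i j}, i ≠ j → b i ≠ b j := fun h hh => h (hbinj hh)
  have hmemR' : ∀ (l : Fin (t+2)) (x : Fin n), (x = a l ∨ x = b l) → x ∈ R := by
    intro l x hx
    rcases hx with rfl | rfl
    · exact haR l
    · exact hbR l
  have hEne : ∀ {u v : Fin n}, s(u, v) ∈ E → u ≠ v := by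
    intro u v he
    have h' : s(u, v) ∈ (⊤ : SimpleGraph (Fin n)).edgeSet := hET he
    rw [SimpleGraph.mem_edgeSet, SimpleGraph.top_adj] at h'
    exact h'
  have hdesE : ∀ e ∈ E, ∃ u v : Fin n, u ≠ v ∧ e = s(u, v) := by
    intro e
    induction e using Sym2.ind with
    | _ u v =>
      intro he
      exact ⟨u, v, hEne he, rfl⟩
  have hzero_ne_one : (0 : Fin (t+2)) ≠ 1 := by
    intro h
    have := congrArg Fin.val h
    rw [Fin.val_zero, Fin.val_one] at this
    omega
  have hother : ∀ i : Fin (t+2), ∃ i', i' ≠ i := by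
    intro i
    by_cases h : i = 0
    · exact ⟨1, by rw [h]; exact hzero_ne_one.symm⟩
    · exact ⟨0, fun hh => h hh.symm⟩
  have hne_cross : ∀ (i l : Fin (t+2)) (x y : Fin n), i ≠ l →
      (x = a i ∨ x = b i) → (y = a l ∨ y = b l) → x ≠ y := by
    intro i l x y hil hx hy
    rcases hx with rfl | rfl <;> rcases hy with rfl | rfl
    · exact hne_aa hil
    · exact hab i l
    · exact hne_ba i l
    · exact hne_bb hil
  have hne_idx : ∀ (ii l : Fin (t+2)) (x : Fin n), ii ≠ l →
      (x = a l ∨ x = b l) → a ii ≠ x ∧ b ii ≠ x := by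
    intro ii l x hil hx
    rcases hx with rfl | rfl
    · exact ⟨hne_aa hil, hne_ba ii l⟩
    · exact ⟨hab ii l, hne_bb hil⟩
  have hpartner : ∀ (l : Fin (t+2)) (x : Fin n), (x = a l ∨ x = b l) →
      ∃ px, (px = a l ∨ px = b l) ∧ s(x, px) ∈ E := by
    intro l x hx
    rcases hx with rfl | rfl
    · exact ⟨b l, Or.inr rfl, hME l⟩
    · exact ⟨a l, Or.inl rfl, hswapE _ _ (hME l)⟩
  have claimRR : ∀ (i j' : Fin (t+2)) (u v : Fin n), i ≠ j' →
      (u = a i ∨ u = b i) → (v = a j' ∨ v = b j') → s(u, v) ∈ E → False := by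
    intro i j' u v hij hu hv he
    obtain ⟨pu, hpu_mem, hpue⟩ := hpartner i u hu
    obtain ⟨pv, hpv_mem, hpve⟩ := hpartner j' v hv
    apply master pu u v pv i j' hij
      (hEne hpue).symm
      (hne_cross i j' _ _ hij hpu_mem hv)
      (hne_cross i j' _ _ hij hpu_mem hpv_mem)
      (hEne he)
      (hne_cross i j' _ _ hij hu hpv_mem)
      (hEne hpve)
      (hswapE _ _ hpue) he hpve
    intro ii h1 h2
    obtain ⟨c1a, c1b⟩ := hne_idx ii i pu h1 hpu_mem
    obtain ⟨c2a, c2b⟩ := hne_idx ii i u h1 hu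
    obtain ⟨c3a, c3b⟩ := hne_idx ii j' v h2 hv
    obtain ⟨c4a, c4b⟩ := hne_idx ii j' pv h2 hpv_mem
    exact ⟨c1a, c2a, c3a, c4a, c1b, c2b, c3b, c4b⟩
  have claim1 : ∀ e ∈ E, (∀ x ∈ e, x ∈ R) → ∃ i, e = M i := by
    intro e he hRe
    obtain ⟨u, v, hne, rfl⟩ := hdesE e he
    obtain ⟨i, hi⟩ := hRmem u (hRe u (Sym2.mem_mk_left u v))
    obtain ⟨j', hj'⟩ := hRmem v (hRe v (Sym2.mem_mk_right u v))
    by_cases hij : i = j'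
    · subst hij
      rcases hi with rfl | rfl <;> rcases hj' with rfl | rfl
      · exact absurd rfl hne
      · exact ⟨i, rfl⟩
      · exact ⟨i, Sym2.eq_swap⟩
      · exact absurd rfl hne
    · exact (claimRR i j' u v hij hi hj' he).elim
  have claim2a : ∀ (v : Fin n), v ∈ S → ∀ (i j' : Fin (t+2)) (x y : Fin n), i ≠ j' →
      (x = a i ∨ x = b i) → (y = a j' ∨ y = b j') →
      s(v, x) ∈ E → s(v, y) ∈ E → False := by
    intro v hvS i j' x y hij hx hy hex hey
    obtain ⟨py, hpy_mem, hpye⟩ := hpartner j' y hy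
    apply master x v y py i j' hij
      (hSR (hmemR' i x hx) hvS)
      (hne_cross i j' _ _ hij hx hy)
      (hne_cross i j' _ _ hij hx hpy_mem)
      ((hSR (hmemR' j' y hy) hvS).symm)
      ((hSR (hmemR' j' py hpy_mem) hvS).symm)
      (hEne hpye)
      (hswapE _ _ hex) hey hpye
    intro ii h1 h2
    obtain ⟨c1a, c1b⟩ := hne_idx ii i x h1 hx
    obtain ⟨c3a, c3b⟩ := hne_idx ii j' y h2 hy
    obtain ⟨c4a, c4b⟩ := hne_idx ii j' py h2 hpy_mem
    exact ⟨c1a, hSR (haR ii) hvS, c3a, c4a, c1b, hSR (hbR ii) hvS, c3b, c4b⟩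
  have claim2b : ∀ (v u : Fin n), v ∈ S → u ∈ S → ∀ (i : Fin (t+2)) (x : Fin n),
      (x = a i ∨ x = b i) → s(v, u) ∈ E → s(v, x) ∈ E → False := by
    intro v u hvS huS i x hx hevu hevx
    obtain ⟨i2, hi2⟩ := hother i
    obtain ⟨px, hpx_mem, hpxe⟩ := hpartner i x hx
    apply master u v x px i i2 (fun h => hi2 h.symm)
      ((hEne hevu).symm)
      ((hSR (hmemR' i x hx) huS).symm)
      ((hSR (hmemR' i px hpx_mem) huS).symm)
      ((hSR (hmemR' i x hx) hvS).symm)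
      ((hSR (hmemR' i px hpx_mem) hvS).symm)
      (hEne hpxe)
      (hswapE _ _ hevu) hevx hpxe
    intro ii h1 h2
    obtain ⟨c3a, c3b⟩ := hne_idx ii i x h1 hx
    obtain ⟨c4a, c4b⟩ := hne_idx ii i px h1 hpx_mem
    exact ⟨hSR (haR ii) huS, hSR (haR ii) hvS, c3a, c4a,
      hSR (hbR ii) huS, hSR (hbR ii) hvS, c3b, c4b⟩
  have claim3 : ∀ v0 v1 v2 v3 : Fin n, v0 ∈ S → v1 ∈ S → v2 ∈ S → v3 ∈ S →
      v0 ≠ v2 → v0 ≠ v3 → v1 ≠ v3 →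
      s(v0, v1) ∈ E → s(v1, v2) ∈ E → s(v2, v3) ∈ E → False := by
    intro v0 v1 v2 v3 h0S h1S h2S h3S h02 h03 h13 he01 he12 he23
    apply master v0 v1 v2 v3 0 1 hzero_ne_one
      (hEne he01) h02 h03 (hEne he12) h13 (hEne he23) he01 he12 he23
    intro ii _ _
    exact ⟨hSR (haR ii) h0S, hSR (haR ii) h1S, hSR (haR ii) h2S, hSR (haR ii) h3S,
      hSR (hbR ii) h0S, hSR (hbR ii) h1S, hSR (hbR ii) h2S, hSR (hbR ii) h3S⟩
  -- counting
  set ERR : Set (Sym2 (Fin n)) := {e ∈ E | ∀ x ∈ e, x ∈ R} with hERR_def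
  set ESS : Set (Sym2 (Fin n)) := {e ∈ E | ∀ x ∈ e, x ∈ S} with hESS_def
  set EaS : Set (Sym2 (Fin n)) := {e ∈ E | ∃ i v, v ∈ S ∧ e = s(a i, v)} with hEaS_def
  set EbS : Set (Sym2 (Fin n)) := {e ∈ E | ∃ i v, v ∈ S ∧ e = s(b i, v)} with hEbS_def
  have hcover : E ⊆ ERR ∪ (EaS ∪ (EbS ∪ ESS)) := by
    intro e he
    obtain ⟨u, v, hne, rfl⟩ := hdesE e he
    by_cases hu : u ∈ R <;> by_cases hv : v ∈ R
    · refine Or.inl ⟨he, ?_⟩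
      intro x hx
      rcases Sym2.mem_iff.1 hx with rfl | rfl
      · exact hu
      · exact hv
    · have hvS : v ∈ S := hv
      obtain ⟨i, hi⟩ := hRmem u hu
      rcases hi with rfl | rfl
      · exact Or.inr (Or.inl ⟨he, i, v, hvS, rfl⟩)
      · exact Or.inr (Or.inr (Or.inl ⟨he, i, v, hvS, rfl⟩))
    · have huS : u ∈ S := hu
      obtain ⟨i, hi⟩ := hRmem v hv
      rcases hi with rfl | rfl
      · exact Or.inr (Or.inl ⟨he, i, u, huS, Sym2.eq_swap⟩)
      · exact Or.inr (Or.inr (Or.inl ⟨he, i, u, huS, Sym2.eq_swap⟩))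
    · refine Or.inr (Or.inr (Or.inr ⟨he, ?_⟩))
      intro x hx
      rcases Sym2.mem_iff.1 hx with rfl | rfl
      · exact hu
      · exact hv
  have hERRcard : ERR.ncard ≤ t + 2 := by
    have hsub : ERR ⊆ Set.range M := by
      rintro e ⟨he, hRe⟩
      obtain ⟨i, hi⟩ := claim1 e he hRe
      exact ⟨i, hi.symm⟩
    calc ERR.ncard ≤ (Set.range M).ncard := Set.ncard_le_ncard hsub (Set.toFinite _)
      _ = (M '' Set.univ).ncard := by rw [Set.image_univ]
      _ ≤ (Set.univ : Set (Fin (t+2))).ncard := Set.ncard_image_le (Set.toFinite _)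
      _ = t + 2 := by rw [Set.ncard_univ, Nat.card_eq_fintype_card, Fintype.card_fin]
  set SR : Set (Fin n) := {v | v ∈ S ∧ ∃ i, s(a i, v) ∈ E ∨ s(b i, v) ∈ E} with hSR_def
  set φ : Sym2 (Fin n) → Fin n :=
    fun e => Classical.epsilon (fun v => v ∈ S ∧ v ∈ e) with hφ_def
  have hφspec : ∀ (e : Sym2 (Fin n)) (x : Fin n), x ∈ S → x ∈ e → φ e ∈ S ∧ φ e ∈ e := by
    intro e x hxS hxe
    exact Classical.epsilon_spec (⟨x, hxS, hxe⟩ : ∃ y, y ∈ S ∧ y ∈ e)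
  have hφvala : ∀ (e : Sym2 (Fin n)) (i : Fin (t+2)) (v : Fin n),
      v ∈ S → e = s(a i, v) → φ e = v := by
    intro e i v hvS hee
    subst hee
    obtain ⟨hS1, hmem⟩ := hφspec _ v hvS (Sym2.mem_mk_right _ _)
    rw [Sym2.mem_iff] at hmem
    rcases hmem with h | h
    · exact absurd h.symm (hSR (haR i) hS1)
    · exact h
  have hφvalb : ∀ (e : Sym2 (Fin n)) (i : Fin (t+2)) (v : Fin n),
      v ∈ S → e = s(b i, v) → φ e = v := by
    intro e i v hvS hee
    subst hee
    obtain ⟨hS1, hmem⟩ := hφspec _ v hvS (Sym2.mem_mk_right _ _)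
    rw [Sym2.mem_iff] at hmem
    rcases hmem with h | h
    · exact absurd h.symm (hSR (hbR i) hS1)
    · exact h
  have hEaScard : EaS.ncard ≤ SR.ncard := by
    have hinj : Set.InjOn φ EaS := by
      rintro e1 ⟨he1E, i1, v1, hv1S, hee1⟩ e2 ⟨he2E, i2, v2, hv2S, hee2⟩ heq
      have h1 := hφvala e1 i1 v1 hv1S hee1
      have h2 := hφvala e2 i2 v2 hv2S hee2
      have hv12 : v1 = v2 := by rw [← h1, ← h2, heq]
      subst hv12
      by_cases hii : i1 = i2
      · rw [hee1, hee2, hii]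
      · exact (claim2a v1 hv1S i1 i2 (a i1) (a i2) hii (Or.inl rfl) (Or.inl rfl)
          (hswapE _ _ (hee1 ▸ he1E)) (hswapE _ _ (hee2 ▸ he2E))).elim
    have himg : φ '' EaS ⊆ SR := by
      rintro x ⟨e, ⟨heE, i, v, hvS, hee⟩, rfl⟩
      rw [hφvala e i v hvS hee]
      exact ⟨hvS, i, Or.inl (hee ▸ heE)⟩
    calc EaS.ncard = (φ '' EaS).ncard := (Set.ncard_image_of_injOn hinj).symm
      _ ≤ SR.ncard := Set.ncard_le_ncard himg (Set.toFinite _)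
  have hEbScard : EbS.ncard ≤ SR.ncard := by
    have hinj : Set.InjOn φ EbS := by
      rintro e1 ⟨he1E, i1, v1, hv1S, hee1⟩ e2 ⟨he2E, i2, v2, hv2S, hee2⟩ heq
      have h1 := hφvalb e1 i1 v1 hv1S hee1
      have h2 := hφvalb e2 i2 v2 hv2S hee2
      have hv12 : v1 = v2 := by rw [← h1, ← h2, heq]
      subst hv12
      by_cases hii : i1 = i2
      · rw [hee1, hee2, hii]
      · exact (claim2a v1 hv1S i1 i2 (b i1) (b i2) hii (Or.inr rfl) (Or.inr rfl)
          (hswapE _ _ (hee1 ▸ he1E)) (hswapE _ _ (hee2 ▸ he2E))).elim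
    have himg : φ '' EbS ⊆ SR := by
      rintro x ⟨e, ⟨heE, i, v, hvS, hee⟩, rfl⟩
      rw [hφvalb e i v hvS hee]
      exact ⟨hvS, i, Or.inr (hee ▸ heE)⟩
    calc EbS.ncard = (φ '' EbS).ncard := (Set.ncard_image_of_injOn hinj).symm
      _ ≤ SR.ncard := Set.ncard_le_ncard himg (Set.toFinite _)
  have hESSsub : {v : Fin n | ∃ w, s(v, w) ∈ ESS} ⊆ S \ SR := by
    rintro v ⟨w, hwE, hwS⟩
    have hvS : v ∈ S := hwS v (Sym2.mem_mk_left _ _)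
    have hwS' : w ∈ S := hwS w (Sym2.mem_mk_right _ _)
    refine ⟨hvS, ?_⟩
    rintro ⟨-, i, hcase⟩
    rcases hcase with hcase | hcase
    · exact claim2b v w hvS hwS' i (a i) (Or.inl rfl) hwE (hswapE _ _ hcase)
    · exact claim2b v w hvS hwS' i (b i) (Or.inr rfl) hwE (hswapE _ _ hcase)
  have hESScard : ESS.ncard ≤ (S \ SR).ncard := by
    have hbnd := p4free_bound (show 0 < n by omega) ESS
      (fun e he => (⊤ : SimpleGraph (Fin n)).not_isDiag_of_mem_edgeSet (hET he.1))
      (by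
        intro w x y z hwy hwz hxz h1' h2' h3'
        have hwS : w ∈ S := h1'.2 w (Sym2.mem_mk_left _ _)
        have hxS : x ∈ S := h1'.2 x (Sym2.mem_mk_right _ _)
        have hyS : y ∈ S := h2'.2 y (Sym2.mem_mk_right _ _)
        have hzS : z ∈ S := h3'.2 z (Sym2.mem_mk_right _ _)
        exact claim3 w x y z hwS hxS hyS hzS hwy hwz hxz h1'.1 h2'.1 h3'.1)
    calc ESS.ncard ≤ {v : Fin n | ∃ w, s(v, w) ∈ ESS}.ncard := hbnd
      _ ≤ (S \ SR).ncard := Set.ncard_le_ncard hESSsub (Set.toFinite _)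
  have hRcard : R.ncard = 2*t + 4 := by
    rw [hR_def, Set.ncard_union_eq ?dis (Set.toFinite _) (Set.toFinite _)]
    · rw [← Set.image_univ, ← Set.image_univ (f := b),
        Set.ncard_image_of_injective _ hainj, Set.ncard_image_of_injective _ hbinj,
        Set.ncard_univ, Nat.card_eq_fintype_card, Fintype.card_fin]
      omega
    case dis =>
      rw [Set.disjoint_left]
      rintro x ⟨i, rfl⟩ ⟨j, hj⟩
      exact hne_ba j i hj
  have hScard : S.ncard = n - (2*t + 4) := by
    have h := Set.ncard_add_ncard_compl R (Set.toFinite _) (Set.toFinite _)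
    rw [hRcard] at h
    have hcardn : Nat.card (Fin n) = n := by
      rw [Nat.card_eq_fintype_card, Fintype.card_fin]
    rw [hS_def]
    omega
  have hSRsub : SR ⊆ S := fun v hv => hv.1
  have hSRcard : SR.ncard ≤ S.ncard := Set.ncard_le_ncard hSRsub (Set.toFinite _)
  have hdiff : (S \ SR).ncard = S.ncard - SR.ncard :=
    Set.ncard_diff hSRsub (Set.toFinite _)
  have hEbound : E.ncard ≤ ERR.ncard + (EaS.ncard + (EbS.ncard + ESS.ncard)) := by
    have u1 := Set.ncard_le_ncard hcover (Set.toFinite _)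
    have u2 := Set.ncard_union_le ERR (EaS ∪ (EbS ∪ ESS))
    have u3 := Set.ncard_union_le EaS (EbS ∪ ESS)
    have u4 := Set.ncard_union_le EbS ESS
    omega
  have hcc : colorCount n c = E.ncard := by
    rw [hEcard]
    rfl
  rw [hcc]
  omega
end
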